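/- arXiv:1709.10227 — 9 statements merged into one kernel-verified Lean document; each statement's English description precedes it below -/
import Mathlib

section
/- (Frank–Wolfe-type existence theorem) Assume D ∩ dom f is nonempty. Then there exists x̄ ∈ D with f(x̄) finite and f(x̄) ≤ f(x) for all x ∈ D if and only if there exists a real number γ such that f(x) ≥ γ for every x ∈ D. -/
/-- A set is (generalized) polyhedral: cut out by finitely many linear inequalities. -/
def IsPolyFW {V : Type*} [AddCommGroup V] [Module ℝ V] (S : Set V) : Prop :=
  ∃ (ι : Type) (_ : Finite ι) (f : ι → V →ₗ[ℝ] ℝ) (c : ι → ℝ),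
    S = {x | ∀ i, f i x ≤ c i}

theorem IsPolyFW.preimage {V W : Type*} [AddCommGroup V] [Module ℝ V]
    [AddCommGroup W] [Module ℝ W] (L : V →ₗ[ℝ] W) {S : Set W}
    (hS : IsPolyFW S) : IsPolyFW (L ⁻¹' S) := by
  obtain ⟨ι, hι, f, c, rfl⟩ := hS
  exact ⟨ι, hι, fun i => (f i).comp L, c, rfl⟩

theorem IsPolyFW.inter {V : Type*} [AddCommGroup V] [Module ℝ V] {S T : Set V}
    (hS : IsPolyFW S) (hT : IsPolyFW T) : IsPolyFW (S ∩ T) := by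
  obtain ⟨ι, hι, f, c, rfl⟩ := hS
  obtain ⟨κ, hκ, g, d, rfl⟩ := hT
  refine ⟨ι ⊕ κ, inferInstance, Sum.elim f g, Sum.elim c d, ?_⟩
  ext x
  simp [Sum.forall, Set.mem_inter_iff]

/-- Any submodule of a finite-dimensional coordinate space is polyhedral. -/
theorem Submodule.isPolyFW {ι : Type} [Finite ι] (U : Submodule ℝ (ι → ℝ)) :
    IsPolyFW (U : Set (ι → ℝ)) := by
  have := Fintype.ofFinite ι
  set k := Module.finrank ℝ ((ι → ℝ) ⧸ U)
  let b : Module.Basis (Fin k) ℝ ((ι → ℝ) ⧸ U) := Module.finBasis ℝ _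
  refine ⟨Fin k ⊕ Fin k, inferInstance,
    Sum.elim (fun i => (b.coord i).comp U.mkQ) (fun i => -((b.coord i).comp U.mkQ)),
    0, ?_⟩
  ext x
  simp only [Set.mem_setOf_eq, Sum.forall, Sum.elim_inl, Sum.elim_inr, Pi.zero_apply,
    LinearMap.neg_apply, LinearMap.comp_apply, neg_nonpos, SetLike.mem_coe]
  constructor
  · intro hx
    have : U.mkQ x = 0 := (Submodule.Quotient.mk_eq_zero U).2 hx
    simp [this]
  · rintro ⟨h1, h2⟩
    have hc : ∀ i, b.coord i (U.mkQ x) = 0 := fun i => le_antisymm (h1 i) (h2 i)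
    have : U.mkQ x = 0 := b.forall_coord_eq_zero_iff.1 hc
    exact (Submodule.Quotient.mk_eq_zero U).1 this


/-- Fourier–Motzkin elimination of one real variable. -/
theorem IsPolyFW.projR {V : Type*} [AddCommGroup V] [Module ℝ V]
    {S : Set (V × ℝ)} (hS : IsPolyFW S) : IsPolyFW {v : V | ∃ t : ℝ, (v, t) ∈ S} := by
  classical
  obtain ⟨ι, hι, f, c, rfl⟩ := hS
  have := Fintype.ofFinite ι
  set a : ι → ℝ := fun i => f i (0, 1) with ha
  set g : ι → V →ₗ[ℝ] ℝ := fun i => (f i).comp (LinearMap.inl ℝ V ℝ) with hg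
  have hf : ∀ i v t, f i (v, t) = g i v + t * a i := by
    intro i v t
    have h1 : (v, t) = (v, (0:ℝ)) + t • ((0:V), (1:ℝ)) := by
      simp [Prod.ext_iff]
    rw [h1, map_add, map_smul, smul_eq_mul]
    rfl
  refine ⟨{i // a i = 0} ⊕ ({i // 0 < a i} × {j // a j < 0}), inferInstance,
    Sum.elim (fun i => g i.1)
      (fun ij => a ij.1.1 • g ij.2.1 - a ij.2.1 • g ij.1.1),
    Sum.elim (fun i => c i.1)
      (fun ij => a ij.1.1 * c ij.2.1 - a ij.2.1 * c ij.1.1), ?_⟩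
  ext v
  simp only [Set.mem_setOf_eq, Sum.forall, Sum.elim_inl, Sum.elim_inr]
  constructor
  · rintro ⟨t, ht⟩
    constructor
    · rintro ⟨i, hi⟩
      have := ht i
      rw [hf i v t, hi] at this
      simpa using this
    · rintro ⟨⟨i, hi⟩, ⟨j, hj⟩⟩
      have h1 := ht i
      have h2 := ht j
      rw [hf i v t] at h1
      rw [hf j v t] at h2
      simp only [LinearMap.sub_apply, LinearMap.smul_apply, smul_eq_mul]
      nlinarith [mul_le_mul_of_nonneg_left h2 hi.le,
        mul_le_mul_of_nonneg_left h1 (neg_nonneg.2 hj.le)]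
  · rintro ⟨hZ, hP⟩
    -- bounds
    set Neg : Finset ι := Finset.univ.filter (fun j => a j < 0) with hNegdef
    set Pos : Finset ι := Finset.univ.filter (fun i => 0 < a i) with hPosdef
    set lo : ι → ℝ := fun j => (c j - g j v) / a j with hlo
    -- key pairwise inequality
    have key : ∀ i ∈ Pos, ∀ j ∈ Neg, lo j ≤ lo i := by
      intro i hi j hj
      rw [hPosdef, Finset.mem_filter] at hi
      rw [hNegdef, Finset.mem_filter] at hj
      have hP' := hP ⟨⟨i, hi.2⟩, ⟨j, hj.2⟩⟩
      simp only [LinearMap.sub_apply, LinearMap.smul_apply, smul_eq_mul] at hP'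
      show (c j - g j v) / a j ≤ (c i - g i v) / a i
      rw [show (c j - g j v) / a j = (-(c j - g j v)) / (-(a j)) by
        rw [neg_div_neg_eq]]
      rw [div_le_div_iff₀ (by linarith [hj.2]) hi.2]
      nlinarith [hi.2, hj.2]
    -- choose t
    have main : ∃ t : ℝ, ∀ i, g i v + t * a i ≤ c i := by
      by_cases hN : Neg.Nonempty
      · refine ⟨Neg.sup' hN lo, fun i => ?_⟩
        rcases lt_trichotomy (a i) 0 with h | h | h
        · have hmem : i ∈ Neg := by rw [hNegdef]; simp [h]
          have := Finset.le_sup' lo hmem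
          simp only [hlo] at this
          have := (div_le_iff_of_neg h).1 this
          linarith
        · have := hZ ⟨i, h⟩
          simp only at this
          rw [h]; simpa using this
        · have hup : Neg.sup' hN lo ≤ lo i := by
            apply Finset.sup'_le
            intro j hj
            exact key i (by rw [hPosdef]; simp [h]) j hj
          simp only [hlo, le_div_iff₀ h] at hup
          linarith
      · by_cases hPn : Pos.Nonempty
        · refine ⟨Pos.inf' hPn lo, fun i => ?_⟩
          rcases lt_trichotomy (a i) 0 with h | h | h
          · exact absurd (by rw [hNegdef]; simp [h] : i ∈ Neg)
              (by simpa [Finset.not_nonempty_iff_eq_empty.1 hN])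
          · have := hZ ⟨i, h⟩
            simp only at this
            rw [h]; simpa using this
          · have hle : Pos.inf' hPn lo ≤ lo i :=
              Finset.inf'_le lo (by rw [hPosdef]; simp [h])
            simp only [hlo, le_div_iff₀ h] at hle
            linarith
        · refine ⟨0, fun i => ?_⟩
          rcases lt_trichotomy (a i) 0 with h | h | h
          · exact absurd (by rw [hNegdef]; simp [h] : i ∈ Neg)
              (by simpa [Finset.not_nonempty_iff_eq_empty.1 hN])
          · have := hZ ⟨i, h⟩
            simp only at this
            rw [h]; simpa using this
          · exact absurd (by rw [hPosdef]; simp [h] : i ∈ Pos)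
              (by simpa [Finset.not_nonempty_iff_eq_empty.1 hPn])
    obtain ⟨t, ht⟩ := main
    exact ⟨t, fun i => by rw [hf i v t]; exact ht i⟩


/-- The linear "cons" map. -/
def consMapFW (V : Type*) [AddCommGroup V] [Module ℝ V] (n : ℕ) :
    ((V × (Fin n → ℝ)) × ℝ) →ₗ[ℝ] V × (Fin (n + 1) → ℝ) where
  toFun x := (x.1.1, Fin.cons x.2 x.1.2)
  map_add' x y := by
    refine Prod.ext rfl ?_
    funext i
    induction i using Fin.cases <;> simp
  map_smul' r x := by
    refine Prod.ext rfl ?_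
    funext i
    induction i using Fin.cases <;> simp

theorem IsPolyFW.projFin : ∀ (n : ℕ) {V : Type*} [AddCommGroup V] [Module ℝ V]
    (S : Set (V × (Fin n → ℝ))), IsPolyFW S →
    IsPolyFW {v : V | ∃ w : Fin n → ℝ, (v, w) ∈ S} := by
  intro n
  induction n with
  | zero =>
    intro V _ _ S hS
    have h0 : {v : V | ∃ w : Fin 0 → ℝ, (v, w) ∈ S}
        = (LinearMap.prod LinearMap.id 0 : V →ₗ[ℝ] V × (Fin 0 → ℝ)) ⁻¹' S := by
      ext v
      simp only [Set.mem_setOf_eq, Set.mem_preimage, LinearMap.prod_apply,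
        LinearMap.id_coe, id_eq, Pi.zero_apply]
      constructor
      · rintro ⟨w, hw⟩
        convert hw using 2
        rfl
      · intro h
        exact ⟨0, h⟩
    rw [h0]
    exact hS.preimage _
  | succ n ih =>
    intro V _ _ S hS
    have h1 : IsPolyFW ((consMapFW V n) ⁻¹' S) := hS.preimage _
    have h2 : IsPolyFW {p : V × (Fin n → ℝ) | ∃ t : ℝ, (p, t) ∈ (consMapFW V n) ⁻¹' S} :=
      h1.projR
    have h3 := ih _ h2
    have h4 : {v : V | ∃ w' : Fin n → ℝ, (v, w') ∈
        {p : V × (Fin n → ℝ) | ∃ t : ℝ, (p, t) ∈ (consMapFW V n) ⁻¹' S}}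
        = {v : V | ∃ w : Fin (n + 1) → ℝ, (v, w) ∈ S} := by
      ext v
      simp only [Set.mem_setOf_eq, Set.mem_preimage]
      constructor
      · rintro ⟨w', t, h⟩
        exact ⟨Fin.cons t w', h⟩
      · rintro ⟨w, hw⟩
        refine ⟨Fin.tail w, w 0, ?_⟩
        show (v, Fin.cons (w 0) (Fin.tail w)) ∈ S
        rw [Fin.cons_self_tail]
        exact hw
    rw [h4] at h3
    exact h3

theorem IsPolyFW.proj {ι : Type} [Finite ι] {V : Type*} [AddCommGroup V] [Module ℝ V]
    {S : Set (V × (ι → ℝ))} (hS : IsPolyFW S) :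
    IsPolyFW {v : V | ∃ w : ι → ℝ, (v, w) ∈ S} := by
  obtain ⟨n, ⟨e⟩⟩ := Finite.exists_equiv_fin ι
  set L : V × (Fin n → ℝ) →ₗ[ℝ] V × (ι → ℝ) :=
    LinearMap.prod (LinearMap.fst ℝ V (Fin n → ℝ))
      ((LinearMap.funLeft ℝ ℝ e).comp (LinearMap.snd ℝ V (Fin n → ℝ))) with hL
  have h1 : IsPolyFW (L ⁻¹' S) := hS.preimage _
  have h2 := IsPolyFW.projFin n _ h1
  have h3 : {v : V | ∃ w' : Fin n → ℝ, (v, w') ∈ L ⁻¹' S}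
      = {v : V | ∃ w : ι → ℝ, (v, w) ∈ S} := by
    ext v
    simp only [Set.mem_setOf_eq, Set.mem_preimage, hL, LinearMap.prod_apply,
      LinearMap.coe_comp, Function.comp_apply, LinearMap.fst_apply, LinearMap.snd_apply,
      LinearMap.funLeft_apply, Function.prod]
    constructor
    · rintro ⟨w', h⟩
      exact ⟨_, h⟩
    · rintro ⟨w, hw⟩
      refine ⟨w ∘ e.symm, ?_⟩
      convert hw using 2
      funext i
      simp
  rw [h3] at h2
  exact h2

/-- A polyhedral subset of ℝ is closed. -/
theorem IsPolyFW.isClosed_real {T : Set ℝ} (h : IsPolyFW T) : IsClosed T := by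
  obtain ⟨ι, _, f, c, rfl⟩ := h
  have h1 : {x : ℝ | ∀ i, f i x ≤ c i} = ⋂ i, {x : ℝ | x * f i 1 ≤ c i} := by
    ext x
    simp only [Set.mem_setOf_eq, Set.mem_iInter]
    refine forall_congr' fun i => ?_
    rw [show f i x = x * f i 1 by rw [← smul_eq_mul, ← map_smul, smul_eq_mul, mul_one]]
  rw [h1]
  exact isClosed_iInter fun i =>
    isClosed_le (continuous_id.mul continuous_const) continuous_const


/-- Attainment of the minimum of a piecewise-affine convex function over a
generalized polyhedral set, when bounded below. -/
theorem polyMinFW {V : Type*} [AddCommGroup V] [Module ℝ V]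
    {κ : Type} [Finite κ] (f : κ → V →ₗ[ℝ] ℝ) (c : κ → ℝ)
    {M : ℕ} (h : Fin (M + 1) → V →ₗ[ℝ] ℝ) (d : Fin (M + 1) → ℝ)
    (hne : {u : V | ∀ i, f i u ≤ c i}.Nonempty)
    (γ : ℝ)
    (hbd : ∀ u ∈ {u : V | ∀ i, f i u ≤ c i},
      γ ≤ Finset.univ.sup' Finset.univ_nonempty (fun k => h k u + d k)) :
    ∃ u ∈ {u : V | ∀ i, f i u ≤ c i}, ∀ u' ∈ {u : V | ∀ i, f i u ≤ c i},
      Finset.univ.sup' Finset.univ_nonempty (fun k => h k u + d k) ≤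
        Finset.univ.sup' Finset.univ_nonempty (fun k => h k u' + d k) := by
  classical
  set F : Set V := {u : V | ∀ i, f i u ≤ c i} with hF
  set obj : V → ℝ := fun u => Finset.univ.sup' Finset.univ_nonempty (fun k => h k u + d k)
    with hobj
  set Φ : V →ₗ[ℝ] (κ ⊕ Fin (M + 1) → ℝ) :=
    LinearMap.pi (Sum.elim (fun i => f i) (fun k => h k)) with hΦ
  have hΦl : ∀ u i, Φ u (Sum.inl i) = f i u := fun u i => rfl
  have hΦr : ∀ u k, Φ u (Sum.inr k) = h k u := fun u k => rfl
  set Q : Set (ℝ × (κ ⊕ Fin (M + 1) → ℝ)) :=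
    {pw | pw.2 ∈ LinearMap.range Φ ∧ (∀ i, pw.2 (Sum.inl i) ≤ c i) ∧
      ∀ k, pw.2 (Sum.inr k) - pw.1 ≤ -(d k)} with hQ
  have hQpoly : IsPolyFW Q := by
    have e1 : IsPolyFW {pw : ℝ × (κ ⊕ Fin (M + 1) → ℝ) | pw.2 ∈ LinearMap.range Φ} :=
      IsPolyFW.preimage (LinearMap.snd ℝ ℝ (κ ⊕ Fin (M + 1) → ℝ))
        (Submodule.isPolyFW (LinearMap.range Φ))
    have e2 : IsPolyFW {pw : ℝ × (κ ⊕ Fin (M + 1) → ℝ) | ∀ i, pw.2 (Sum.inl i) ≤ c i} :=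
      ⟨κ, inferInstance, fun i => (LinearMap.proj (Sum.inl i)).comp
        (LinearMap.snd ℝ ℝ (κ ⊕ Fin (M + 1) → ℝ)), c, rfl⟩
    have e3 : IsPolyFW {pw : ℝ × (κ ⊕ Fin (M + 1) → ℝ) | ∀ k, pw.2 (Sum.inr k) - pw.1 ≤ -(d k)} :=
      ⟨Fin (M + 1), inferInstance, fun k =>
        (LinearMap.proj (Sum.inr k)).comp (LinearMap.snd ℝ ℝ (κ ⊕ Fin (M + 1) → ℝ))
          - LinearMap.fst ℝ ℝ (κ ⊕ Fin (M + 1) → ℝ),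
        fun k => -(d k), rfl⟩
    have : Q = _ ∩ (_ ∩ _) := rfl
    exact this ▸ e1.inter (e2.inter e3)
  set T : Set ℝ := {t | ∃ w, (t, w) ∈ Q} with hT
  have hTpoly : IsPolyFW T := hQpoly.proj
  have hTmem : ∀ t : ℝ, t ∈ T ↔ ∃ u ∈ F, obj u ≤ t := by
    intro t
    constructor
    · rintro ⟨w, ⟨u, rfl⟩, hcon, hpc⟩
      dsimp only at hcon hpc
      refine ⟨u, fun i => by rw [← hΦl u i]; exact hcon i, ?_⟩
      apply Finset.sup'_le
      intro k _
      have := hpc k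
      rw [hΦr u k] at this
      linarith
    · rintro ⟨u, huF, hle⟩
      refine ⟨Φ u, ⟨u, rfl⟩, fun i => ?_, fun k => ?_⟩
      · show Φ u (Sum.inl i) ≤ c i
        rw [hΦl]; exact huF i
      · show Φ u (Sum.inr k) - t ≤ -(d k)
        rw [hΦr]
        have : h k u + d k ≤ obj u :=
          Finset.le_sup' (fun k => h k u + d k) (Finset.mem_univ k)
        linarith
  -- T is nonempty, bounded below, closed
  obtain ⟨u₀, hu₀⟩ := hne
  have hTne : T.Nonempty := ⟨obj u₀, (hTmem _).2 ⟨u₀, hu₀, le_refl _⟩⟩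
  have hTbdd : BddBelow T := by
    refine ⟨γ, fun t ht => ?_⟩
    obtain ⟨u, huF, hle⟩ := (hTmem t).1 ht
    exact le_trans (hbd u huF) hle
  have hmu : sInf T ∈ T := hTpoly.isClosed_real.csInf_mem hTne hTbdd
  obtain ⟨u, huF, hule⟩ := (hTmem _).1 hmu
  refine ⟨u, huF, fun u' hu' => ?_⟩
  have h1 : obj u' ∈ T := (hTmem _).2 ⟨u', hu', le_refl _⟩
  exact le_trans hule (csInf_le hTbdd h1)


/-- **Frank–Wolfe-type existence theorem.**
`X, Y, Z` are real locally convex Hausdorff topological vector spaces.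
`D = {x | A x = y ∧ ⟨xsᵢ, x⟩ ≤ αᵢ}` is the generalized polyhedral convex constraint set,
`dom f = {x | B x = z ∧ ⟨usⱼ, x⟩ ≤ γsⱼ}` is nonempty, and
`f x = max {⟨vₖ, x⟩ + βₖ}` on `dom f`, `f = +∞` off `dom f`.
If `D ∩ dom f ≠ ∅`, then `(P) : min {f x | x ∈ D}` has a solution iff `f` is bounded
below by some real `γ` on `D`. -/
theorem frank_wolfe_type_existence
    {X Y Z : Type*}
    [AddCommGroup X] [Module ℝ X] [TopologicalSpace X] [IsTopologicalAddGroup X]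
    [ContinuousSMul ℝ X] [LocallyConvexSpace ℝ X] [T2Space X]
    [AddCommGroup Y] [Module ℝ Y] [TopologicalSpace Y] [IsTopologicalAddGroup Y]
    [ContinuousSMul ℝ Y] [LocallyConvexSpace ℝ Y] [T2Space Y]
    [AddCommGroup Z] [Module ℝ Z] [TopologicalSpace Z] [IsTopologicalAddGroup Z]
    [ContinuousSMul ℝ Z] [LocallyConvexSpace ℝ Z] [T2Space Z]
    (A : X →L[ℝ] Y) (y : Y) (p : ℕ) (xs : Fin p → X →L[ℝ] ℝ) (α : Fin p → ℝ)
    (B : X →L[ℝ] Z) (z : Z) (q : ℕ) (us : Fin q → X →L[ℝ] ℝ) (γs : Fin q → ℝ)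
    (m : ℕ) (v : Fin (m + 1) → X →L[ℝ] ℝ) (β : Fin (m + 1) → ℝ)
    (D : Set X) (hD : D = {x | A x = y ∧ ∀ i, xs i x ≤ α i})
    (domf : Set X) (hdomf : domf = {x | B x = z ∧ ∀ j, us j x ≤ γs j})
    (hdomne : domf.Nonempty)
    (f : X → EReal)
    (hf : ∀ x ∈ domf,
      f x = ((Finset.univ.sup' Finset.univ_nonempty fun k => v k x + β k : ℝ) : EReal))
    (hf' : ∀ x ∉ domf, f x = ⊤)
    (hne : (D ∩ domf).Nonempty) :
    (∃ u ∈ D, f u ≠ ⊤ ∧ f u ≠ ⊥ ∧ ∀ x ∈ D, f u ≤ f x) ↔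
      ∃ γ : ℝ, ∀ x ∈ D, (γ : EReal) ≤ f x := by
  constructor
  · rintro ⟨u, huD, hnt, hnb, hmin⟩
    refine ⟨(f u).toReal, fun x hx => ?_⟩
    rw [EReal.coe_toReal hnt hnb]
    exact hmin x hx
  · rintro ⟨γ, hγ⟩
    classical
    set g : X → ℝ := fun x => Finset.univ.sup' Finset.univ_nonempty fun k => v k x + β k
      with hg
    obtain ⟨x₀, hx₀⟩ := hne
    have hx₀D : A x₀ = y ∧ ∀ i, xs i x₀ ≤ α i := by rw [hD] at hx₀; exact hx₀.1
    have hx₀f : B x₀ = z ∧ ∀ j, us j x₀ ≤ γs j := by rw [hdomf] at hx₀; exact hx₀.2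
    set W : Submodule ℝ X := LinearMap.ker (A : X →ₗ[ℝ] Y) ⊓ LinearMap.ker (B : X →ₗ[ℝ] Z)
      with hW
    set fcon : Fin p ⊕ Fin q → ↥W →ₗ[ℝ] ℝ :=
      Sum.elim (fun i => ((xs i : X →ₗ[ℝ] ℝ)).comp W.subtype)
        (fun j => ((us j : X →ₗ[ℝ] ℝ)).comp W.subtype) with hfcon
    set ccon : Fin p ⊕ Fin q → ℝ :=
      Sum.elim (fun i => α i - xs i x₀) (fun j => γs j - us j x₀) with hccon
    set hfun : Fin (m + 1) → ↥W →ₗ[ℝ] ℝ :=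
      fun k => ((v k : X →ₗ[ℝ] ℝ)).comp W.subtype with hhfun
    set dd : Fin (m + 1) → ℝ := fun k => β k + v k x₀ with hdd
    -- membership bridge
    have hmemW : ∀ u : ↥W, A (x₀ + ↑u) = y ∧ B (x₀ + ↑u) = z := by
      intro u
      have h1 : (u : X) ∈ LinearMap.ker (A : X →ₗ[ℝ] Y) ⊓ LinearMap.ker (B : X →ₗ[ℝ] Z) :=
        u.2
      rw [Submodule.mem_inf] at h1
      constructor
      · rw [map_add, hx₀D.1, show A (u : X) = 0 from LinearMap.mem_ker.mp h1.1, add_zero]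
      · rw [map_add, hx₀f.1, show B (u : X) = 0 from LinearMap.mem_ker.mp h1.2, add_zero]
    have hmem : ∀ u : ↥W, (∀ i, fcon i u ≤ ccon i) ↔ x₀ + ↑u ∈ D ∩ domf := by
      intro u
      rw [hD, hdomf]
      simp only [hfcon, hccon, Sum.forall, Sum.elim_inl, Sum.elim_inr,
        LinearMap.comp_apply, Submodule.coe_subtype, Set.mem_inter_iff, Set.mem_setOf_eq]
      constructor
      · rintro ⟨h1, h2⟩
        refine ⟨⟨(hmemW u).1, fun i => ?_⟩, (hmemW u).2, fun j => ?_⟩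
        · have := h1 i
          rw [map_add]
          simp only [ContinuousLinearMap.coe_coe] at this ⊢
          linarith
        · have := h2 j
          rw [map_add]
          simp only [ContinuousLinearMap.coe_coe] at this ⊢
          linarith
      · rintro ⟨⟨-, h1⟩, -, h2⟩
        refine ⟨fun i => ?_, fun j => ?_⟩
        · have := h1 i
          rw [map_add] at this
          simp only [ContinuousLinearMap.coe_coe] at this ⊢
          linarith
        · have := h2 j
          rw [map_add] at this
          simp only [ContinuousLinearMap.coe_coe] at this ⊢
          linarith
    have hobj : ∀ u : ↥W,
        (Finset.univ.sup' Finset.univ_nonempty fun k => hfun k u + dd k) = g (x₀ + ↑u) := by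
      intro u
      rw [hg]
      refine Finset.sup'_congr _ rfl fun k _ => ?_
      simp only [hhfun, hdd, LinearMap.comp_apply, Submodule.coe_subtype,
        ContinuousLinearMap.coe_coe, map_add]
      ring
    -- bounded below on feasible set
    have hbd : ∀ u ∈ {u : ↥W | ∀ i, fcon i u ≤ ccon i},
        γ ≤ Finset.univ.sup' Finset.univ_nonempty fun k => hfun k u + dd k := by
      intro u hu
      rw [hobj u]
      have hx : x₀ + ↑u ∈ D ∩ domf := (hmem u).1 hu
      have := hγ _ hx.1
      rw [hf _ hx.2] at this
      exact_mod_cast this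
    -- nonempty feasible set
    have hFne : {u : ↥W | ∀ i, fcon i u ≤ ccon i}.Nonempty := by
      refine ⟨0, ?_⟩
      have : x₀ + ((0 : ↥W) : X) ∈ D ∩ domf := by
        simpa using hx₀
      exact (hmem 0).2 this
    obtain ⟨u, huF, humin⟩ := polyMinFW fcon ccon hfun dd hFne γ hbd
    set xb : X := x₀ + ↑u with hxb
    have hxbmem : xb ∈ D ∩ domf := (hmem u).1 huF
    have hfxb : f xb = ((g xb : ℝ) : EReal) := hf _ hxbmem.2
    refine ⟨xb, hxbmem.1, by rw [hfxb]; exact EReal.coe_ne_top _,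
      by rw [hfxb]; exact EReal.coe_ne_bot _, fun x hx => ?_⟩
    by_cases hxf : x ∈ domf
    · have hxC : x ∈ D ∩ domf := ⟨hx, hxf⟩
      -- write x = x₀ + u'
      have hu' : x - x₀ ∈ W := by
        rw [hW, Submodule.mem_inf, LinearMap.mem_ker, LinearMap.mem_ker]
        have h1 : A x = y := by rw [hD] at hx; exact hx.1
        have h2 : B x = z := by rw [hdomf] at hxf; exact hxf.1
        constructor
        · show A (x - x₀) = 0
          rw [map_sub, h1, hx₀D.1, sub_self]
        · show B (x - x₀) = 0
          rw [map_sub, h2, hx₀f.1, sub_self]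
      set u' : ↥W := ⟨x - x₀, hu'⟩ with hu'def
      have hxu' : x₀ + ↑u' = x := by simp [hu'def]
      have hu'F : u' ∈ {u : ↥W | ∀ i, fcon i u ≤ ccon i} :=
        (hmem u').2 (by rw [hxu']; exact hxC)
      have := humin u' hu'F
      rw [hobj u, hobj u', hxu'] at this
      rw [hfxb, hf _ hxf]
      exact_mod_cast this
    · rw [hf' _ hxf]
      exact le_top
end

section
/- Let f be a proper generalized polyhedral convex function with f(x) = max{⟨v_k*, x⟩ + β_k : k = 1,…,m} on dom f and f = +∞ off dom f. Then the recession function of f satisfies: f0⁺(v) = max{⟨v_k*, v⟩ : k = 1,…,m} if v ∈ 0⁺(dom f), and f0⁺(v) = +∞ if v ∉ 0⁺(dom f). In particular, f0⁺ is a proper generalized polyhedral convex function. -/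
/-- The recession cone `0⁺C = {v | ∀ x ∈ C, ∀ t ≥ 0, x + t v ∈ C}`. -/
def recCone {X : Type*} [AddCommGroup X] [Module ℝ X] (C : Set X) : Set X :=
  {v | ∀ x ∈ C, ∀ t : ℝ, 0 ≤ t → x + t • v ∈ C}

/-- A generalized polyhedral convex set: the intersection of a closed affine subspace
with finitely many closed half-spaces. -/
def IsGPCS {X : Type*} [AddCommGroup X] [Module ℝ X] [TopologicalSpace X] (S : Set X) : Prop :=
  ∃ (p : ℕ) (xs : Fin p → X →L[ℝ] ℝ) (α : Fin p → ℝ) (L : AffineSubspace ℝ X),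
    IsClosed (L : Set X) ∧ S = {x | x ∈ L ∧ ∀ i, xs i x ≤ α i}

/-- A generalized polyhedral convex function: its epigraph is a generalized polyhedral
convex subset of `X × ℝ`. -/
def IsGPCFun {X : Type*} [AddCommGroup X] [Module ℝ X] [TopologicalSpace X]
    (g : X → EReal) : Prop :=
  IsGPCS {pt : X × ℝ | g pt.1 ≤ (pt.2 : EReal)}

private lemma aux_nonpos {c d : ℝ} (h : ∀ t : ℝ, 0 ≤ t → t * c ≤ d) : c ≤ 0 := by
  by_contra hc
  push_neg at hc
  have hd : 0 ≤ d := by simpa using h 0 le_rfl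
  have ht : (0:ℝ) ≤ (d + 1) / c := div_nonneg (by linarith) hc.le
  have := h ((d + 1) / c) ht
  rw [div_mul_cancel₀ _ (ne_of_gt hc)] at this
  linarith

/-- Formula for the recession function of a proper generalized polyhedral convex function:
`f0⁺(w) = max {⟨vₖ, w⟩ : k}` if `w ∈ 0⁺(dom f)` and `f0⁺(w) = +∞` otherwise; in particular
`f0⁺` is a proper generalized polyhedral convex function.  Here
`f0⁺(w) = inf {μ ∈ ℝ | (w, μ) ∈ 0⁺(epi f)}`. -/
theorem recession_function_of_gpcf
    {X Z : Type*}
    [AddCommGroup X] [Module ℝ X] [TopologicalSpace X] [IsTopologicalAddGroup X]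
    [ContinuousSMul ℝ X] [LocallyConvexSpace ℝ X] [T2Space X]
    [AddCommGroup Z] [Module ℝ Z] [TopologicalSpace Z] [IsTopologicalAddGroup Z]
    [ContinuousSMul ℝ Z] [LocallyConvexSpace ℝ Z] [T2Space Z]
    (B : X →L[ℝ] Z) (z : Z) (q : ℕ) (us : Fin q → X →L[ℝ] ℝ) (γs : Fin q → ℝ)
    (m : ℕ) (v : Fin (m + 1) → X →L[ℝ] ℝ) (β : Fin (m + 1) → ℝ)
    (domf : Set X) (hdomf : domf = {x | B x = z ∧ ∀ j, us j x ≤ γs j})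
    (hdomne : domf.Nonempty)
    (f : X → EReal)
    (hf : ∀ x ∈ domf,
      f x = ((Finset.univ.sup' Finset.univ_nonempty fun k => v k x + β k : ℝ) : EReal))
    (hf' : ∀ x ∉ domf, f x = ⊤)
    (frec : X → EReal)
    (hfrec : ∀ w : X, frec w =
      sInf ((fun μ : ℝ => (μ : EReal)) ''
        {μ : ℝ | (w, μ) ∈ recCone {pt : X × ℝ | f pt.1 ≤ (pt.2 : EReal)}})) :
    (∀ w : X,
      (w ∈ recCone domf →
        frec w = ((Finset.univ.sup' Finset.univ_nonempty fun k => v k w : ℝ) : EReal)) ∧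
      (w ∉ recCone domf → frec w = ⊤)) ∧
    (∃ w : X, frec w ≠ ⊤) ∧ (∀ w : X, frec w ≠ ⊥) ∧ IsGPCFun frec := by
  -- notation
  set M : X → ℝ := fun w => Finset.univ.sup' Finset.univ_nonempty fun k => v k w with hM
  -- membership in dom f
  have hdmem : ∀ x : X, x ∈ domf ↔ (B x = z ∧ ∀ j, us j x ≤ γs j) := by
    intro x; rw [hdomf]; rfl
  -- epigraph membership
  have hepi : ∀ (x : X) (α : ℝ), f x ≤ (α : EReal) ↔
      (x ∈ domf ∧ ∀ k, v k x + β k ≤ α) := by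
    intro x α
    by_cases hx : x ∈ domf
    · rw [hf x hx, EReal.coe_le_coe_iff, Finset.sup'_le_iff]
      simp [hx]
    · rw [hf' x hx]
      simp [hx]
  -- recession cone of dom f
  have hrecdom : ∀ w : X, w ∈ recCone domf ↔ (B w = 0 ∧ ∀ j, us j w ≤ 0) := by
    intro w
    constructor
    · intro hw
      obtain ⟨x₀, hx₀⟩ := hdomne
      have key : ∀ t : ℝ, 0 ≤ t → x₀ + t • w ∈ domf := fun t ht => hw x₀ hx₀ t ht
      constructor
      · have h1 := ((hdmem _).1 (key 1 zero_le_one)).1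
        have h0 := ((hdmem _).1 hx₀).1
        simp only [one_smul, map_add] at h1
        rw [h0] at h1
        exact add_eq_left.mp h1
      · intro j
        apply aux_nonpos (d := γs j - us j x₀)
        intro t ht
        have := ((hdmem _).1 (key t ht)).2 j
        simp only [map_add, map_smul, smul_eq_mul] at this
        linarith
    · rintro ⟨hB, hu⟩ x hx t ht
      rw [hdmem] at hx ⊢
      constructor
      · simp [hB, hx.1]
      · intro j
        have := hx.2 j
        have h2 : t * us j w ≤ 0 := mul_nonpos_of_nonneg_of_nonpos ht (hu j)
        simp only [map_add, map_smul, smul_eq_mul]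
        linarith
  -- recession cone of epi f
  have hrecepi : ∀ (w : X) (μ : ℝ),
      (w, μ) ∈ recCone {pt : X × ℝ | f pt.1 ≤ (pt.2 : EReal)} ↔
      (w ∈ recCone domf ∧ ∀ k, v k w ≤ μ) := by
    intro w μ
    constructor
    · intro hw
      obtain ⟨x₀, hx₀⟩ := hdomne
      set α₀ : ℝ := Finset.univ.sup' Finset.univ_nonempty fun k => v k x₀ + β k with hα₀
      have hx₀e : (x₀, α₀) ∈ {pt : X × ℝ | f pt.1 ≤ (pt.2 : EReal)} := by
        simp only [Set.mem_setOf_eq]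
        rw [hf x₀ hx₀]
      have key : ∀ t : ℝ, 0 ≤ t → f (x₀ + t • w) ≤ ((α₀ + t * μ : ℝ) : EReal) := by
        intro t ht
        have := hw (x₀, α₀) hx₀e t ht
        simpa [Prod.ext_iff, Prod.smul_def, smul_eq_mul] using this
      have hdom : ∀ t : ℝ, 0 ≤ t → x₀ + t • w ∈ domf := by
        intro t ht
        exact ((hepi _ _).1 (key t ht)).1
      constructor
      · rw [hrecdom]
        constructor
        · have h1 := ((hdmem _).1 (hdom 1 zero_le_one)).1
          have h0 := ((hdmem _).1 hx₀).1
          simp only [one_smul, map_add] at h1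
          rw [h0] at h1
          exact add_eq_left.mp h1
        · intro j
          apply aux_nonpos (d := γs j - us j x₀)
          intro t ht
          have := ((hdmem _).1 (hdom t ht)).2 j
          simp only [map_add, map_smul, smul_eq_mul] at this
          linarith
      · intro k
        have h2 : ∀ t : ℝ, 0 ≤ t → t * (v k w - μ) ≤ α₀ - (v k x₀ + β k) := by
          intro t ht
          have := ((hepi _ _).1 (key t ht)).2 k
          simp only [map_add, map_smul, smul_eq_mul] at this
          linarith
        have := aux_nonpos h2
        linarith
    · rintro ⟨hwd, hv⟩ p hp t ht
      obtain ⟨x, α⟩ := p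
      simp only [Set.mem_setOf_eq] at hp ⊢
      rw [hepi] at hp
      have hxd : x + t • w ∈ domf := hwd x hp.1 t ht
      have : (x, α) + t • (w, μ) = (x + t • w, α + t * μ) := by
        simp [Prod.ext_iff, Prod.smul_def, smul_eq_mul]
      rw [this]
      rw [hepi]
      refine ⟨hxd, fun k => ?_⟩
      have h1 := hp.2 k
      have h2 : t * v k w ≤ t * μ := mul_le_mul_of_nonneg_left (hv k) ht
      simp only [map_add, map_smul, smul_eq_mul]
      linarith
  -- formula for frec on recCone domf
  have hformula : ∀ w ∈ recCone domf, frec w = ((M w : ℝ) : EReal) := by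
    intro w hw
    rw [hfrec w]
    have hset : {μ : ℝ | (w, μ) ∈ recCone {pt : X × ℝ | f pt.1 ≤ (pt.2 : EReal)}}
        = {μ : ℝ | M w ≤ μ} := by
      ext μ
      rw [Set.mem_setOf_eq, hrecepi, Set.mem_setOf_eq, hM]
      simp only [Finset.sup'_le_iff, Finset.mem_univ, true_implies]
      exact and_iff_right hw
    rw [hset]
    apply le_antisymm
    · exact sInf_le ⟨M w, by simp, rfl⟩
    · apply le_sInf
      rintro b ⟨μ, hμ, rfl⟩
      exact EReal.coe_le_coe_iff.2 hμ
  have htop : ∀ w ∉ recCone domf, frec w = ⊤ := by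
    intro w hw
    rw [hfrec w]
    have hset : {μ : ℝ | (w, μ) ∈ recCone {pt : X × ℝ | f pt.1 ≤ (pt.2 : EReal)}} = ∅ := by
      ext μ
      rw [Set.mem_setOf_eq, hrecepi]
      simp [hw]
    rw [hset]
    simp
  have hzero : (0 : X) ∈ recCone domf := by
    intro x hx t ht
    simpa using hx
  refine ⟨fun w => ⟨hformula w, htop w⟩, ⟨0, ?_⟩, ?_, ?_⟩
  · rw [hformula 0 hzero]
    exact EReal.coe_ne_top _
  · intro w
    by_cases hw : w ∈ recCone domf
    · rw [hformula w hw]; exact EReal.coe_ne_bot _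
    · rw [htop w hw]; simp
  -- GPC function
  · refine ⟨q + (m + 1),
      Fin.addCases (fun j => (us j).comp (ContinuousLinearMap.fst ℝ X ℝ))
        (fun k => (v k).comp (ContinuousLinearMap.fst ℝ X ℝ) - ContinuousLinearMap.snd ℝ X ℝ),
      fun _ => 0,
      (LinearMap.ker (B.comp (ContinuousLinearMap.fst ℝ X ℝ) : X × ℝ →ₗ[ℝ] Z)).toAffineSubspace, ?_, ?_⟩
    · have : ((LinearMap.ker (B.comp (ContinuousLinearMap.fst ℝ X ℝ) : X × ℝ →ₗ[ℝ] Z)).toAffineSubspace :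
          Set (X × ℝ)) = (B.comp (ContinuousLinearMap.fst ℝ X ℝ)) ⁻¹' {0} := by
        ext p
        simp [Submodule.mem_toAffineSubspace, LinearMap.mem_ker]
      rw [this]
      exact IsClosed.preimage (B.comp (ContinuousLinearMap.fst ℝ X ℝ)).continuous
        isClosed_singleton
    · ext ⟨w, μ⟩
      simp only [Set.mem_setOf_eq, Submodule.mem_toAffineSubspace, LinearMap.mem_ker]
      constructor
      · intro h
        by_cases hw : w ∈ recCone domf
        · rw [hformula w hw, EReal.coe_le_coe_iff] at h
          have hwd := (hrecdom w).1 hw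
          refine ⟨by simpa using hwd.1, fun i => ?_⟩
          refine Fin.addCases (fun j => ?_) (fun k => ?_) i
          · rw [Fin.addCases_left]
            simpa using hwd.2 j
          · rw [Fin.addCases_right]
            have : v k w ≤ M w := Finset.le_sup' (fun k => v k w) (Finset.mem_univ k)
            simp only [ContinuousLinearMap.sub_apply, ContinuousLinearMap.comp_apply,
              ContinuousLinearMap.coe_fst', ContinuousLinearMap.coe_snd']
            linarith
        · rw [htop w hw] at h
          exact absurd h (by simp)
      · rintro ⟨hB, hall⟩
        have hu : ∀ j, us j w ≤ 0 := by
          intro j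
          have := hall (Fin.castAdd (m + 1) j)
          rwa [Fin.addCases_left] at this
        have hv : ∀ k, v k w ≤ μ := by
          intro k
          have := hall (Fin.natAdd q k)
          rw [Fin.addCases_right] at this
          simp only [ContinuousLinearMap.sub_apply, ContinuousLinearMap.comp_apply,
            ContinuousLinearMap.coe_fst', ContinuousLinearMap.coe_snd'] at this
          linarith
        have hw : w ∈ recCone domf := (hrecdom w).2 ⟨by simpa using hB, hu⟩
        rw [hformula w hw, EReal.coe_le_coe_iff, hM]
        exact Finset.sup'_le _ _ fun k _ => hv k
end

section
/- (Eaves-type existence theorem) Assume D ∩ dom f is nonempty. Then problem (P) has a solution if and only if f0⁺(v) ≥ 0 for every v ∈ 0⁺D. -/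
open Finset in
theorem fm_elim1 {ι : Type} [Fintype ι] (c : ι → ℝ) :
    ∃ (κ : Type) (_ : Fintype κ) (L : (ι → ℝ) →ₗ[ℝ] (κ → ℝ)),
      ∀ v : ι → ℝ, (∃ s : ℝ, ∀ i, c i * s ≤ v i) ↔ ∀ k, 0 ≤ L v k := by
  classical
  refine ⟨({i : ι // c i = 0}) ⊕ ({i : ι // 0 < c i} × {i : ι // c i < 0}), inferInstance,
    { toFun := fun v k => Sum.casesOn k (fun i => v i.1)
        (fun pr => v pr.1.1 / c pr.1.1 - v pr.2.1 / c pr.2.1)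
      map_add' := by
        intro u w; funext k; rcases k with ⟨i⟩ | ⟨⟨ia⟩, ⟨ib⟩⟩ <;>
          simp [Pi.add_apply, add_div] <;> ring
      map_smul' := by
        intro r w; funext k; rcases k with ⟨i⟩ | ⟨⟨ia⟩, ⟨ib⟩⟩ <;>
          simp [Pi.smul_apply, smul_eq_mul, mul_div_assoc] <;> ring }, ?_⟩
  intro v
  simp only [LinearMap.coe_mk, AddHom.coe_mk]
  constructor
  · rintro ⟨s, hs⟩ (⟨i, hi⟩ | ⟨⟨ip, hip⟩, ⟨im, him⟩⟩)
    · have := hs i; rw [hi, zero_mul] at this; simpa using this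
    · have h1 : s ≤ v ip / c ip := (le_div_iff₀ hip).2 (by linarith [hs ip, mul_comm (c ip) s])
      have h2 : v im / c im ≤ s := (div_le_iff_of_neg him).2 (by linarith [hs im])
      simp only; linarith
  · intro h
    by_cases hNeg : (univ.filter fun i => c i < 0).Nonempty
    · refine ⟨(univ.filter fun i => c i < 0).sup' hNeg fun i => v i / c i, fun i => ?_⟩
      rcases lt_trichotomy (c i) 0 with hc | hc | hc
      · have : v i / c i ≤ _ := Finset.le_sup' (fun i => v i / c i)
          (show i ∈ univ.filter fun i => c i < 0 by simp [hc])
        calc c i * _ ≤ c i * (v i / c i) := mul_le_mul_of_nonpos_left this hc.le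
          _ = v i := by rw [mul_comm, div_mul_cancel₀ _ hc.ne]
      · rw [hc, zero_mul]; exact h (Sum.inl ⟨i, hc⟩)
      · rw [mul_comm, ← le_div_iff₀ hc]
        apply Finset.sup'_le
        intro j hj
        have hj' : c j < 0 := by simpa using (mem_filter.1 hj).2
        have := h (Sum.inr ⟨⟨i, hc⟩, ⟨j, hj'⟩⟩)
        simp only at this; linarith
    · by_cases hPos : (univ.filter fun i => 0 < c i).Nonempty
      · refine ⟨(univ.filter fun i => 0 < c i).inf' hPos fun i => v i / c i, fun i => ?_⟩
        rcases lt_trichotomy (c i) 0 with hc | hc | hc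
        · exact absurd ⟨i, by simp [hc]⟩ hNeg
        · rw [hc, zero_mul]; exact h (Sum.inl ⟨i, hc⟩)
        · rw [mul_comm, ← le_div_iff₀ hc]
          exact Finset.inf'_le _ (by simp [hc])
      · refine ⟨0, fun i => ?_⟩
        have hc : c i = 0 := by
          by_contra hc
          rcases lt_or_gt_of_ne hc with h' | h'
          · exact hNeg ⟨i, by simp [h']⟩
          · exact hPos ⟨i, by simp [h']⟩
        rw [hc, zero_mul]; exact h (Sum.inl ⟨i, hc⟩)


/-- The linear map `x ↦ Fin.snoc x 0`. -/
def snocZeroLM (n : ℕ) : (Fin n → ℝ) →ₗ[ℝ] (Fin (n + 1) → ℝ) where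
  toFun x := Fin.snoc x 0
  map_add' x y := by
    funext i
    refine Fin.lastCases ?_ (fun j => ?_) i <;>
      simp [Fin.snoc_last, Fin.snoc_castSucc]
  map_smul' r x := by
    funext i
    refine Fin.lastCases ?_ (fun j => ?_) i <;>
      simp [Fin.snoc_last, Fin.snoc_castSucc]

theorem snoc_decomp (n : ℕ) (x : Fin n → ℝ) (s : ℝ) :
    Fin.snoc x s = snocZeroLM n x + s • (Fin.snoc 0 1 : Fin (n + 1) → ℝ) := by
  funext i
  refine Fin.lastCases ?_ (fun j => ?_) i <;>
    simp [snocZeroLM, Fin.snoc_last, Fin.snoc_castSucc]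

theorem fm_elimAll (n : ℕ) : ∀ (ι : Type) (_ : Fintype ι)
    (a : ι → (Fin n → ℝ) →ₗ[ℝ] ℝ) (c : ι → ℝ),
    ∃ (κ : Type) (_ : Fintype κ) (c' : κ → ℝ) (L : (ι → ℝ) →ₗ[ℝ] (κ → ℝ)),
      ∀ (b : ι → ℝ) (t : ℝ),
        (∃ x, ∀ i, a i x + c i * t ≤ b i) ↔ ∀ k, c' k * t ≤ L b k := by
  induction n with
  | zero =>
    intro ι _ a c
    refine ⟨ι, inferInstance, c, LinearMap.id, fun b t => ?_⟩
    constructor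
    · rintro ⟨x, hx⟩ i
      have := hx i
      have hx0 : x = 0 := Subsingleton.elim _ _
      rw [hx0, map_zero, zero_add] at this
      simpa using this
    · intro h
      exact ⟨0, fun i => by rw [map_zero, zero_add]; simpa using h i⟩
  | succ n ih =>
    intro ι _ a c
    obtain ⟨κ₁, hκ₁, L₁, hL₁⟩ := fm_elim1 (fun i => a i (Fin.snoc 0 1))
    -- new functionals on Fin n → ℝ
    letI := hκ₁
    set a' : ι → (Fin n → ℝ) →ₗ[ℝ] ℝ := fun i => (a i).comp (snocZeroLM n) with ha'
    set abar : κ₁ → (Fin n → ℝ) →ₗ[ℝ] ℝ :=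
      fun k => (LinearMap.proj k).comp (L₁.comp (LinearMap.pi a')) with habar
    obtain ⟨κ, hκ, c', L₂, hL₂⟩ := ih κ₁ hκ₁ abar (fun k => L₁ c k)
    refine ⟨κ, hκ, c', L₂.comp L₁, fun b t => ?_⟩
    have habarx : ∀ (x' : Fin n → ℝ) k, abar k x' = L₁ (fun i => a' i x') k :=
      fun _ _ => rfl
    have hlin : ∀ (x' : Fin n → ℝ) (k : κ₁),
        L₁ (fun i => b i - a' i x' - c i * t) k
          = L₁ b k - abar k x' - L₁ c k * t := by
      intro x' k
      have heq : (fun i => b i - a' i x' - c i * t)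
          = b - (fun i => a' i x') - t • c := by
        funext i; simp [smul_eq_mul]; ring
      rw [heq, map_sub, map_sub, map_smul, habarx]
      simp [smul_eq_mul]
      ring
    have key : (∃ x : Fin (n+1) → ℝ, ∀ i, a i x + c i * t ≤ b i) ↔
        ∃ x' : Fin n → ℝ, ∀ k, abar k x' + L₁ c k * t ≤ L₁ b k := by
      constructor
      · rintro ⟨x, hx⟩
        refine ⟨Fin.init x, fun k => ?_⟩
        have hsnoc : Fin.snoc (Fin.init x) (x (Fin.last n)) = x := Fin.snoc_init_self x
        have h1 : ∃ s : ℝ, ∀ i, (a i (Fin.snoc 0 1)) * s ≤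
            b i - a' i (Fin.init x) - c i * t := by
          refine ⟨x (Fin.last n), fun i => ?_⟩
          have := hx i
          rw [← hsnoc, snoc_decomp, map_add, map_smul, smul_eq_mul] at this
          simp only [ha', LinearMap.comp_apply]
          linarith [this]
        have h2 := (hL₁ _).1 h1 k
        rw [hlin (Fin.init x)] at h2
        linarith
      · rintro ⟨x', hx'⟩
        have h1 : ∀ k, 0 ≤ L₁ (fun i => b i - a' i x' - c i * t) k := by
          intro k
          rw [hlin x']
          linarith [hx' k]
        obtain ⟨s, hs⟩ := (hL₁ _).2 h1
        refine ⟨Fin.snoc x' s, fun i => ?_⟩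
        rw [snoc_decomp, map_add, map_smul, smul_eq_mul]
        have := hs i
        simp only [ha', LinearMap.comp_apply] at *
        linarith
    rw [key, hL₂ (L₁ b) t]
    simp [LinearMap.comp_apply]


theorem lp_key {V : Type*} [AddCommGroup V] [Module ℝ V]
    {ι : Type} [Fintype ι] (a : ι → V →ₗ[ℝ] ℝ) (b : ι → ℝ) (φ : V →ₗ[ℝ] ℝ)
    (hne : ∃ x, ∀ i, a i x ≤ b i) :
    (∃ u, (∀ i, a i u ≤ b i) ∧ ∀ x, (∀ i, a i x ≤ b i) → φ u ≤ φ x) ∨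
      (∃ d, (∀ i, a i d ≤ 0) ∧ φ d < 0) := by
  classical
  let F := (ι → ℝ) × ℝ
  let T : V →ₗ[ℝ] F := LinearMap.prod (LinearMap.pi a) φ
  let W : Submodule ℝ F := LinearMap.range T
  haveI : FiniteDimensional ℝ F := inferInstance
  obtain ⟨r, g, hg⟩ := Submodule.fg_iff_exists_fin_generating_family.1
    (IsNoetherian.noetherian W.dualAnnihilator)
  have hWmem : ∀ u : F, u ∈ W ↔ ∀ l : Fin r, g l u = 0 := by
    intro u
    rw [← Subspace.forall_mem_dualAnnihilator_apply_eq_zero_iff W u]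
    constructor
    · intro h l
      have : g l ∈ W.dualAnnihilator := by
        rw [← hg]; exact Submodule.subset_span ⟨l, rfl⟩
      exact h _ this
    · intro h ψ hψ
      rw [← hg] at hψ
      induction hψ using Submodule.span_induction with
      | mem x hx => obtain ⟨l, rfl⟩ := hx; exact h l
      | zero => rfl
      | add x y _ _ hx hy => simp [hx, hy]
      | smul c x _ hx => simp [hx]
  -- coordinates on F
  set n := Module.finrank ℝ F with hn
  let E : (Fin n → ℝ) ≃ₗ[ℝ] F := (Module.finBasis ℝ F).equivFun.symm
  let EL : (Fin n → ℝ) →ₗ[ℝ] F := (E : (Fin n → ℝ) →ₗ[ℝ] F)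
  -- the constraint system
  let ι' := ι ⊕ ((Fin r ⊕ Fin r) ⊕ Bool)
  let rowa : ι' → (Fin n → ℝ) →ₗ[ℝ] ℝ :=
    Sum.elim
      (fun i => ((LinearMap.proj i).comp (LinearMap.fst ℝ (ι → ℝ) ℝ)).comp EL)
      (Sum.elim
        (Sum.elim (fun l => (g l).comp EL) (fun l => -((g l).comp EL)))
        (fun bb => cond bb ((LinearMap.snd ℝ (ι → ℝ) ℝ).comp EL)
          (-((LinearMap.snd ℝ (ι → ℝ) ℝ).comp EL))))
  let rowc : ι' → ℝ :=
    Sum.elim (fun _ => 0) (Sum.elim (fun _ => 0) (fun bb => cond bb (-1) 1))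
  let rowB : (ι → ℝ) → ι' → ℝ := fun bb =>
    Sum.elim bb (fun _ => 0)
  obtain ⟨κ, hκ, c', L, hL⟩ := fm_elimAll n ι' inferInstance rowa rowc
  -- the master equivalence
  have master : ∀ (bb : ι → ℝ) (t : ℝ),
      (∃ ξ : Fin n → ℝ, ∀ i', rowa i' ξ + rowc i' * t ≤ rowB bb i') ↔
      (∃ x : V, (∀ i, a i x ≤ bb i) ∧ φ x = t) := by
    intro bb t
    constructor
    · rintro ⟨ξ, hξ⟩
      have hmemW : E ξ ∈ W := by
        rw [hWmem]
        intro l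
        have h1 := hξ (Sum.inr (Sum.inl (Sum.inl l)))
        have h2 := hξ (Sum.inr (Sum.inl (Sum.inr l)))
        simp only [rowa, rowc, rowB, Sum.elim_inl, Sum.elim_inr, LinearMap.comp_apply,
          LinearMap.neg_apply, zero_mul, add_zero, EL, LinearMap.coe_coe, LinearEquiv.coe_coe] at h1 h2
        linarith
      obtain ⟨x, hx⟩ := hmemW
      have hx1 : ∀ i, a i x = (E ξ).1 i := by
        intro i; rw [← hx]; rfl
      have hx2 : φ x = (E ξ).2 := by rw [← hx]; rfl
      refine ⟨x, fun i => ?_, ?_⟩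
      · have h1 := hξ (Sum.inl i)
        simp only [rowa, rowc, rowB, Sum.elim_inl, LinearMap.comp_apply, zero_mul,
          add_zero, LinearMap.proj_apply, LinearMap.fst_apply, EL, LinearMap.coe_coe, LinearEquiv.coe_coe] at h1
        rw [hx1 i]; exact h1
      · have h1 := hξ (Sum.inr (Sum.inr true))
        have h2 := hξ (Sum.inr (Sum.inr false))
        simp only [rowa, rowc, rowB, Sum.elim_inl, Sum.elim_inr, Bool.cond_true,
          Bool.cond_false, LinearMap.comp_apply, LinearMap.neg_apply,
          LinearMap.snd_apply, EL, LinearMap.coe_coe, LinearEquiv.coe_coe] at h1 h2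
        rw [hx2]; linarith
    · rintro ⟨x, hx1, hx2⟩
      refine ⟨E.symm (T x), fun i' => ?_⟩
      have hE : E (E.symm (T x)) = T x := E.apply_symm_apply _
      have hEL : ∀ u, EL u = E u := fun _ => rfl
      have hTx1 : ∀ i, (T x).1 i = a i x := fun i => rfl
      have hTx2 : (T x).2 = φ x := rfl
      have hgl : ∀ l : Fin r, g l (T x) = 0 := (hWmem (T x)).1 ⟨x, rfl⟩
      rcases i' with i | ((l | l) | bb)
      · simp only [rowa, rowc, rowB, Sum.elim_inl, LinearMap.comp_apply, zero_mul,
          add_zero, LinearMap.proj_apply, LinearMap.fst_apply, EL, LinearMap.coe_coe, LinearEquiv.coe_coe,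
          hE, hTx1]
        exact hx1 i
      · simp only [rowa, rowc, rowB, Sum.elim_inl, Sum.elim_inr, LinearMap.comp_apply,
          zero_mul, add_zero, EL, LinearMap.coe_coe, LinearEquiv.coe_coe, hE, hgl, le_refl]
      · simp only [rowa, rowc, rowB, Sum.elim_inl, Sum.elim_inr, LinearMap.comp_apply,
          LinearMap.neg_apply, zero_mul, add_zero, EL, LinearMap.coe_coe, LinearEquiv.coe_coe, hE, hgl,
          neg_zero, le_refl]
      · cases bb
        · simp only [rowa, rowc, rowB, Sum.elim_inr, Bool.cond_false,
            LinearMap.comp_apply, LinearMap.neg_apply, LinearMap.snd_apply, EL,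
            LinearMap.coe_coe, LinearEquiv.coe_coe, hE, hTx2, hx2, one_mul]
          linarith
        · simp only [rowa, rowc, rowB, Sum.elim_inr, Bool.cond_true,
            LinearMap.comp_apply, LinearMap.snd_apply, EL, LinearMap.coe_coe, LinearEquiv.coe_coe, hE,
            hTx2, hx2]
          linarith
  -- the feasible-value set in ℝ
  set Tset : Set ℝ := {t | ∀ k, c' k * t ≤ L (rowB b) k} with hTsetdef
  have hTset : ∀ t : ℝ, t ∈ Tset ↔ ∃ x, (∀ i, a i x ≤ b i) ∧ φ x = t := by
    intro t
    rw [← master b t, hTsetdef]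
    simp only [Set.mem_setOf_eq]
    exact (hL (rowB b) t).symm
  obtain ⟨x₀, hx₀⟩ := hne
  have hTne : Tset.Nonempty := ⟨φ x₀, (hTset _).2 ⟨x₀, hx₀, rfl⟩⟩
  by_cases hbdd : BddBelow Tset
  · left
    have hclosed : IsClosed Tset := by
      have : Tset = ⋂ k, {t : ℝ | c' k * t ≤ L (rowB b) k} := by
        ext t; simp [hTsetdef, Set.mem_iInter]
      rw [this]
      exact isClosed_iInter fun k =>
        isClosed_le (continuous_const.mul continuous_id) continuous_const
    have hmem := hclosed.csInf_mem hTne hbdd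
    obtain ⟨u, hu, hut⟩ := (hTset _).1 hmem
    refine ⟨u, hu, fun x hx => ?_⟩
    have hx' : φ x ∈ Tset := (hTset _).2 ⟨x, hx, rfl⟩
    rw [hut]
    exact csInf_le hbdd hx'
  · right
    have hcge : ∀ k, 0 ≤ c' k := by
      intro k
      by_contra hk
      push_neg at hk
      apply hbdd
      refine ⟨L (rowB b) k / c' k, fun t ht => ?_⟩
      have h1 := ht k
      rw [div_le_iff_of_neg hk]
      linarith [mul_comm (c' k) t]
    have h0 : rowB (0 : ι → ℝ) = (0 : ι' → ℝ) := by
      funext i'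
      rcases i' with i | i' <;> simp [rowB]
    have hhom : ∀ k, c' k * (-1) ≤ L (rowB 0) k := by
      intro k
      rw [h0, map_zero]
      simp only [Pi.zero_apply, mul_neg_one, neg_nonpos]
      exact hcge k
    obtain ⟨d, hd1, hd2⟩ := (master 0 (-1)).1 ((hL (rowB 0) (-1)).2 hhom)
    exact ⟨d, fun i => by simpa using hd1 i, by rw [hd2]; norm_num⟩


/-- **Eaves-type existence theorem.**  With `D` a nonempty generalized polyhedral convex
set given by `A, y, xs, α`, and `f` a proper generalized polyhedral convex function with
`dom f` given by `B, z, us, γs` and `f = max {⟨vₖ, ·⟩ + βₖ}` on `dom f`, `+∞` elsewhere: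
if `D ∩ dom f ≠ ∅`, then `(P)` has a solution iff the recession function
`f0⁺(w) = inf {μ | (w, μ) ∈ 0⁺(epi f)}` is nonnegative on `0⁺D`. -/
theorem eaves_type_existence
    {X Y Z : Type*}
    [AddCommGroup X] [Module ℝ X] [TopologicalSpace X] [IsTopologicalAddGroup X]
    [ContinuousSMul ℝ X] [LocallyConvexSpace ℝ X] [T2Space X]
    [AddCommGroup Y] [Module ℝ Y] [TopologicalSpace Y] [IsTopologicalAddGroup Y]
    [ContinuousSMul ℝ Y] [LocallyConvexSpace ℝ Y] [T2Space Y]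
    [AddCommGroup Z] [Module ℝ Z] [TopologicalSpace Z] [IsTopologicalAddGroup Z]
    [ContinuousSMul ℝ Z] [LocallyConvexSpace ℝ Z] [T2Space Z]
    (A : X →L[ℝ] Y) (y : Y) (p : ℕ) (xs : Fin p → X →L[ℝ] ℝ) (α : Fin p → ℝ)
    (B : X →L[ℝ] Z) (z : Z) (q : ℕ) (us : Fin q → X →L[ℝ] ℝ) (γs : Fin q → ℝ)
    (m : ℕ) (v : Fin (m + 1) → X →L[ℝ] ℝ) (β : Fin (m + 1) → ℝ)
    (D : Set X) (hD : D = {x | A x = y ∧ ∀ i, xs i x ≤ α i})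
    (domf : Set X) (hdomf : domf = {x | B x = z ∧ ∀ j, us j x ≤ γs j})
    (hdomne : domf.Nonempty)
    (f : X → EReal)
    (hf : ∀ x ∈ domf,
      f x = ((Finset.univ.sup' Finset.univ_nonempty fun k => v k x + β k : ℝ) : EReal))
    (hf' : ∀ x ∉ domf, f x = ⊤)
    (frec : X → EReal)
    (hfrec : ∀ w : X, frec w =
      sInf ((fun μ : ℝ => (μ : EReal)) ''
        {μ : ℝ | (w, μ) ∈ recCone {pt : X × ℝ | f pt.1 ≤ (pt.2 : EReal)}}))
    (hne : (D ∩ domf).Nonempty) :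
    (∃ u ∈ D, f u ≠ ⊤ ∧ f u ≠ ⊥ ∧ ∀ x ∈ D, f u ≤ f x) ↔
      ∀ w ∈ recCone D, (0 : EReal) ≤ frec w := by
  classical
  set g : X → ℝ := fun x => Finset.univ.sup' Finset.univ_nonempty fun k => v k x + β k
    with hgdef
  have hgle : ∀ (x : X) (k : Fin (m + 1)), v k x + β k ≤ g x := fun x k =>
    Finset.le_sup' (fun j => v j x + β j) (Finset.mem_univ k)
  have hgle' : ∀ (x : X) (t : ℝ), (∀ k, v k x + β k ≤ t) → g x ≤ t := fun x t h =>
    Finset.sup'_le _ (fun j => v j x + β j) fun k _ => h k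
  have hfg : ∀ x ∈ domf, f x = ((g x : ℝ) : EReal) := fun x hx => hf x hx
  constructor
  · -- solution implies recession condition
    rintro ⟨u, huD, hutop, _, humin⟩ w hw
    have hudom : u ∈ domf := by
      by_contra h
      exact hutop (hf' u h)
    rw [hfrec w]
    refine le_sInf ?_
    rintro _ ⟨μ, hμ, rfl⟩
    rw [← EReal.coe_zero, EReal.coe_le_coe_iff]
    -- apply the recession property at (u, g u) with t = 1
    have hepi : (u, g u) ∈ {pt : X × ℝ | f pt.1 ≤ (pt.2 : EReal)} := by
      simp only [Set.mem_setOf_eq, hfg u hudom, le_refl]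
    have h1 := hμ (u, g u) hepi 1 zero_le_one
    simp only [Set.mem_setOf_eq, Prod.smul_mk, one_smul, Prod.mk_add_mk] at h1
    have h1' : f (u + w) ≤ ((g u + μ : ℝ) : EReal) := h1
    have huwD : u + w ∈ D := by
      have := hw u huD 1 zero_le_one
      rwa [one_smul] at this
    have h2 : ((g u : ℝ) : EReal) ≤ f (u + w) := by
      rw [← hfg u hudom]
      exact humin _ huwD
    have := le_trans h2 h1'
    rw [EReal.coe_le_coe_iff] at this
    linarith
  · -- recession condition implies existence of a solution
    intro hrec
    obtain ⟨x₀, hx₀D, hx₀dom⟩ := hne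
    rw [hD] at hx₀D
    rw [hdomf] at hx₀dom
    -- set up the LP on K × ℝ
    set K : Submodule ℝ X :=
      LinearMap.ker (A : X →ₗ[ℝ] Y) ⊓ LinearMap.ker (B : X →ₗ[ℝ] Z) with hKdef
    have hKmem : ∀ d : X, d ∈ K ↔ A d = 0 ∧ B d = 0 := by
      intro d
      simp [hKdef, Submodule.mem_inf, LinearMap.mem_ker]
    set ι : Type := Fin p ⊕ (Fin q ⊕ Fin (m + 1)) with hι
    let a : ι → (↥K × ℝ) →ₗ[ℝ] ℝ :=
      Sum.elim
        (fun i => (((xs i : X →ₗ[ℝ] ℝ).comp K.subtype).comp (LinearMap.fst ℝ ↥K ℝ)))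
        (Sum.elim
          (fun j => (((us j : X →ₗ[ℝ] ℝ).comp K.subtype).comp (LinearMap.fst ℝ ↥K ℝ)))
          (fun k => (((v k : X →ₗ[ℝ] ℝ).comp K.subtype).comp (LinearMap.fst ℝ ↥K ℝ))
            - LinearMap.snd ℝ ↥K ℝ))
    let b : ι → ℝ :=
      Sum.elim (fun i => α i - xs i x₀)
        (Sum.elim (fun j => γs j - us j x₀) (fun k => -(β k) - v k x₀))
    let φ : (↥K × ℝ) →ₗ[ℝ] ℝ := LinearMap.snd ℝ ↥K ℝ
    have hfeas : ∀ (d : ↥K) (t : ℝ),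
        (∀ i, a i (d, t) ≤ b i) ↔
          ((∀ i, xs i (x₀ + ↑d) ≤ α i) ∧ (∀ j, us j (x₀ + ↑d) ≤ γs j) ∧
            (∀ k, v k (x₀ + ↑d) + β k ≤ t)) := by
      intro d t
      constructor
      · intro h
        refine ⟨fun i => ?_, fun j => ?_, fun k => ?_⟩
        · have := h (Sum.inl i)
          simp only [a, b, Sum.elim_inl, LinearMap.comp_apply, LinearMap.fst_apply,
            Submodule.coe_subtype, ContinuousLinearMap.coe_coe] at this
          rw [map_add]; linarith
        · have := h (Sum.inr (Sum.inl j))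
          simp only [a, b, Sum.elim_inl, Sum.elim_inr, LinearMap.comp_apply,
            LinearMap.fst_apply, Submodule.coe_subtype, ContinuousLinearMap.coe_coe] at this
          rw [map_add]; linarith
        · have := h (Sum.inr (Sum.inr k))
          simp only [a, b, Sum.elim_inl, Sum.elim_inr, LinearMap.sub_apply,
            LinearMap.comp_apply, LinearMap.fst_apply, LinearMap.snd_apply,
            Submodule.coe_subtype, ContinuousLinearMap.coe_coe] at this
          rw [map_add]; linarith
      · rintro ⟨h1, h2, h3⟩ i
        rcases i with i | j | k
        · simp only [a, b, Sum.elim_inl, LinearMap.comp_apply, LinearMap.fst_apply,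
            Submodule.coe_subtype, ContinuousLinearMap.coe_coe]
          have := h1 i; rw [map_add] at this; linarith
        · simp only [a, b, Sum.elim_inl, Sum.elim_inr, LinearMap.comp_apply,
            LinearMap.fst_apply, Submodule.coe_subtype, ContinuousLinearMap.coe_coe]
          have := h2 j; rw [map_add] at this; linarith
        · simp only [a, b, Sum.elim_inl, Sum.elim_inr, LinearMap.sub_apply,
            LinearMap.comp_apply, LinearMap.fst_apply, LinearMap.snd_apply,
            Submodule.coe_subtype, ContinuousLinearMap.coe_coe]
          have := h3 k; rw [map_add] at this; linarith
    have hne' : ∃ pt : ↥K × ℝ, ∀ i, a i pt ≤ b i := by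
      refine ⟨((0 : ↥K), g x₀), ?_⟩
      rw [hfeas]
      simp only [Submodule.coe_zero, add_zero]
      exact ⟨hx₀D.2, hx₀dom.2, fun k => hgle x₀ k⟩
    rcases lp_key a b φ hne' with ⟨⟨u', t⟩, hfeas', hmin⟩ | ⟨⟨d, s⟩, hd0, hφ⟩
    · -- a minimizer exists
      rw [hfeas] at hfeas'
      obtain ⟨hc1, hc2, hc3⟩ := hfeas'
      set u : X := x₀ + ↑u' with hu
      have hu'K := u'.2
      rw [hKmem] at hu'K
      have huD : u ∈ D := by
        rw [hD]
        refine ⟨?_, hc1⟩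
        rw [hu, map_add, hu'K.1, add_zero, hx₀D.1]
      have hudom : u ∈ domf := by
        rw [hdomf]
        refine ⟨?_, hc2⟩
        rw [hu, map_add, hu'K.2, add_zero, hx₀dom.1]
      refine ⟨u, huD, ?_, ?_, ?_⟩
      · rw [hfg u hudom]; exact EReal.coe_ne_top _
      · rw [hfg u hudom]; exact EReal.coe_ne_bot _
      · intro x hxD
        by_cases hxdom : x ∈ domf
        · rw [hfg u hudom, hfg x hxdom, EReal.coe_le_coe_iff]
          -- the pair (x - x₀, g x) is feasible
          have hxK : x - x₀ ∈ K := by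
            rw [hKmem, map_sub, map_sub]
            rw [hD] at hxD; rw [hdomf] at hxdom
            rw [hxD.1, hx₀D.1, hxdom.1, hx₀dom.1, sub_self, sub_self]
            exact ⟨rfl, rfl⟩
          have hfx : ∀ i, a i ((⟨x - x₀, hxK⟩ : ↥K), g x) ≤ b i := by
            rw [hfeas]
            simp only [add_sub_cancel]
            rw [hD] at hxD; rw [hdomf] at hxdom
            exact ⟨hxD.2, hxdom.2, fun k => hgle x k⟩
          have hmin' := hmin _ hfx
          simp only [φ, LinearMap.snd_apply] at hmin'
          have hgu : g u ≤ t := by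
            apply hgle'
            intro k
            exact hc3 k
          exact le_trans hgu hmin'
        · rw [hf' x hxdom]
          exact le_top
    · -- recession direction: contradiction with hrec
      exfalso
      simp only [φ, LinearMap.snd_apply] at hφ
      have hd0' : (∀ i, xs i (↑d : X) ≤ 0) ∧ (∀ j, us j (↑d : X) ≤ 0) ∧
          (∀ k, v k (↑d : X) ≤ s) := by
        refine ⟨fun i => ?_, fun j => ?_, fun k => ?_⟩
        · have := hd0 (Sum.inl i)
          simpa [a] using this
        · have := hd0 (Sum.inr (Sum.inl j))
          simpa [a] using this
        · have := hd0 (Sum.inr (Sum.inr k))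
          simp only [a, Sum.elim_inl, Sum.elim_inr, LinearMap.sub_apply,
            LinearMap.comp_apply, LinearMap.fst_apply, LinearMap.snd_apply,
            Submodule.coe_subtype, ContinuousLinearMap.coe_coe] at this
          linarith
      have hdK := d.2
      rw [hKmem] at hdK
      set w : X := (↑d : X) with hwdef
      have hwrec : w ∈ recCone D := by
        intro x hxD t ht
        rw [hD] at hxD ⊢
        refine ⟨?_, fun i => ?_⟩
        · rw [map_add, map_smul, hdK.1, smul_zero, add_zero, hxD.1]
        · rw [map_add, map_smul, smul_eq_mul]
          have : t * xs i w ≤ 0 := mul_nonpos_of_nonneg_of_nonpos ht (hd0'.1 i)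
          linarith [hxD.2 i]
      have hsmem : (w, s) ∈ recCone {pt : X × ℝ | f pt.1 ≤ (pt.2 : EReal)} := by
        rintro ⟨x, ρ⟩ hxρ t ht
        simp only [Set.mem_setOf_eq] at hxρ ⊢
        have hxdom : x ∈ domf := by
          by_contra h
          rw [hf' x h] at hxρ
          exact (not_le.2 (EReal.coe_lt_top ρ)) (le_trans le_top hxρ)
        rw [hfg x hxdom] at hxρ
        have hgxρ : g x ≤ ρ := EReal.coe_le_coe_iff.1 hxρ
        have hxtw : x + t • w ∈ domf := by
          rw [hdomf]
          rw [hdomf] at hxdom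
          refine ⟨?_, fun j => ?_⟩
          · rw [map_add, map_smul, hdK.2, smul_zero, add_zero, hxdom.1]
          · rw [map_add, map_smul, smul_eq_mul]
            have : t * us j w ≤ 0 := mul_nonpos_of_nonneg_of_nonpos ht (hd0'.2.1 j)
            linarith [hxdom.2 j]
        show f ((x, ρ) + t • (w, s)).1 ≤ (((x, ρ) + t • (w, s)).2 : EReal)
        simp only [Prod.smul_mk, Prod.mk_add_mk, smul_eq_mul]
        rw [hfg _ hxtw, EReal.coe_le_coe_iff]
        apply hgle'
        intro k
        rw [map_add, map_smul, smul_eq_mul]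
        have h1 : t * v k w ≤ t * s := mul_le_mul_of_nonneg_left (hd0'.2.2 k) ht
        have h2 : v k x + β k ≤ g x := hgle x k
        linarith
      have hfrecw : frec w ≤ ((s : ℝ) : EReal) := by
        rw [hfrec w]
        exact sInf_le ⟨s, hsmem, rfl⟩
      have h0 := hrec w hwrec
      have : (0 : EReal) ≤ ((s : ℝ) : EReal) := le_trans h0 hfrecw
      rw [← EReal.coe_zero, EReal.coe_le_coe_iff] at this
      linarith
end

section
/- Assume D ∩ dom f is nonempty and dom f ⊂ D. Then problem (P) has a solution if and only if 0 ∈ conv{v_k* : k = 1,…,m} + cone{u_j* : j = 1,…,q} + (ker B)^⊥. -/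
open scoped Pointwise

/-- The convex cone generated by a set (all finite nonnegative combinations, including `0`). -/
def coneGen {E : Type*} [AddCommGroup E] [Module ℝ E] (s : Set E) : Set E :=
  {y | ∃ (n : ℕ) (c : Fin n → ℝ) (w : Fin n → E),
    (∀ i, 0 ≤ c i) ∧ (∀ i, w i ∈ s) ∧ y = ∑ i, c i • w i}

theorem myFarkasBartl {V : Type*} [AddCommGroup V] [Module ℝ V] :
    ∀ (n : ℕ) (a : Fin n → V →ₗ[ℝ] ℝ) (b : V →ₗ[ℝ] ℝ),
    (∀ x, (∀ i, 0 ≤ a i x) → 0 ≤ b x) →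
    ∃ y : Fin n → ℝ, (∀ i, 0 ≤ y i) ∧ ∀ x, b x = ∑ i, y i * a i x := by
  intro n
  induction n with
  | zero =>
    intro a b h
    refine ⟨fun i => 0, fun i => le_rfl, fun x => ?_⟩
    have h1 : 0 ≤ b x := h x (fun i => i.elim0)
    have h2 : 0 ≤ b (-x) := h (-x) (fun i => i.elim0)
    simp only [map_neg] at h2
    simp only [Finset.univ_eq_empty, Finset.sum_empty]
    linarith
  | succ n ih =>
    intro a b h
    by_cases hc : ∀ x, (∀ i : Fin n, 0 ≤ a i.castSucc x) → 0 ≤ b x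
    · obtain ⟨y, hy, hrep⟩ := ih (fun i => a i.castSucc) b hc
      refine ⟨Fin.snoc y 0, ?_, fun x => ?_⟩
      · intro i
        refine Fin.lastCases ?_ ?_ i
        · simp
        · intro j; simpa using hy j
      · rw [Fin.sum_univ_castSucc]
        simp [Fin.snoc, hrep x]
    · push_neg at hc
      obtain ⟨w, hw, hbw⟩ := hc
      have hlast : a (Fin.last n) w < 0 := by
        by_contra hge
        push_neg at hge
        have : 0 ≤ b w := by
          refine h w (fun i => ?_)
          refine Fin.lastCases ?_ ?_ i
          · exact hge
          · intro j; exact hw j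
        linarith
      set c : ℝ := -1 / a (Fin.last n) w with hcdef
      have hcpos : 0 < c := by
        rw [hcdef]
        exact div_pos_of_neg_of_neg (by norm_num) hlast
      set wh : V := c • w with hwh
      have hlast' : a (Fin.last n) wh = -1 := by
        rw [hwh, map_smul, smul_eq_mul, hcdef]
        field_simp [hlast.ne]
      have hw' : ∀ i : Fin n, 0 ≤ a i.castSucc wh := fun i => by
        rw [hwh, map_smul, smul_eq_mul]
        exact mul_nonneg hcpos.le (hw i)
      have hbw' : b wh < 0 := by
        rw [hwh, map_smul, smul_eq_mul]
        exact mul_neg_of_pos_of_neg hcpos hbw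
      set T : V →ₗ[ℝ] V := LinearMap.id + (a (Fin.last n)).smulRight wh with hTdef
      have hT : ∀ x, T x = x + (a (Fin.last n) x) • wh := fun x => rfl
      have hTlast : ∀ x, a (Fin.last n) (T x) = 0 := by
        intro x
        rw [hT, map_add, map_smul, smul_eq_mul, hlast']
        ring
      have key : ∀ x, (∀ i : Fin n, 0 ≤ a i.castSucc (T x)) → 0 ≤ b (T x) := by
        intro x hx
        refine h (T x) (fun i => ?_)
        refine Fin.lastCases ?_ ?_ i
        · rw [hTlast]
        · exact hx
      obtain ⟨y, hy, hrep⟩ := ih (fun i => (a i.castSucc).comp T) (b.comp T)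
        (by intro x hx; exact key x (by simpa using hx))
      set yl : ℝ := (∑ i : Fin n, y i * a i.castSucc wh) - b wh with hyldef
      have hyl : 0 ≤ yl := by
        have hs : 0 ≤ ∑ i : Fin n, y i * a i.castSucc wh :=
          Finset.sum_nonneg fun i _ => mul_nonneg (hy i) (hw' i)
        rw [hyldef]; linarith
      refine ⟨Fin.snoc y yl, ?_, fun x => ?_⟩
      · intro i
        refine Fin.lastCases ?_ ?_ i
        · simpa using hyl
        · intro j; simpa using hy j
      · have h1 := hrep x
        simp only [LinearMap.comp_apply] at h1
        have hb : b (T x) = b x + a (Fin.last n) x * b wh := by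
          rw [hT, map_add, map_smul, smul_eq_mul]
        have ha : ∀ i : Fin n,
            a i.castSucc (T x) = a i.castSucc x + a (Fin.last n) x * a i.castSucc wh :=
          fun i => by rw [hT, map_add, map_smul, smul_eq_mul]
        rw [hb] at h1
        simp only [ha] at h1
        rw [Fin.sum_univ_castSucc]
        simp only [Fin.snoc_castSucc, Fin.snoc_last]
        have expand : ∑ i : Fin n, y i * (a i.castSucc x + a (Fin.last n) x * a i.castSucc wh)
            = (∑ i : Fin n, y i * a i.castSucc x)
              + a (Fin.last n) x * ∑ i : Fin n, y i * a i.castSucc wh := by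
          rw [Finset.mul_sum, ← Finset.sum_add_distrib]
          congr 1; ext i; ring
        rw [expand] at h1
        rw [hyldef]
        linarith [h1]

theorem myFarkasBartl_fintype {V : Type*} [AddCommGroup V] [Module ℝ V]
    {ι : Type*} [Fintype ι] (a : ι → V →ₗ[ℝ] ℝ) (b : V →ₗ[ℝ] ℝ)
    (h : ∀ x, (∀ i, 0 ≤ a i x) → 0 ≤ b x) :
    ∃ y : ι → ℝ, (∀ i, 0 ≤ y i) ∧ ∀ x, b x = ∑ i, y i * a i x := by
  classical
  obtain ⟨y, hy, hrep⟩ := myFarkasBartl (Fintype.card ι) (fun j => a ((Fintype.equivFin ι).symm j)) b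
    (by
      intro x hx
      refine h x (fun i => ?_)
      simpa using hx ((Fintype.equivFin ι) i))
  refine ⟨fun i => y ((Fintype.equivFin ι) i), fun i => hy _, fun x => ?_⟩
  rw [hrep x]
  exact (Fintype.sum_equiv (Fintype.equivFin ι) _ _ (fun i => by simp)).symm

/-- Affine Farkas: infeasibility form. -/
theorem farkas_infeasible {V : Type*} [AddCommGroup V] [Module ℝ V]
    {ι : Type*} [Fintype ι] (a : ι → V →ₗ[ℝ] ℝ) (b : ι → ℝ)
    (h : ¬ ∃ x, ∀ i, a i x ≤ b i) :
    ∃ y : ι → ℝ, (∀ i, 0 ≤ y i) ∧ (∀ x, ∑ i, y i * a i x = 0) ∧ ∑ i, y i * b i < 0 := by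
  classical
  -- work on V × ℝ with index Option ι
  set A : Option ι → (V × ℝ) →ₗ[ℝ] ℝ := fun o =>
    Option.rec (LinearMap.snd ℝ V ℝ)
      (fun i => b i • LinearMap.snd ℝ V ℝ - (a i).comp (LinearMap.fst ℝ V ℝ)) o with hA
  have key : ∀ p : V × ℝ, (∀ o, 0 ≤ A o p) → 0 ≤ (-(LinearMap.snd ℝ V ℝ) : (V × ℝ) →ₗ[ℝ] ℝ) p := by
    rintro ⟨x, s⟩ hp
    have hs : 0 ≤ s := hp none
    rcases eq_or_lt_of_le hs with hs0 | hs0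
    · simp [← hs0]
    · exfalso
      refine h ⟨s⁻¹ • x, fun i => ?_⟩
      have hi := hp (some i)
      simp only [hA, LinearMap.sub_apply, LinearMap.smul_apply, LinearMap.snd_apply,
        LinearMap.comp_apply, LinearMap.fst_apply, smul_eq_mul] at hi
      rw [map_smul, smul_eq_mul]
      rw [sub_nonneg] at hi
      rw [inv_mul_le_iff₀ hs0, mul_comm]
      exact hi
  obtain ⟨y, hy, hrep⟩ := myFarkasBartl_fintype A _ key
  refine ⟨fun i => y (some i), fun i => hy _, fun x => ?_, ?_⟩
  · have h1 := hrep (x, 0)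
    simp only [hA, Fintype.sum_option] at h1
    simp only [LinearMap.neg_apply, LinearMap.snd_apply, LinearMap.sub_apply,
      LinearMap.smul_apply, LinearMap.comp_apply, LinearMap.fst_apply, smul_eq_mul] at h1
    have : ∑ i : ι, y (some i) * (b i * 0 - a i x) = - ∑ i : ι, y (some i) * a i x := by
      rw [← Finset.sum_neg_distrib]; congr 1; ext i; ring
    rw [this] at h1
    linarith
  · have h1 := hrep (0, 1)
    simp only [hA, Fintype.sum_option] at h1
    simp only [LinearMap.neg_apply, LinearMap.snd_apply, LinearMap.sub_apply,
      LinearMap.smul_apply, LinearMap.comp_apply, LinearMap.fst_apply, smul_eq_mul,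
      map_zero] at h1
    have hyn : 0 ≤ y none := hy none
    have : ∑ i : ι, y (some i) * (b i * 1 - 0) = ∑ i : ι, y (some i) * b i := by
      congr 1; ext i; ring
    rw [this] at h1
    linarith

/-- Affine Farkas: valid-inequality form. -/
theorem farkas_valid {V : Type*} [AddCommGroup V] [Module ℝ V]
    {ι : Type*} [Fintype ι] (a : ι → V →ₗ[ℝ] ℝ) (b : ι → ℝ) (c : V →ₗ[ℝ] ℝ) (d : ℝ)
    (hfeas : ∃ x, ∀ i, a i x ≤ b i)
    (hvalid : ∀ x, (∀ i, a i x ≤ b i) → d ≤ c x) :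
    ∃ y : ι → ℝ, (∀ i, 0 ≤ y i) ∧ (∀ x, c x + ∑ i, y i * a i x = 0) := by
  classical
  obtain ⟨x₀, hx₀⟩ := hfeas
  set A : Option ι → (V × ℝ) →ₗ[ℝ] ℝ := fun o =>
    Option.rec (LinearMap.snd ℝ V ℝ)
      (fun i => b i • LinearMap.snd ℝ V ℝ - (a i).comp (LinearMap.fst ℝ V ℝ)) o with hA
  set B : (V × ℝ) →ₗ[ℝ] ℝ := c.comp (LinearMap.fst ℝ V ℝ) - d • LinearMap.snd ℝ V ℝ with hB
  have key : ∀ p : V × ℝ, (∀ o, 0 ≤ A o p) → 0 ≤ B p := by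
    rintro ⟨x, s⟩ hp
    have hs : 0 ≤ s := hp none
    have hi : ∀ i, a i x ≤ b i * s := by
      intro i
      have := hp (some i)
      simp only [hA, LinearMap.sub_apply, LinearMap.smul_apply, LinearMap.snd_apply,
        LinearMap.comp_apply, LinearMap.fst_apply, smul_eq_mul] at this
      linarith
    simp only [hB, LinearMap.sub_apply, LinearMap.smul_apply, LinearMap.snd_apply,
      LinearMap.comp_apply, LinearMap.fst_apply, smul_eq_mul]
    rcases eq_or_lt_of_le hs with hs0 | hs0
    · -- s = 0 : a i x ≤ 0, show 0 ≤ c x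
      have hcx : 0 ≤ c x := by
        by_contra hcx
        push_neg at hcx
        -- choose t large
        set t : ℝ := (c x₀ - d) / (- c x) + 1 with ht
        have hct : 0 < - c x := by linarith
        have htpos : 0 ≤ t := by
          have hnum : 0 ≤ c x₀ - d := by linarith [hvalid x₀ hx₀]
          have hdiv : 0 ≤ (c x₀ - d) / (- c x) := div_nonneg hnum hct.le
          rw [ht]; linarith
        have hfeast : ∀ i, a i (x₀ + t • x) ≤ b i := by
          intro i
          rw [map_add, map_smul, smul_eq_mul]
          have h1 := hi i
          rw [← hs0] at h1
          have := mul_nonpos_of_nonneg_of_nonpos htpos (by linarith : a i x ≤ 0)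
          have h2 := hx₀ i
          linarith
        have hv := hvalid _ hfeast
        rw [map_add, map_smul, smul_eq_mul] at hv
        have : t * c x = -(c x₀ - d) - (- c x) := by
          rw [ht]
          field_simp
          rw [mul_add, mul_neg, mul_div_assoc', mul_div_right_comm, div_self hcx.ne]
          ring
        rw [this] at hv
        linarith
      rw [← hs0]
      linarith
    · have : ∀ i, a i (s⁻¹ • x) ≤ b i := by
        intro i
        rw [map_smul, smul_eq_mul, inv_mul_le_iff₀ hs0, mul_comm]
        exact hi i
      have hv := hvalid _ this
      rw [map_smul, smul_eq_mul] at hv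
      rw [le_inv_mul_iff₀ hs0, mul_comm] at hv
      linarith
  obtain ⟨y, hy, hrep⟩ := myFarkasBartl_fintype A B key
  refine ⟨fun i => y (some i), fun i => hy _, fun x => ?_⟩
  have h1 := hrep (x, 0)
  simp only [hA, hB, Fintype.sum_option] at h1
  simp only [LinearMap.sub_apply, LinearMap.smul_apply, LinearMap.snd_apply,
    LinearMap.comp_apply, LinearMap.fst_apply, smul_eq_mul] at h1
  have : ∑ i : ι, y (some i) * (b i * 0 - a i x) = - ∑ i : ι, y (some i) * a i x := by
    rw [← Finset.sum_neg_distrib]; congr 1; ext i; ring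
  rw [this] at h1
  linarith


theorem mem_convexHull_range_iff {E : Type*} [AddCommGroup E] [Module ℝ E]
    {ι : Type*} [Fintype ι] [DecidableEq ι] (v : ι → E) (φ : E) :
    φ ∈ convexHull ℝ (Set.range v) ↔
      ∃ l : ι → ℝ, (∀ k, 0 ≤ l k) ∧ ∑ k, l k = 1 ∧ φ = ∑ k, l k • v k := by
  constructor
  · intro hφ
    set R : Set E := {x | ∃ l : ι → ℝ, (∀ k, 0 ≤ l k) ∧ ∑ k, l k = 1 ∧ x = ∑ k, l k • v k}
      with hR
    have hsub : Set.range v ⊆ R := by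
      rintro _ ⟨k₀, rfl⟩
      refine ⟨fun k => if k = k₀ then 1 else 0, fun k => by positivity, by simp, by simp⟩
    have hconv : Convex ℝ R := by
      rintro x ⟨lx, hlx, hlxs, rfl⟩ y' ⟨ly, hly, hlys, rfl⟩ a b ha hb hab
      refine ⟨fun k => a * lx k + b * ly k,
        fun k => by have := hlx k; have := hly k; positivity, ?_, ?_⟩
      · rw [Finset.sum_add_distrib, ← Finset.mul_sum, ← Finset.mul_sum, hlxs, hlys]
        simpa using hab
      · rw [Finset.smul_sum, Finset.smul_sum, ← Finset.sum_add_distrib]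
        congr 1; ext k
        rw [add_smul, mul_smul, mul_smul]
    exact convexHull_min hsub hconv hφ
  · rintro ⟨l, hl, hls, rfl⟩
    have := Finset.centerMass_mem_convexHull (Finset.univ : Finset ι)
      (fun k _ => hl k) (by rw [hls]; norm_num)
      (fun k _ => (Set.mem_range_self k : v k ∈ Set.range v))
    rwa [Finset.centerMass_eq_of_sum_1 _ _ hls] at this

theorem mem_coneGen_range_iff {E : Type*} [AddCommGroup E] [Module ℝ E]
    {q : ℕ} (us : Fin q → E) (φ : E) :
    φ ∈ coneGen (Set.range us) ↔
      ∃ μ : Fin q → ℝ, (∀ j, 0 ≤ μ j) ∧ φ = ∑ j, μ j • us j := by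
  classical
  constructor
  · rintro ⟨n, c, w, hc, hw, rfl⟩
    choose h hh using hw
    refine ⟨fun j => ∑ i ∈ Finset.univ.filter (fun i => h i = j), c i,
      fun j => Finset.sum_nonneg fun i _ => hc i, ?_⟩
    have : ∀ j : Fin q,
        (∑ i ∈ Finset.univ.filter (fun i => h i = j), c i) • us j
          = ∑ i ∈ Finset.univ.filter (fun i => h i = j), c i • w i := by
      intro j
      rw [Finset.sum_smul]
      refine Finset.sum_congr rfl fun i hi => ?_
      rw [Finset.mem_filter] at hi
      rw [← hi.2, hh i]
    rw [Finset.sum_congr rfl fun j _ => this j]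
    exact (Finset.sum_fiberwise Finset.univ h (fun i => c i • w i)).symm
  · rintro ⟨μ, hμ, rfl⟩
    exact ⟨q, μ, us, hμ, fun i => Set.mem_range_self i, rfl⟩




/-- With `D` nonempty generalized polyhedral convex given by `A, y, xs, α`, and `f` proper
generalized polyhedral convex with `dom f` given by `B, z, us, γs` and
`f = max {⟨vₖ, ·⟩ + βₖ}` on `dom f`: if `D ∩ dom f ≠ ∅` and `dom f ⊆ D`, then `(P)` has a
solution iff `0 ∈ conv {vₖ} + cone {usⱼ} + (ker B)^⊥`. -/
theorem existence_criterion_domf_subset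
    {X Y Z : Type*}
    [AddCommGroup X] [Module ℝ X] [TopologicalSpace X] [IsTopologicalAddGroup X]
    [ContinuousSMul ℝ X] [LocallyConvexSpace ℝ X] [T2Space X]
    [AddCommGroup Y] [Module ℝ Y] [TopologicalSpace Y] [IsTopologicalAddGroup Y]
    [ContinuousSMul ℝ Y] [LocallyConvexSpace ℝ Y] [T2Space Y]
    [AddCommGroup Z] [Module ℝ Z] [TopologicalSpace Z] [IsTopologicalAddGroup Z]
    [ContinuousSMul ℝ Z] [LocallyConvexSpace ℝ Z] [T2Space Z]
    (A : X →L[ℝ] Y) (y : Y) (p : ℕ) (xs : Fin p → X →L[ℝ] ℝ) (α : Fin p → ℝ)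
    (B : X →L[ℝ] Z) (z : Z) (q : ℕ) (us : Fin q → X →L[ℝ] ℝ) (γs : Fin q → ℝ)
    (m : ℕ) (v : Fin (m + 1) → X →L[ℝ] ℝ) (β : Fin (m + 1) → ℝ)
    (D : Set X) (hD : D = {x | A x = y ∧ ∀ i, xs i x ≤ α i})
    (domf : Set X) (hdomf : domf = {x | B x = z ∧ ∀ j, us j x ≤ γs j})
    (hdomne : domf.Nonempty)
    (f : X → EReal)
    (hf : ∀ x ∈ domf,
      f x = ((Finset.univ.sup' Finset.univ_nonempty fun k => v k x + β k : ℝ) : EReal))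
    (hf' : ∀ x ∉ domf, f x = ⊤)
    (hne : (D ∩ domf).Nonempty)
    (hsub : domf ⊆ D) :
    (∃ u ∈ D, f u ≠ ⊤ ∧ f u ≠ ⊥ ∧ ∀ x ∈ D, f u ≤ f x) ↔
      (0 : X →L[ℝ] ℝ) ∈
        convexHull ℝ (Set.range v) + coneGen (Set.range us) +
          {φ : X →L[ℝ] ℝ | ∀ u : X, B u = 0 → φ u = 0} := by
  classical
  -- the real-valued objective
  set g : X → ℝ := fun x => Finset.univ.sup' Finset.univ_nonempty fun k => v k x + β k
    with hgdef
  have hg_le : ∀ (x : X) (k : Fin (m + 1)), v k x + β k ≤ g x := by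
    intro x k
    rw [hgdef]
    exact Finset.le_sup' (fun k => v k x + β k) (Finset.mem_univ k)
  have hg_iff : ∀ (x : X) (t : ℝ), g x ≤ t ↔ ∀ k, v k x + β k ≤ t := by
    intro x t
    rw [hgdef]
    simp [Finset.sup'_le_iff]
  have hfg : ∀ x ∈ domf, f x = ((g x : ℝ) : EReal) := hf
  have hmemf : ∀ x, x ∈ domf ↔ B x = z ∧ ∀ j, us j x ≤ γs j := by
    rw [hdomf]; intro x; rfl
  obtain ⟨x₀, hx₀D, hx₀⟩ := hne
  have hx₀m := (hmemf x₀).mp hx₀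
  -- Step 1 : solution of (P) iff minimizer of g over domf
  have step1 : (∃ u ∈ D, f u ≠ ⊤ ∧ f u ≠ ⊥ ∧ ∀ x ∈ D, f u ≤ f x) ↔
      (∃ u ∈ domf, ∀ x ∈ domf, g u ≤ g x) := by
    constructor
    · rintro ⟨u, huD, htop, -, hmin⟩
      have huf : u ∈ domf := by
        by_contra hc; exact htop (hf' u hc)
      refine ⟨u, huf, fun x hx => ?_⟩
      have h1 := hmin x (hsub hx)
      rw [hfg u huf, hfg x hx] at h1
      exact_mod_cast h1
    · rintro ⟨u, huf, hmin⟩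
      refine ⟨u, hsub huf, by rw [hfg u huf]; exact EReal.coe_ne_top _,
        by rw [hfg u huf]; exact EReal.coe_ne_bot _, fun x hxD => ?_⟩
      by_cases hx : x ∈ domf
      · rw [hfg u huf, hfg x hx]
        exact_mod_cast hmin x hx
      · rw [hf' x hx]; exact le_top
  rw [step1]
  -- Certificate form of the dual condition
  -- Step 2 : dual condition iff certificate
  have step2 : ((0 : X →L[ℝ] ℝ) ∈
      convexHull ℝ (Set.range v) + coneGen (Set.range us) +
        {φ : X →L[ℝ] ℝ | ∀ u : X, B u = 0 → φ u = 0}) ↔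
      (∃ (l : Fin (m + 1) → ℝ) (μ : Fin q → ℝ), (∀ k, 0 ≤ l k) ∧ (∑ k, l k = 1) ∧
        (∀ j, 0 ≤ μ j) ∧
        ∀ w : X, B w = 0 → (∑ k, l k * v k w) + (∑ j, μ j * us j w) = 0) := by
    constructor
    · intro h0
      rw [Set.mem_add] at h0
      obtain ⟨ab, hab, cφ, hcφ, hsum0⟩ := h0
      rw [Set.mem_add] at hab
      obtain ⟨aφ, haφ, bφ, hbφ, rfl⟩ := hab
      rw [mem_convexHull_range_iff] at haφ
      obtain ⟨l, hl, hls, rfl⟩ := haφ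
      rw [mem_coneGen_range_iff] at hbφ
      obtain ⟨μ, hμ, rfl⟩ := hbφ
      refine ⟨l, μ, hl, hls, hμ, fun w hw => ?_⟩
      have h1 : cφ w = 0 := hcφ w hw
      have h2 := congrArg (fun ψ : X →L[ℝ] ℝ => ψ w) hsum0
      simp only [ContinuousLinearMap.add_apply, ContinuousLinearMap.zero_apply,
        ContinuousLinearMap.sum_apply, ContinuousLinearMap.smul_apply, smul_eq_mul] at h2
      rw [h1] at h2
      linarith
    · rintro ⟨l, μ, hl, hls, hμ, hker⟩
      have ha : (∑ k, l k • v k) ∈ convexHull ℝ (Set.range v) :=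
        (mem_convexHull_range_iff v _).mpr ⟨l, hl, hls, rfl⟩
      have hb : (∑ j, μ j • us j) ∈ coneGen (Set.range us) :=
        (mem_coneGen_range_iff us _).mpr ⟨μ, hμ, rfl⟩
      have hc : (-((∑ k, l k • v k) + (∑ j, μ j • us j))) ∈
          {φ : X →L[ℝ] ℝ | ∀ u : X, B u = 0 → φ u = 0} := by
        intro w hw
        have h3 := hker w hw
        simp only [ContinuousLinearMap.neg_apply, ContinuousLinearMap.add_apply,
          ContinuousLinearMap.sum_apply, ContinuousLinearMap.smul_apply, smul_eq_mul]
        linarith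
      have h4 := Set.add_mem_add (Set.add_mem_add ha hb) hc
      rwa [add_neg_cancel] at h4
  rw [step2]
  -- weak duality
  have wd : ∀ (l : Fin (m + 1) → ℝ) (μ : Fin q → ℝ), (∀ k, 0 ≤ l k) → (∑ k, l k = 1) →
      (∀ j, 0 ≤ μ j) →
      (∀ w : X, B w = 0 → (∑ k, l k * v k w) + (∑ j, μ j * us j w) = 0) →
      ∀ x ∈ domf,
        (∑ k, l k * β k) + (∑ k, l k * v k x₀) - (∑ j, μ j * γs j) + (∑ j, μ j * us j x₀)
          ≤ g x := by
    intro l μ hl hls hμ hker x hx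
    obtain ⟨hxB, hxc⟩ := (hmemf x).mp hx
    have h1 : ∑ k, l k * (v k x + β k) ≤ g x := by
      calc ∑ k, l k * (v k x + β k) ≤ ∑ k, l k * g x :=
            Finset.sum_le_sum fun k _ => mul_le_mul_of_nonneg_left (hg_le x k) (hl k)
        _ = g x := by rw [← Finset.sum_mul, hls, one_mul]
    have h2 := hker (x - x₀) (by rw [map_sub, hxB, hx₀m.1, sub_self])
    simp only [map_sub, mul_sub, Finset.sum_sub_distrib] at h2
    have h3 : ∑ j, μ j * us j x ≤ ∑ j, μ j * γs j :=
      Finset.sum_le_sum fun j _ => mul_le_mul_of_nonneg_left (hxc j) (hμ j)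
    have h4 : ∑ k, l k * (v k x + β k) = ∑ k, l k * v k x + ∑ k, l k * β k := by
      simp only [mul_add, Finset.sum_add_distrib]
    linarith
  -- Step 3 : the core equivalence
  constructor
  · -- minimizer gives certificate, via the valid-inequality Farkas lemma
    rintro ⟨u, huf, hmin⟩
    obtain ⟨huB, huc⟩ := (hmemf u).mp huf
    set K : Submodule ℝ X := LinearMap.ker (B : X →ₗ[ℝ] Z) with hKdef
    have hmemK : ∀ w : ↥K, B ↑w = 0 := fun w => LinearMap.mem_ker.mp w.2
    set aa : (Fin q ⊕ Fin (m + 1)) → (↥K × ℝ) →ₗ[ℝ] ℝ :=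
      Sum.elim
        (fun j => ((us j : X →ₗ[ℝ] ℝ).comp K.subtype).comp (LinearMap.fst ℝ ↥K ℝ))
        (fun k => ((v k : X →ₗ[ℝ] ℝ).comp K.subtype).comp (LinearMap.fst ℝ ↥K ℝ)
          - LinearMap.snd ℝ ↥K ℝ) with haadef
    set bb : (Fin q ⊕ Fin (m + 1)) → ℝ :=
      Sum.elim (fun j => γs j - us j u) (fun k => -β k - v k u) with hbbdef
    have haa1 : ∀ (j : Fin q) (pp : ↥K × ℝ), aa (Sum.inl j) pp = us j ↑pp.1 := fun _ _ => rfl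
    have haa2 : ∀ (k : Fin (m + 1)) (pp : ↥K × ℝ),
        aa (Sum.inr k) pp = v k ↑pp.1 - pp.2 := fun _ _ => rfl
    have hbb1 : ∀ j : Fin q, bb (Sum.inl j) = γs j - us j u := fun _ => rfl
    have hbb2 : ∀ k : Fin (m + 1), bb (Sum.inr k) = -β k - v k u := fun _ => rfl
    have hfeas : ∃ pp : ↥K × ℝ, ∀ i, aa i pp ≤ bb i := by
      refine ⟨((0 : ↥K), g u), ?_⟩
      rintro (j | k)
      · rw [haa1, hbb1]
        simp only [ZeroMemClass.coe_zero, map_zero]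
        have := huc j
        linarith
      · rw [haa2, hbb2]
        simp only [ZeroMemClass.coe_zero, map_zero]
        have := hg_le u k
        linarith
    have hvalid : ∀ pp : ↥K × ℝ, (∀ i, aa i pp ≤ bb i) → g u ≤ (LinearMap.snd ℝ ↥K ℝ) pp := by
      rintro ⟨w, t⟩ hcon
      have hxdom : u + ↑w ∈ domf := by
        refine (hmemf _).mpr ⟨by rw [map_add, huB, hmemK w, add_zero], fun j => ?_⟩
        have h5 := hcon (Sum.inl j)
        rw [haa1, hbb1] at h5
        rw [map_add]
        dsimp at h5 ⊢
        linarith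
      have h5 := hmin _ hxdom
      have h6 : g (u + ↑w) ≤ t := by
        refine (hg_iff _ _).mpr fun k => ?_
        have h7 := hcon (Sum.inr k)
        rw [haa2, hbb2] at h7
        rw [map_add]
        dsimp at h7 ⊢
        linarith
      dsimp
      linarith
    obtain ⟨yy, hyy, hrep⟩ := farkas_valid aa bb (LinearMap.snd ℝ ↥K ℝ) (g u) hfeas hvalid
    refine ⟨fun k => yy (Sum.inr k), fun j => yy (Sum.inl j), fun k => hyy _, ?_, fun j => hyy _, ?_⟩
    · have h7 := hrep ((0 : ↥K), (1 : ℝ))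
      rw [Fintype.sum_sum_type] at h7
      simp only [haa1, haa2] at h7
      simp only [ZeroMemClass.coe_zero, map_zero, LinearMap.snd_apply] at h7
      have e1 : ∑ k : Fin (m + 1), yy (Sum.inr k) * (0 - 1)
          = - ∑ k : Fin (m + 1), yy (Sum.inr k) := by
        rw [← Finset.sum_neg_distrib]
        exact Finset.sum_congr rfl fun k _ => by ring
      rw [e1] at h7
      simp only [mul_zero, Finset.sum_const_zero] at h7
      linarith
    · intro w hw
      have h8 := hrep ((⟨w, LinearMap.mem_ker.mpr hw⟩ : ↥K), (0 : ℝ))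
      rw [Fintype.sum_sum_type] at h8
      simp only [haa1, haa2] at h8
      simp only [LinearMap.snd_apply] at h8
      have hco : (((⟨w, LinearMap.mem_ker.mpr hw⟩ : ↥K)) : X) = w := rfl
      try rw [hco] at h8
      simp only [sub_zero] at h8
      linarith
  · -- certificate gives a minimizer, via the infeasibility Farkas lemma
    rintro ⟨l, μ, hl, hls, hμ, hker⟩
    have hwd := wd l μ hl hls hμ hker
    set tstar := sInf (g '' domf) with htsdef
    have hbdd : BddBelow (g '' domf) := ⟨_, by rintro r ⟨x, hx, rfl⟩; exact hwd x hx⟩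
    have himgne : (g '' domf).Nonempty := ⟨g x₀, ⟨x₀, hx₀, rfl⟩⟩
    have hts_le : ∀ x ∈ domf, tstar ≤ g x := fun x hx => csInf_le hbdd ⟨x, hx, rfl⟩
    set K : Submodule ℝ X := LinearMap.ker (B : X →ₗ[ℝ] Z) with hKdef
    have hmemK : ∀ w : ↥K, B ↑w = 0 := fun w => LinearMap.mem_ker.mp w.2
    by_cases hfeas : ∃ w : ↥K,
        (∀ j, us j ↑w ≤ γs j - us j x₀) ∧ (∀ k, v k ↑w ≤ tstar - β k - v k x₀)
    · obtain ⟨w, hw1, hw2⟩ := hfeas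
      have hxdom : x₀ + ↑w ∈ domf := by
        refine (hmemf _).mpr ⟨by rw [map_add, hx₀m.1, hmemK w, add_zero], fun j => ?_⟩
        rw [map_add]
        have := hw1 j
        linarith
      refine ⟨x₀ + ↑w, hxdom, fun x hx => ?_⟩
      have h9 : g (x₀ + ↑w) ≤ tstar := by
        refine (hg_iff _ _).mpr fun k => ?_
        rw [map_add]
        have := hw2 k
        linarith
      exact le_trans h9 (hts_le x hx)
    · exfalso
      set aa : (Fin q ⊕ Fin (m + 1)) → ↥K →ₗ[ℝ] ℝ :=
        Sum.elim (fun j => (us j : X →ₗ[ℝ] ℝ).comp K.subtype)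
          (fun k => (v k : X →ₗ[ℝ] ℝ).comp K.subtype) with haadef
      set bb : (Fin q ⊕ Fin (m + 1)) → ℝ :=
        Sum.elim (fun j => γs j - us j x₀) (fun k => tstar - β k - v k x₀) with hbbdef
      have haa1 : ∀ (j : Fin q) (w : ↥K), aa (Sum.inl j) w = us j ↑w := fun _ _ => rfl
      have haa2 : ∀ (k : Fin (m + 1)) (w : ↥K), aa (Sum.inr k) w = v k ↑w := fun _ _ => rfl
      have hinf : ¬ ∃ w : ↥K, ∀ i, aa i w ≤ bb i := by
        rintro ⟨w, hw⟩
        refine hfeas ⟨w, fun j => ?_, fun k => ?_⟩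
        · have := hw (Sum.inl j); rwa [haa1] at this
        · have := hw (Sum.inr k); rwa [haa2] at this
      obtain ⟨yy, hyy, hZero, hNeg⟩ := farkas_infeasible aa bb hinf
      rw [Fintype.sum_sum_type] at hNeg
      simp only [hbbdef, Sum.elim_inl, Sum.elim_inr] at hNeg
      set l' : Fin (m + 1) → ℝ := fun k => yy (Sum.inr k) with hl'def
      set μ' : Fin q → ℝ := fun j => yy (Sum.inl j) with hμ'def
      simp only [show ∀ k, yy (Sum.inr k) = l' k from fun _ => rfl,
        show ∀ j, yy (Sum.inl j) = μ' j from fun _ => rfl] at hNeg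
      have hZero' : ∀ w : X, B w = 0 →
          (∑ j, μ' j * us j w) + (∑ k, l' k * v k w) = 0 := by
        intro w hw
        have h10 := hZero (⟨w, LinearMap.mem_ker.mpr hw⟩ : ↥K)
        rw [Fintype.sum_sum_type] at h10
        simp only [haa1, haa2] at h10
        have hco : (((⟨w, LinearMap.mem_ker.mpr hw⟩ : ↥K)) : X) = w := rfl
        try rw [hco] at h10
        linarith
      set s := ∑ k, l' k with hsdef
      have hs0 : 0 ≤ s := Finset.sum_nonneg fun k _ => hyy _
      have hNeg' : (∑ j, μ' j * γs j) - (∑ j, μ' j * us j x₀)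
          + (s * tstar - (∑ k, l' k * β k) - (∑ k, l' k * v k x₀)) < 0 := by
        have e2 : ∑ j, μ' j * (γs j - us j x₀)
            = (∑ j, μ' j * γs j) - (∑ j, μ' j * us j x₀) := by
          simp only [mul_sub, Finset.sum_sub_distrib]
        have e3 : ∑ k, l' k * (tstar - β k - v k x₀)
            = s * tstar - (∑ k, l' k * β k) - (∑ k, l' k * v k x₀) := by
          simp only [mul_sub, Finset.sum_sub_distrib, ← Finset.sum_mul]
          try rw [← hsdef]
          try rw [mul_comm]
          try ring
        rw [e2, e3] at hNeg
        linarith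
      rcases eq_or_lt_of_le hs0 with hseq | hspos
      · have hz : ∀ k, l' k = 0 := by
          intro k
          have h11 := (Finset.sum_eq_zero_iff_of_nonneg
            (fun k _ => (hyy (Sum.inr k) : (0:ℝ) ≤ l' k))).mp hseq.symm
          exact h11 k (Finset.mem_univ k)
        have hz2 : ∑ k, l' k * β k = 0 := Finset.sum_eq_zero fun k _ => by rw [hz k]; ring
        have hz3 : ∑ k, l' k * v k x₀ = 0 := Finset.sum_eq_zero fun k _ => by rw [hz k]; ring
        have hpos : 0 ≤ (∑ j, μ' j * γs j) - (∑ j, μ' j * us j x₀) := by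
          rw [← Finset.sum_sub_distrib]
          refine Finset.sum_nonneg fun j _ => ?_
          rw [← mul_sub]
          exact mul_nonneg (hyy _) (by have := hx₀m.2 j; linarith)
        rw [← hseq] at hNeg'
        linarith
      · -- normalize the multipliers
        have hsne : s ≠ 0 := ne_of_gt hspos
        have ediv1 : ∀ (t : Fin (m + 1) → ℝ), ∑ k, l' k / s * t k = (∑ k, l' k * t k) / s := by
          intro t
          rw [Finset.sum_div]
          exact Finset.sum_congr rfl fun k _ => by ring
        have ediv2 : ∀ (t : Fin q → ℝ), ∑ j, μ' j / s * t j = (∑ j, μ' j * t j) / s := by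
          intro t
          rw [Finset.sum_div]
          exact Finset.sum_congr rfl fun j _ => by ring
        have hcert : ∀ w : X, B w = 0 →
            (∑ k, (l' k / s) * v k w) + (∑ j, (μ' j / s) * us j w) = 0 := by
          intro w hw
          rw [ediv1 (fun k => v k w), ediv2 (fun j => us j w), ← add_div]
          have h12 := hZero' w hw
          rw [show (∑ k, l' k * v k w) + (∑ j, μ' j * us j w) = 0 by linarith]
          simp
        have hsum1 : ∑ k, l' k / s = 1 := by
          rw [← Finset.sum_div, ← hsdef, div_self hsne]
        have hwd2 := wd (fun k => l' k / s) (fun j => μ' j / s)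
          (fun k => div_nonneg (hyy _) hs0) hsum1 (fun j => div_nonneg (hyy _) hs0) hcert
        have hts_ge : (∑ k, l' k / s * β k) + (∑ k, l' k / s * v k x₀)
            - (∑ j, μ' j / s * γs j) + (∑ j, μ' j / s * us j x₀) ≤ tstar := by
          refine le_csInf himgne ?_
          rintro r ⟨x, hx, rfl⟩
          exact hwd2 x hx
        rw [ediv1 β, ediv1 (fun k => v k x₀), ediv2 γs, ediv2 (fun j => us j x₀),
          ← add_div, div_sub_div_same, ← add_div] at hts_ge
        rw [div_le_iff₀ hspos] at hts_ge
        nlinarith [hts_ge, hNeg', hspos]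
end

section
/- Suppose D = X and f is finite everywhere on X with f(x) = max{⟨v_k*, x⟩ + β_k : k = 1,…,m} for all x ∈ X. Then there exists x̄ ∈ X with f(x̄) ≤ f(x) for all x ∈ X if and only if 0 ∈ conv{v_k* : k = 1,…,m}. -/
open Module Finset
open scoped RealInnerProductSpace

section Aux

variable {E : Type} [NormedAddCommGroup E] [InnerProductSpace ℝ E]
variable {ι : Type} [Fintype ι] [Nonempty ι]

/-- The pointwise max of finitely many affine functionals on an inner product space. -/
private noncomputable def hmax (a : ι → E) (β : ι → ℝ) (y : E) : ℝ :=
  Finset.univ.sup' Finset.univ_nonempty fun k => ⟪a k, y⟫ + β k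

private lemma hmax_le {a : ι → E} {β : ι → ℝ} {y : E} {c : ℝ}
    (h : ∀ k, ⟪a k, y⟫ + β k ≤ c) : hmax a β y ≤ c := by
  unfold hmax; exact Finset.sup'_le _ _ fun k _ => h k

private lemma le_hmax (a : ι → E) (β : ι → ℝ) (y : E) (k : ι) :
    ⟪a k, y⟫ + β k ≤ hmax a β y := by
  unfold hmax; exact Finset.le_sup' (fun k => ⟪a k, y⟫ + β k) (Finset.mem_univ k)

private lemma hmax_not_bddBelow (a : ι → E) (β : ι → ℝ) (w : E)
    (hw : ∀ k, ⟪a k, w⟫ < 0) : ¬ BddBelow (Set.range (hmax a β)) := by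
  rintro ⟨B, hB⟩
  have hB' : ∀ y, B ≤ hmax a β y := fun y => hB (Set.mem_range_self y)
  obtain ⟨k₀, -, hk₀⟩ := Finset.exists_mem_eq_sup' (Finset.univ_nonempty (α := ι))
    fun k => ⟪a k, w⟫
  set c : ℝ := Finset.univ.sup' Finset.univ_nonempty fun k => ⟪a k, w⟫ with hcdef
  have hc : c < 0 := hk₀ ▸ hw k₀
  set b : ℝ := Finset.univ.sup' Finset.univ_nonempty β with hbdef
  have h0b : hmax a β 0 ≤ b := hmax_le fun k => by
    simp only [inner_zero_right, zero_add]
    exact Finset.le_sup' β (Finset.mem_univ k)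
  have hBb : B ≤ b := le_trans (hB' 0) h0b
  set t : ℝ := (B - b - 1) / c with htdef
  have ht : 0 < t := div_pos_of_neg_of_neg (by linarith) hc
  have htc : t * c = B - b - 1 := div_mul_cancel₀ _ (ne_of_lt hc)
  have hle : hmax a β (t • w) ≤ t * c + b := hmax_le fun k => by
    have h1 : ⟪a k, t • w⟫ = t * ⟪a k, w⟫ := real_inner_smul_right _ _ _
    have h2 : t * ⟪a k, w⟫ ≤ t * c :=
      mul_le_mul_of_nonneg_left (Finset.le_sup' (fun k => ⟪a k, w⟫) (Finset.mem_univ k)) ht.le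
    have h3 : β k ≤ b := Finset.le_sup' β (Finset.mem_univ k)
    rw [h1]; linarith
  have := hB' (t • w)
  linarith

private lemma zero_mem_of_bddBelow [FiniteDimensional ℝ E] (a : ι → E) (β : ι → ℝ)
    (hbdd : BddBelow (Set.range (hmax a β))) : (0 : E) ∈ convexHull ℝ (Set.range a) := by
  by_contra h0
  obtain ⟨f, u, hfu, hu⟩ := _root_.geometric_hahn_banach_closed_point (convex_convexHull ℝ _)
    ((Set.finite_range a).isCompact_convexHull ℝ |>.isClosed) h0
  have hu0 : u < 0 := by simpa using hu
  refine hmax_not_bddBelow a β ((InnerProductSpace.toDual ℝ E).symm f) (fun k => ?_) hbdd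
  have h1 : ⟪a k, (InnerProductSpace.toDual ℝ E).symm f⟫ = f (a k) := by
    rw [real_inner_comm]; exact InnerProductSpace.toDual_symm_apply
  rw [h1]
  exact lt_trans (hfu _ (subset_convexHull ℝ _ ⟨k, rfl⟩)) hu0

private lemma hmax_continuous (a : ι → E) (β : ι → ℝ) : Continuous (hmax a β) := by
  unfold hmax
  exact Continuous.finset_sup'_apply (f := fun k y => ⟪a k, y⟫ + β k) Finset.univ_nonempty
    fun k _ => (continuous_const.inner continuous_id).add continuous_const

private lemma key_min : ∀ (n : ℕ) (E : Type) [NormedAddCommGroup E] [InnerProductSpace ℝ E]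
    [FiniteDimensional ℝ E], finrank ℝ E = n →
    ∀ (ι : Type) [Fintype ι] [Nonempty ι] (a : ι → E) (β : ι → ℝ),
      BddBelow (Set.range (hmax a β)) → ∃ ybar : E, ∀ y : E, hmax a β ybar ≤ hmax a β y := by
  intro n
  induction n with
  | zero =>
    intro E _ _ _ hE ι _ _ a β _
    have : Subsingleton E := finrank_zero_iff.mp hE
    exact ⟨0, fun y => le_of_eq (congrArg (hmax a β) (Subsingleton.elim 0 y))⟩
  | succ n IH =>
    intro E _ _ _ hE ι _ _ a β hbdd
    have h0C : (0 : E) ∈ convexHull ℝ (Set.range a) := zero_mem_of_bddBelow a β hbdd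
    have hCconv : Convex ℝ (convexHull ℝ (Set.range a)) := convex_convexHull ℝ _
    by_cases hint : (0 : E) ∈ interior (convexHull ℝ (Set.range a))
    · -- coercive case : minimize over a big closed ball
      obtain ⟨ε, hε, hball⟩ := Metric.mem_nhds_iff.mp (mem_interior_iff_mem_nhds.mp hint)
      set c : ℝ := Finset.univ.inf' Finset.univ_nonempty β with hcdef
      have hcoer : ∀ y : E, ε / 2 * ‖y‖ + c ≤ hmax a β y := by
        intro y
        rcases eq_or_ne y 0 with rfl | hy
        · simp only [norm_zero, mul_zero, zero_add]
          obtain ⟨k⟩ := ‹Nonempty ι›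
          calc c ≤ β k := Finset.inf'_le β (Finset.mem_univ k)
            _ = ⟪a k, (0:E)⟫ + β k := by rw [inner_zero_right, zero_add]
            _ ≤ _ := le_hmax a β 0 k
        · set z : E := (ε / 2 * ‖y‖⁻¹) • y with hzdef
          have hz : z ∈ convexHull ℝ (Set.range a) := by
            apply hball
            rw [Metric.mem_ball, dist_zero_right, hzdef, norm_smul]
            have h1 : ‖ε / 2 * ‖y‖⁻¹‖ = ε / 2 * ‖y‖⁻¹ :=
              abs_of_pos (mul_pos (half_pos hε) (inv_pos.mpr (norm_pos_iff.mpr hy)))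
            rw [h1, mul_assoc, inv_mul_cancel₀ (norm_ne_zero_iff.mpr hy), mul_one]
            linarith
          obtain ⟨κ, _, w, g, hw0, hw1, hg, hsum⟩ := mem_convexHull_iff_exists_fintype.mp hz
          obtain ⟨k₁, -, hk₁⟩ := Finset.exists_mem_eq_sup' (Finset.univ_nonempty (α := ι))
            fun k => ⟪a k, y⟫
          set M : ℝ := Finset.univ.sup' Finset.univ_nonempty fun k => ⟪a k, y⟫ with hMdef
          have hzy : ⟪z, y⟫ ≤ M := by
            rw [← hsum, sum_inner]
            calc (∑ i, ⟪w i • g i, y⟫) = ∑ i, w i * ⟪g i, y⟫ := by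
                  simp [real_inner_smul_left]
              _ ≤ ∑ i, w i * M := by
                  apply Finset.sum_le_sum
                  intro i _
                  apply mul_le_mul_of_nonneg_left _ (hw0 i)
                  obtain ⟨k, hk⟩ := hg i
                  rw [← hk]
                  exact Finset.le_sup' (fun k => ⟪a k, y⟫) (Finset.mem_univ k)
              _ = M := by rw [← Finset.sum_mul, hw1, one_mul]
          have hzy' : ⟪z, y⟫ = ε / 2 * ‖y‖ := by
            have hny : ‖y‖ ≠ 0 := norm_ne_zero_iff.mpr hy
            rw [hzdef, real_inner_smul_left, real_inner_self_eq_norm_mul_norm]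
            field_simp
          have hMy : ε / 2 * ‖y‖ ≤ M := hzy' ▸ hzy
          calc ε / 2 * ‖y‖ + c ≤ M + c := by linarith
            _ = ⟪a k₁, y⟫ + c := by rw [hk₁]
            _ ≤ ⟪a k₁, y⟫ + β k₁ := by
                have := Finset.inf'_le β (Finset.mem_univ k₁); linarith
            _ ≤ _ := le_hmax a β y k₁
      set R : ℝ := (max 0 (hmax a β 0 - c)) * (2 / ε) + 1 with hRdef
      have hR0 : 0 ≤ R := by positivity
      obtain ⟨ybar, hybar_mem, hybar⟩ := (isCompact_closedBall (0:E) R).exists_isMinOn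
        ⟨0, Metric.mem_closedBall_self hR0⟩ ((hmax_continuous a β).continuousOn)
      refine ⟨ybar, fun y => ?_⟩
      by_cases hyR : y ∈ Metric.closedBall (0:E) R
      · exact hybar hyR
      · have hy : R < ‖y‖ := by
          simpa [Metric.mem_closedBall, dist_zero_right] using hyR
        have h1 := hcoer y
        have h2 : hmax a β ybar ≤ hmax a β 0 := hybar (Metric.mem_closedBall_self hR0)
        have h3 : hmax a β 0 - c ≤ max 0 (hmax a β 0 - c) := le_max_right _ _
        have h4 : ε / 2 * R = max 0 (hmax a β 0 - c) + ε / 2 := by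
          rw [hRdef]; field_simp
        have h5 : ε / 2 * R < ε / 2 * ‖y‖ := by
          exact mul_lt_mul_of_pos_left hy (half_pos hε)
        linarith
    · -- boundary case : find a supporting direction and reduce the dimension
      obtain ⟨u, hu0, hune⟩ : ∃ u : E, (∀ k, ⟪a k, u⟫ ≤ 0) ∧ u ≠ 0 := by
        by_cases hie : (interior (convexHull ℝ (Set.range a))).Nonempty
        · obtain ⟨f, hf⟩ := geometric_hahn_banach_open_point hCconv.interior isOpen_interior hint
          obtain ⟨b0, hb0⟩ := hie
          have hfb0 : f b0 < 0 := by simpa using hf b0 hb0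
          have hfC : ∀ b ∈ convexHull ℝ (Set.range a), f b ≤ 0 := by
            intro b hb
            by_contra hfb
            push_neg at hfb
            have hdiff : 0 < f b - f b0 := by linarith
            set t : ℝ := f b / (2 * (f b - f b0)) with htdef
            have ht0 : 0 < t := by positivity
            have ht1 : t ≤ 1 := by
              rw [htdef, div_le_one (by linarith)]
              linarith
            have hmem : (1 - t) • b + t • b0 ∈ interior (convexHull ℝ (Set.range a)) :=
              hCconv.combo_closure_interior_mem_interior (subset_closure hb) hb0
                (by linarith) ht0 (by ring)
            have hlt := hf _ hmem
            rw [map_add, map_smul, map_smul, map_zero, smul_eq_mul, smul_eq_mul] at hlt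
            have hval : (1 - t) * f b + t * f b0 = f b / 2 := by
              rw [htdef]; field_simp; ring
            rw [hval] at hlt
            linarith
          refine ⟨(InnerProductSpace.toDual ℝ E).symm f, fun k => ?_, fun hzero => ?_⟩
          · have h1 : ⟪a k, (InnerProductSpace.toDual ℝ E).symm f⟫ = f (a k) := by
              rw [real_inner_comm]; exact InnerProductSpace.toDual_symm_apply
            rw [h1]
            exact hfC _ (subset_convexHull ℝ _ ⟨k, rfl⟩)
          · have : f b0 = 0 := by
              have h1 : ⟪b0, (InnerProductSpace.toDual ℝ E).symm f⟫ = f b0 := by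
                rw [real_inner_comm]; exact InnerProductSpace.toDual_symm_apply
              rw [← h1, hzero, inner_zero_right]
            linarith
        · -- empty interior : the linear span of the aₖ is proper
          have hWne : Submodule.span ℝ (Set.range a) ≠ ⊤ := by
            intro htop
            apply hie
            rw [hCconv.interior_nonempty_iff_affineSpan_eq_top, affineSpan_convexHull]
            have h0A : (0 : E) ∈ affineSpan ℝ (Set.range a) :=
              convexHull_subset_affineSpan _ h0C
            have hdir : (affineSpan ℝ (Set.range a)).direction = ⊤ := by
              rw [eq_top_iff, ← htop, Submodule.span_le]
              rintro _ ⟨k, rfl⟩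
              have := AffineSubspace.vsub_mem_direction
                (subset_affineSpan ℝ (Set.range a) ⟨k, rfl⟩) h0A
              simpa [vsub_eq_sub] using this
            rw [← AffineSubspace.direction_eq_top_iff_of_nonempty ⟨0, h0A⟩]
            exact hdir
          have hObot : (Submodule.span ℝ (Set.range a))ᗮ ≠ ⊥ := by
            simpa [Ne, Submodule.orthogonal_eq_bot_iff] using hWne
          obtain ⟨u, huW, hune⟩ := Submodule.exists_mem_ne_zero_of_ne_bot hObot
          exact ⟨u, fun k => le_of_eq ((Submodule.mem_orthogonal _ _).mp huW _
            (Submodule.subset_span ⟨k, rfl⟩)), hune⟩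
      set u₁ : E := ‖u‖⁻¹ • u with hu₁def
      have hnu : ‖u₁‖ = 1 := by
        rw [hu₁def, norm_smul, norm_inv, norm_norm, inv_mul_cancel₀ (norm_ne_zero_iff.mpr hune)]
      have hu₁ne : u₁ ≠ 0 := by
        rw [← norm_ne_zero_iff, hnu]; exact one_ne_zero
      have hneg : ∀ k, ⟪a k, u₁⟫ ≤ 0 := fun k => by
        rw [hu₁def, real_inner_smul_right]
        exact mul_nonpos_of_nonneg_of_nonpos (inv_nonneg.mpr (norm_nonneg u)) (hu0 k)
      have hK0 : ∃ k, ⟪a k, u₁⟫ = 0 := by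
        by_contra hK
        push_neg at hK
        exact hmax_not_bddBelow a β u₁ (fun k => lt_of_le_of_ne (hneg k) (hK k)) hbdd
      haveI : Fact (finrank ℝ E = n + 1) := ⟨hE⟩
      have hFrank : finrank ℝ ((ℝ ∙ u₁)ᗮ : Submodule ℝ E) = n :=
        Submodule.finrank_orthogonal_span_singleton hu₁ne
      haveI : DecidablePred fun k : ι => ⟪a k, u₁⟫ = 0 := fun _ => Classical.dec _
      haveI hne' : Nonempty {k : ι // ⟪a k, u₁⟫ = 0} := ⟨⟨hK0.choose, hK0.choose_spec⟩⟩
      set F : Submodule ℝ E := (ℝ ∙ u₁)ᗮ with hFdef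
      set a' : {k : ι // ⟪a k, u₁⟫ = 0} → F := fun k =>
        ⟨a k.1, Submodule.mem_orthogonal_singleton_iff_inner_left.mpr k.2⟩ with ha'def
      set β' : {k : ι // ⟪a k, u₁⟫ = 0} → ℝ := fun k => β k.1 with hβ'def
      have hself : ⟪u₁, u₁⟫ = 1 := by
        rw [real_inner_self_eq_norm_mul_norm, hnu]; norm_num
      have hex : ∀ y : F, ∃ t : ℝ, hmax a β ((y : E) + t • u₁) ≤ hmax a' β' y := by
        intro y
        set t : ℝ := Finset.univ.sup' Finset.univ_nonempty
          (fun k : ι => (hmax a' β' y - β k - ⟪a k, (y : E)⟫) / ⟪a k, u₁⟫) with htdef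
        refine ⟨t, hmax_le fun k => ?_⟩
        have hsplit : ⟪a k, (y : E) + t • u₁⟫ = ⟪a k, (y : E)⟫ + t * ⟪a k, u₁⟫ := by
          rw [inner_add_right, real_inner_smul_right]
        rw [hsplit]
        rcases eq_or_lt_of_le (hneg k) with hk0 | hklt
        · rw [hk0, mul_zero, add_zero]
          have hk0' : ⟪a k, u₁⟫ = 0 := hk0
          have h := le_hmax a' β' y ⟨k, hk0'⟩
          rw [Submodule.coe_inner] at h
          exact h
        · have hts : (hmax a' β' y - β k - ⟪a k, (y : E)⟫) / ⟪a k, u₁⟫ ≤ t :=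
            Finset.le_sup' (fun k : ι => (hmax a' β' y - β k - ⟪a k, (y : E)⟫) / ⟪a k, u₁⟫)
              (Finset.mem_univ k)
          have hmul : t * ⟪a k, u₁⟫ ≤ hmax a' β' y - β k - ⟪a k, (y : E)⟫ := by
            calc t * ⟪a k, u₁⟫
                ≤ ((hmax a' β' y - β k - ⟪a k, (y : E)⟫) / ⟪a k, u₁⟫) * ⟪a k, u₁⟫ :=
                  mul_le_mul_of_nonpos_right hts (le_of_lt hklt)
              _ = hmax a' β' y - β k - ⟪a k, (y : E)⟫ := div_mul_cancel₀ _ (ne_of_lt hklt)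
          linarith
      obtain ⟨B, hB⟩ := hbdd
      have hbdd' : BddBelow (Set.range (hmax a' β')) := by
        refine ⟨B, ?_⟩
        rintro _ ⟨y, rfl⟩
        obtain ⟨t, ht⟩ := hex y
        exact le_trans (hB (Set.mem_range_self _)) ht
      obtain ⟨ybar', hybar'⟩ := IH F hFrank {k : ι // ⟪a k, u₁⟫ = 0} a' β' hbdd'
      obtain ⟨tbar, htbar⟩ := hex ybar'
      refine ⟨(ybar' : E) + tbar • u₁, fun z => ?_⟩
      have hwF : z - ⟪u₁, z⟫ • u₁ ∈ F := by
        apply Submodule.mem_orthogonal_singleton_iff_inner_right.mpr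
        rw [inner_sub_right, real_inner_smul_right, hself, mul_one, sub_self]
      have h1 : hmax a' β' ⟨z - ⟪u₁, z⟫ • u₁, hwF⟩ ≤ hmax a β z := hmax_le fun k => by
        have hk0 : ⟪a k.1, u₁⟫ = 0 := k.2
        have hval : ⟪a' k, (⟨z - ⟪u₁, z⟫ • u₁, hwF⟩ : F)⟫ = ⟪a k.1, z⟫ := by
          rw [Submodule.coe_inner]
          show ⟪a k.1, z - ⟪u₁, z⟫ • u₁⟫ = ⟪a k.1, z⟫
          rw [inner_sub_right, real_inner_smul_right, hk0, mul_zero, sub_zero]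
        rw [hval]
        exact le_hmax a β z k.1
      exact le_trans htbar (le_trans (hybar' ⟨z - ⟪u₁, z⟫ • u₁, hwF⟩) h1)


end Aux

/-- If `f : X → ℝ` is everywhere-finite polyhedral convex, `f x = max {⟨vₖ, x⟩ + βₖ}` for
all `x ∈ X`, then `f` attains a global minimum over `X` iff `0 ∈ conv {vₖ : k}`. -/
theorem existence_unconstrained
    {X : Type*}
    [AddCommGroup X] [Module ℝ X] [TopologicalSpace X] [IsTopologicalAddGroup X]
    [ContinuousSMul ℝ X] [LocallyConvexSpace ℝ X] [T2Space X]
    (m : ℕ) (v : Fin (m + 1) → X →L[ℝ] ℝ) (β : Fin (m + 1) → ℝ)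
    (f : X → ℝ)
    (hf : ∀ x : X, f x = Finset.univ.sup' Finset.univ_nonempty fun k => v k x + β k) :
    (∃ xbar : X, ∀ x : X, f xbar ≤ f x) ↔
      (0 : X →L[ℝ] ℝ) ∈ convexHull ℝ (Set.range v) := by
  classical
  set T : X →ₗ[ℝ] EuclideanSpace ℝ (Fin (m + 1)) :=
    (WithLp.linearEquiv 2 ℝ (Fin (m + 1) → ℝ)).symm.toLinearMap ∘ₗ
      LinearMap.pi (fun k => (v k).toLinearMap) with hTdef
  set V : Submodule ℝ (EuclideanSpace ℝ (Fin (m + 1))) := LinearMap.range T with hVdef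
  set a : Fin (m + 1) → V := fun k =>
    Submodule.orthogonalProjectionOnto V (EuclideanSpace.single k (1 : ℝ)) with hadef
  have hainner : ∀ (k) (y : V), ⟪a k, y⟫ = (y : EuclideanSpace ℝ (Fin (m + 1))) k := by
    intro k y
    rw [Submodule.coe_inner]
    have h1 : ⟪EuclideanSpace.single k (1 : ℝ) -
        (Submodule.orthogonalProjectionOnto V (EuclideanSpace.single k (1 : ℝ)) : EuclideanSpace ℝ (Fin (m + 1))),
        (y : EuclideanSpace ℝ (Fin (m + 1)))⟫ = 0 :=
      Submodule.starProjection_inner_eq_zero _ _ y.2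
    have h2 : ⟪EuclideanSpace.single k (1 : ℝ), (y : EuclideanSpace ℝ (Fin (m + 1)))⟫
        = (y : EuclideanSpace ℝ (Fin (m + 1))) k := by
      rw [EuclideanSpace.inner_single_left]; simp
    rw [inner_sub_left, sub_eq_zero] at h1
    rw [hadef, ← h1, h2]
  have hTapp : ∀ (x : X) (k : Fin (m + 1)), (T x) k = v k x := fun x k => rfl
  have haT : ∀ (k) (x : X), ⟪a k, (⟨T x, LinearMap.mem_range_self T x⟩ : V)⟫ = v k x := by
    intro k x
    rw [hainner]
    exact hTapp x k
  have hfV : ∀ x : X, hmax a β ⟨T x, LinearMap.mem_range_self T x⟩ = f x := by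
    intro x
    rw [hf x]
    unfold hmax
    exact Finset.sup'_congr Finset.univ_nonempty rfl fun k _ => by rw [haT k x]
  constructor
  · rintro ⟨xbar, hxbar⟩
    have hbdd : BddBelow (Set.range (hmax a β)) := by
      refine ⟨f xbar, ?_⟩
      rintro _ ⟨y, rfl⟩
      obtain ⟨x, hx⟩ := y.2
      have hyx : (⟨T x, LinearMap.mem_range_self T x⟩ : V) = y := Subtype.ext hx
      rw [← hyx, hfV]
      exact hxbar x
    have h0 : (0 : V) ∈ convexHull ℝ (Set.range a) := zero_mem_of_bddBelow a β hbdd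
    obtain ⟨κ, _, wκ, g, hw0, hw1, hg, hsum⟩ := mem_convexHull_iff_exists_fintype.mp h0
    choose j hj using hg
    have hzero : ∑ i, wκ i • v (j i) = 0 := by
      ext x
      have hs : (∑ i, wκ i • v (j i)) x = ∑ i, wκ i * (v (j i)) x := by
        simp
      rw [ContinuousLinearMap.zero_apply, hs]
      have hstep : ∀ i : κ, wκ i * (v (j i)) x
          = wκ i * ⟪a (j i), (⟨T x, LinearMap.mem_range_self T x⟩ : V)⟫ := fun i => by
        rw [haT]
      rw [Finset.sum_congr rfl fun i _ => hstep i]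
      have hsum' : ∑ i, wκ i • a (j i) = 0 := by
        rw [Finset.sum_congr rfl fun i _ => by rw [hj i]]
        exact hsum
      calc (∑ i, wκ i * ⟪a (j i), (⟨T x, LinearMap.mem_range_self T x⟩ : V)⟫)
          = ⟪∑ i, wκ i • a (j i), (⟨T x, LinearMap.mem_range_self T x⟩ : V)⟫ := by
            rw [sum_inner]
            exact Finset.sum_congr rfl fun i _ => (real_inner_smul_left _ _ _).symm
        _ = 0 := by rw [hsum', inner_zero_left]
    exact mem_convexHull_of_exists_fintype wκ (fun i => v (j i)) hw0 hw1
      (fun i => ⟨j i, rfl⟩) hzero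
  · intro h0
    obtain ⟨κ, _, wκ, g, hw0, hw1, hg, hsum⟩ := mem_convexHull_iff_exists_fintype.mp h0
    choose j hj using hg
    have hvsum : ∑ i, wκ i • v (j i) = 0 := by
      rw [Finset.sum_congr rfl fun i _ => by rw [hj i]]
      exact hsum
    have happ : ∀ x : X, ∑ i, wκ i * (v (j i)) x = 0 := by
      intro x
      have h1 : (∑ i, wκ i • v (j i)) x = ∑ i, wκ i * (v (j i)) x := by simp
      rw [← h1, hvsum, ContinuousLinearMap.zero_apply]
    have hlow : ∀ x : X, (∑ i, wκ i * β (j i)) ≤ f x := by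
      intro x
      have h1 : ∀ i : κ, wκ i * ((v (j i)) x + β (j i)) ≤ wκ i * f x := fun i =>
        mul_le_mul_of_nonneg_left
          (by rw [hf x]
              exact Finset.le_sup' (fun k => (v k) x + β k) (Finset.mem_univ (j i))) (hw0 i)
      have h2 : ∑ i, wκ i * ((v (j i)) x + β (j i)) = ∑ i, wκ i * β (j i) := by
        simp only [mul_add, Finset.sum_add_distrib]
        rw [happ x, zero_add]
      have h3 : ∑ i, wκ i * f x = f x := by
        rw [← Finset.sum_mul, hw1, one_mul]
      calc (∑ i, wκ i * β (j i)) = ∑ i, wκ i * ((v (j i)) x + β (j i)) := h2.symm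
        _ ≤ ∑ i, wκ i * f x := Finset.sum_le_sum fun i _ => h1 i
        _ = f x := h3
    have hbdd : BddBelow (Set.range (hmax a β)) := by
      refine ⟨∑ i, wκ i * β (j i), ?_⟩
      rintro _ ⟨y, rfl⟩
      obtain ⟨x, hx⟩ := y.2
      have hyx : (⟨T x, LinearMap.mem_range_self T x⟩ : V) = y := Subtype.ext hx
      rw [← hyx, hfV]
      exact hlow x
    obtain ⟨ybar, hybar⟩ := key_min (finrank ℝ V) V rfl (Fin (m + 1)) a β hbdd
    obtain ⟨xbar, hxbar⟩ := ybar.2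
    refine ⟨xbar, fun x => ?_⟩
    have hy : (⟨T xbar, LinearMap.mem_range_self T xbar⟩ : V) = ybar := Subtype.ext hxbar
    calc f xbar = hmax a β ⟨T xbar, LinearMap.mem_range_self T xbar⟩ := (hfV xbar).symm
      _ = hmax a β ybar := by rw [hy]
      _ ≤ hmax a β ⟨T x, LinearMap.mem_range_self T x⟩ := hybar _
      _ = f x := hfV x
end

section
/- The solution set Sol(P) of problem (P) is a generalized polyhedral convex set. Moreover, if both D and dom f are polyhedral convex sets, then Sol(P) is a polyhedral convex set. -/
/-- A polyhedral convex set: a finite intersection of closed half-spaces (possibly all of `X`). -/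
def IsPCS {X : Type*} [AddCommGroup X] [Module ℝ X] [TopologicalSpace X] (S : Set X) : Prop :=
  ∃ (p : ℕ) (xs : Fin p → X →L[ℝ] ℝ) (α : Fin p → ℝ),
    S = {x | ∀ i, xs i x ≤ α i}

lemma aux_pcs_inter {X : Type*} [AddCommGroup X] [Module ℝ X] [TopologicalSpace X]
    {S T : Set X} (hS : IsPCS S) (hT : IsPCS T) : IsPCS (S ∩ T) := by
  obtain ⟨p, xs, α, hSeq⟩ := hS
  obtain ⟨q, ys, γ, hTeq⟩ := hT
  refine ⟨p + q, Fin.append xs ys, Fin.append α γ, ?_⟩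
  ext x
  simp only [hSeq, hTeq, Set.mem_inter_iff, Set.mem_setOf_eq]
  constructor
  · rintro ⟨h1, h2⟩ i
    refine Fin.addCases (fun j => ?_) (fun j => ?_) i
    · simpa [Fin.append_left] using h1 j
    · simpa [Fin.append_right] using h2 j
  · intro h
    refine ⟨fun i => ?_, fun j => ?_⟩
    · simpa [Fin.append_left] using h (Fin.castAdd q i)
    · simpa [Fin.append_right] using h (Fin.natAdd p j)

lemma aux_gpcs_inter {X : Type*} [AddCommGroup X] [Module ℝ X] [TopologicalSpace X]
    {S T : Set X} (hS : IsGPCS S) (hT : IsGPCS T) : IsGPCS (S ∩ T) := by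
  obtain ⟨p, xs, α, L, hLc, hSeq⟩ := hS
  obtain ⟨q, ys, γ, M, hMc, hTeq⟩ := hT
  refine ⟨p + q, Fin.append xs ys, Fin.append α γ, L ⊓ M, ?_, ?_⟩
  · exact hLc.inter hMc
  · ext x
    simp only [hSeq, hTeq, Set.mem_inter_iff, Set.mem_setOf_eq,
      AffineSubspace.mem_inf_iff]
    constructor
    · rintro ⟨⟨h1, h2⟩, ⟨h3, h4⟩⟩
      refine ⟨⟨h1, h3⟩, fun i => ?_⟩
      refine Fin.addCases (fun j => ?_) (fun j => ?_) i
      · simpa [Fin.append_left] using h2 j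
      · simpa [Fin.append_right] using h4 j
    · rintro ⟨⟨h1, h3⟩, h⟩
      refine ⟨⟨h1, fun i => ?_⟩, ⟨h3, fun j => ?_⟩⟩
      · simpa [Fin.append_left] using h (Fin.castAdd q i)
      · simpa [Fin.append_right] using h (Fin.natAdd p j)

lemma aux_pcs_gpcs {X : Type*} [AddCommGroup X] [Module ℝ X] [TopologicalSpace X]
    {S : Set X} (hS : IsPCS S) : IsGPCS S := by
  obtain ⟨p, xs, α, hSeq⟩ := hS
  exact ⟨p, xs, α, ⊤, by rw [AffineSubspace.top_coe]; exact isClosed_univ,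
    by simp [hSeq]⟩

lemma aux_gpcs_empty {X : Type*} [AddCommGroup X] [Module ℝ X] [TopologicalSpace X] :
    IsGPCS (∅ : Set X) := by
  refine ⟨0, fun i => i.elim0, fun i => i.elim0, ⊥, ?_, ?_⟩
  · rw [AffineSubspace.bot_coe]; exact isClosed_empty
  · ext x; simp

lemma aux_pcs_empty {X : Type*} [AddCommGroup X] [Module ℝ X] [TopologicalSpace X] :
    IsPCS (∅ : Set X) := by
  refine ⟨1, fun _ => 0, fun _ => -1, ?_⟩
  ext x
  simp only [Set.mem_empty_iff_false, Set.mem_setOf_eq, ContinuousLinearMap.zero_apply,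
    false_iff, not_forall, not_le]
  exact ⟨0, by norm_num⟩

/-- The solution set `Sol(P)` of the generalized polyhedral convex optimization problem
`(P) : min {f x | x ∈ D}` is a generalized polyhedral convex set; moreover, if `D` and
`dom f` are polyhedral convex sets, then `Sol(P)` is polyhedral convex. -/
theorem solution_set_gpcs
    {X : Type*}
    [AddCommGroup X] [Module ℝ X] [TopologicalSpace X] [IsTopologicalAddGroup X]
    [ContinuousSMul ℝ X] [LocallyConvexSpace ℝ X] [T2Space X]
    (D : Set X) (hD : IsGPCS D) (hDne : D.Nonempty)
    (domf : Set X) (hdomf : IsGPCS domf) (hdomne : domf.Nonempty)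
    (m : ℕ) (v : Fin (m + 1) → X →L[ℝ] ℝ) (β : Fin (m + 1) → ℝ)
    (f : X → EReal)
    (hf : ∀ x ∈ domf,
      f x = ((Finset.univ.sup' Finset.univ_nonempty fun k => v k x + β k : ℝ) : EReal))
    (hf' : ∀ x ∉ domf, f x = ⊤) :
    IsGPCS {u | u ∈ D ∧ f u ≠ ⊤ ∧ f u ≠ ⊥ ∧ ∀ x ∈ D, f u ≤ f x} ∧
      (IsPCS D → IsPCS domf →
        IsPCS {u | u ∈ D ∧ f u ≠ ⊤ ∧ f u ≠ ⊥ ∧ ∀ x ∈ D, f u ≤ f x}) := by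
  set g : X → ℝ := fun x => Finset.univ.sup' Finset.univ_nonempty fun k => v k x + β k with hg
  set Sol : Set X := {u | u ∈ D ∧ f u ≠ ⊤ ∧ f u ≠ ⊥ ∧ ∀ x ∈ D, f u ≤ f x} with hSol
  rcases Set.eq_empty_or_nonempty Sol with hemp | ⟨u₀, hu₀⟩
  · rw [hemp]
    exact ⟨aux_gpcs_empty, fun _ _ => aux_pcs_empty⟩
  · obtain ⟨hu₀D, hu₀top, hu₀bot, hu₀min⟩ := hu₀
    have hu₀dom : u₀ ∈ domf := by
      by_contra h
      exact hu₀top (hf' u₀ h)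
    have hfu₀ : f u₀ = ((g u₀ : ℝ) : EReal) := hf u₀ hu₀dom
    set M : Set X := {x | ∀ k, v k x ≤ g u₀ - β k} with hM
    have hMpcs : IsPCS M := ⟨m + 1, v, fun k => g u₀ - β k, rfl⟩
    have key : Sol = D ∩ (domf ∩ M) := by
      ext x
      constructor
      · rintro ⟨hxD, hxtop, hxbot, hxmin⟩
        have hxdom : x ∈ domf := by
          by_contra h
          exact hxtop (hf' x h)
        have hfx : f x = ((g x : ℝ) : EReal) := hf x hxdom
        have h1 : f x ≤ f u₀ := hxmin u₀ hu₀D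
        have h2 : f u₀ ≤ f x := hu₀min x hxD
        have heq : g x = g u₀ := by
          have := le_antisymm h1 h2
          rw [hfx, hfu₀] at this
          exact_mod_cast this
        refine ⟨hxD, hxdom, fun k => ?_⟩
        have : v k x + β k ≤ g x :=
          Finset.le_sup' (fun k => v k x + β k) (Finset.mem_univ k)
        linarith [heq ▸ this]
      · rintro ⟨hxD, hxdom, hxM⟩
        have hfx : f x = ((g x : ℝ) : EReal) := hf x hxdom
        have hgle : g x ≤ g u₀ := by
          apply Finset.sup'_le
          intro k _
          have := hxM k
          linarith
        have hle : f x ≤ f u₀ := by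
          rw [hfx, hfu₀]
          exact_mod_cast hgle
        refine ⟨hxD, by simp [hfx], by simp [hfx], fun y hy => hle.trans (hu₀min y hy)⟩
    rw [show Sol = D ∩ (domf ∩ M) from key]
    exact ⟨aux_gpcs_inter hD (aux_gpcs_inter hdomf (aux_pcs_gpcs hMpcs)),
      fun h1 h2 => aux_pcs_inter h1 (aux_pcs_inter h2 hMpcs)⟩
end

section
/- (Optimality condition I) A vector x ∈ D ∩ dom f is a solution of problem (P) if and only if 0 belongs to the weak*-closure of ∂f(x) + N_D(x) in X*. -/
open scoped Pointwise

lemma aux_pos_min {ι : Type*} [Fintype ι] (g : ι → ℝ) (hg : ∀ i, 0 < g i) :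
    ∃ τ : ℝ, 0 < τ ∧ ∀ i, τ ≤ g i := by
  rcases isEmpty_or_nonempty ι with h | h
  · exact ⟨1, one_pos, fun i => isEmptyElim i⟩
  · have hne : (Finset.univ : Finset ι).Nonempty := Finset.univ_nonempty
    exact ⟨Finset.univ.inf' hne g, (Finset.lt_inf'_iff hne).2 fun i _ => hg i,
      fun i => Finset.inf'_le g (Finset.mem_univ i)⟩

lemma aux_gpcs_convex {X : Type*} [AddCommGroup X] [Module ℝ X] [TopologicalSpace X]
    {S : Set X} (hS : IsGPCS S) : Convex ℝ S := by
  obtain ⟨p, xs, α, L, hL, rfl⟩ := hS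
  have he : {x | x ∈ L ∧ ∀ i, xs i x ≤ α i} = (L : Set X) ∩ ⋂ i, {x | xs i x ≤ α i} := by
    ext y; simp [Set.mem_iInter]
  rw [he]
  exact L.convex.inter (convex_iInter fun i =>
    convex_halfSpace_le ⟨(xs i).map_add, fun c y => (xs i).map_smul c y⟩ _)

lemma aux_seg {X : Type*} [AddCommGroup X] [Module ℝ X] {S : Set X}
    (hconv : Convex ℝ S) {x w : X} {τ0 τ : ℝ} (hx : x ∈ S) (hm : x + τ0 • w ∈ S)
    (h0 : 0 ≤ τ) (hle : τ ≤ τ0) (hτ0 : 0 < τ0) : x + τ • w ∈ S := by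
  have h1 : 0 ≤ τ / τ0 := div_nonneg h0 hτ0.le
  have h2 : τ / τ0 ≤ 1 := (div_le_one hτ0).2 hle
  have hmem := hconv hx hm (by linarith : (0:ℝ) ≤ 1 - τ / τ0) h1 (by ring)
  have key : (1 - τ/τ0) • x + (τ/τ0) • (x + τ0 • w) = x + τ • w := by
    rw [smul_add, smul_smul, div_mul_cancel₀ _ hτ0.ne', sub_smul, one_smul]
    abel
  rwa [key] at hmem

lemma aux_feasible {X : Type*} [AddCommGroup X] [Module ℝ X] [TopologicalSpace X]
    [IsTopologicalAddGroup X] [ContinuousSMul ℝ X] [LocallyConvexSpace ℝ X]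
    {S : Set X} (hS : IsGPCS S) {x : X} (hx : x ∈ S) {h : X}
    (hh : ∀ φ : X →L[ℝ] ℝ, (∀ d ∈ S, φ d - φ x ≤ 0) → φ h ≤ 0) :
    ∃ τ : ℝ, 0 < τ ∧ x + τ • h ∈ S := by
  obtain ⟨p, xs, α, L, hL, rfl⟩ := hS
  obtain ⟨hxL, hxineq⟩ := hx
  have hdirclosed : IsClosed (L.direction : Set X) := by
    have he : (L.direction : Set X) = (Homeomorph.subRight x) '' (L : Set X) := by
      rw [AffineSubspace.coe_direction_eq_vsub_set_right hxL]; rfl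
    rw [he]
    exact (Homeomorph.isClosed_image _).2 hL
  have hhdir : h ∈ L.direction := by
    by_contra hmem
    obtain ⟨f, u, hfu, huf⟩ := geometric_hahn_banach_closed_point
      L.direction.convex hdirclosed hmem
    have hf0 : ∀ b ∈ L.direction, f b = 0 := by
      intro b hb
      by_contra hb0
      have h1 := hfu _ (L.direction.smul_mem ((u + 1) / f b) hb)
      rw [map_smul, smul_eq_mul, div_mul_cancel₀ _ hb0] at h1
      linarith
    have hfh : f h ≤ 0 := hh f (fun d hd => by
      have h2 : f (d - x) = 0 := by
        have := AffineSubspace.vsub_mem_direction hd.1 hxL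
        exact hf0 _ this
      rw [map_sub] at h2; linarith)
    have hu : (0:ℝ) < u := by
      have := hfu 0 L.direction.zero_mem
      simpa using this
    linarith
  have hact : ∀ i, xs i x = α i → xs i h ≤ 0 := fun i hi =>
    hh (xs i) (fun d hd => by have := hd.2 i; linarith)
  have hgpos : ∀ i : Fin p, 0 < (if 0 < xs i h then (α i - xs i x) / xs i h else 1) := by
    intro i
    split_ifs with hi
    · apply div_pos _ hi
      rcases lt_or_eq_of_le (hxineq i) with hlt | heq
      · linarith
      · exact absurd (hact i heq) (not_le.2 hi)
    · norm_num
  obtain ⟨τ, hτpos, hτle⟩ := aux_pos_min _ hgpos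
  refine ⟨τ, hτpos, ?_, ?_⟩
  · have h1 : τ • h ∈ L.direction := L.direction.smul_mem τ hhdir
    have h2 := AffineSubspace.vadd_mem_of_mem_direction h1 hxL
    simpa [vadd_eq_add, add_comm] using h2
  · intro i
    rw [map_add, map_smul, smul_eq_mul]
    by_cases hi : 0 < xs i h
    · have h3 : τ ≤ (α i - xs i x) / xs i h := by
        have := hτle i; rwa [if_pos hi] at this
      have h4 := (le_div_iff₀ hi).1 h3
      linarith
    · push_neg at hi
      nlinarith [hxineq i, hτpos.le]

set_option maxHeartbeats 2000000 in
/-- **Optimality condition I.**  With `D` a nonempty generalized polyhedral convex set and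
`f` a proper generalized polyhedral convex function (`f = max {⟨vₖ, ·⟩ + βₖ}` on its
nonempty generalized polyhedral convex domain, `+∞` elsewhere), a point
`x ∈ D ∩ dom f` solves `(P) : min {f x | x ∈ D}` iff `0` belongs to the weak*-closure of
`∂f(x) + N_D(x)` in `X*`. -/
theorem optimality_condition_I
    {X : Type*}
    [AddCommGroup X] [Module ℝ X] [TopologicalSpace X] [IsTopologicalAddGroup X]
    [ContinuousSMul ℝ X] [LocallyConvexSpace ℝ X] [T2Space X]
    (D : Set X) (hD : IsGPCS D) (hDne : D.Nonempty)
    (domf : Set X) (hdomf : IsGPCS domf) (hdomne : domf.Nonempty)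
    (m : ℕ) (v : Fin (m + 1) → X →L[ℝ] ℝ) (β : Fin (m + 1) → ℝ)
    (f : X → EReal)
    (hf : ∀ x ∈ domf,
      f x = ((Finset.univ.sup' Finset.univ_nonempty fun k => v k x + β k : ℝ) : EReal))
    (hf' : ∀ x ∉ domf, f x = ⊤)
    (x : X) (hxD : x ∈ D) (hxdom : x ∈ domf) :
    (∀ u ∈ D, f x ≤ f u) ↔
      (0 : WeakDual ℝ X) ∈ closure
        ({φ : WeakDual ℝ X | ∀ u : X, ((φ u - φ x : ℝ) : EReal) ≤ f u - f x} +
          {φ : WeakDual ℝ X | ∀ u ∈ D, φ u - φ x ≤ 0}) := by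
  classical
  set M : ℝ := Finset.univ.sup' Finset.univ_nonempty fun k => v k x + β k with hM
  have hfx : f x = (M : EReal) := hf x hxdom
  set A : Set (WeakDual ℝ X) :=
    {φ : WeakDual ℝ X | ∀ u : X, ((φ u - φ x : ℝ) : EReal) ≤ f u - f x} with hA
  set B : Set (WeakDual ℝ X) := {φ : WeakDual ℝ X | ∀ u ∈ D, φ u - φ x ≤ 0} with hB
  constructor
  · intro hmin
    have hvA0 : ∀ k : Fin (m+1), v k x + β k = M → ∀ ψ : X →L[ℝ] ℝ,
        (∀ d ∈ domf, ψ d - ψ x ≤ 0) → ((v k + ψ : X →L[ℝ] ℝ) : WeakDual ℝ X) ∈ A := by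
      intro k hk ψ hψ u
      by_cases hu : u ∈ domf
      · have h1 : v k u + β k ≤ Finset.univ.sup' Finset.univ_nonempty fun j => v j u + β j :=
          Finset.le_sup' (fun j : Fin (m+1) => v j u + β j) (Finset.mem_univ k)
        have h2 : ψ u - ψ x ≤ 0 := hψ u hu
        rw [hf u hu, hfx, ← EReal.coe_sub, EReal.coe_le_coe_iff]
        have he : ((v k + ψ : X →L[ℝ] ℝ) : WeakDual ℝ X) u = v k u + ψ u := rfl
        have he' : ((v k + ψ : X →L[ℝ] ℝ) : WeakDual ℝ X) x = v k x + ψ x := rfl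
        show v k u + ψ u - (v k x + ψ x) ≤ _
        linarith
      · rw [hf' u hu, hfx, EReal.top_sub_coe]; exact le_top
    have h0B : (0 : WeakDual ℝ X) ∈ B := by
      intro u hu
      show (0:ℝ) - 0 ≤ 0
      norm_num
    obtain ⟨k0, -, hk00⟩ := Finset.exists_mem_eq_sup' (Finset.univ_nonempty)
      (fun k : Fin (m+1) => v k x + β k)
    have hk0' : v k0 x + β k0 = M := by rw [hM]; exact hk00.symm
    have hvk0A : ((v k0 : X →L[ℝ] ℝ) : WeakDual ℝ X) ∈ A := by
      have := hvA0 k0 hk0' 0 (by intro d hd; show (0:ℝ) - 0 ≤ 0; norm_num)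
      rwa [add_zero] at this
    have claim : ∀ (F : Finset X) (ε : ℝ), 0 < ε →
        ∃ φ ∈ A + B, ∀ u ∈ F, |φ u| < ε := by
      intro F ε hε
      by_contra hcon
      push_neg at hcon
      have hAconv : Convex ℝ A := by
        intro φ1 h1 φ2 h2 a b ha hb hab u
        by_cases hu : u ∈ domf
        · have h1' := h1 u
          have h2' := h2 u
          rw [hf u hu, hfx, ← EReal.coe_sub, EReal.coe_le_coe_iff] at h1' h2' ⊢
          have he : (a • φ1 + b • φ2 : WeakDual ℝ X) u = a * φ1 u + b * φ2 u := rfl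
          have he' : (a • φ1 + b • φ2 : WeakDual ℝ X) x = a * φ1 x + b * φ2 x := rfl
          rw [he, he']
          obtain ⟨N, hN⟩ : ∃ N : ℝ,
              (Finset.univ.sup' Finset.univ_nonempty fun k => v k u + β k) = N := ⟨_, rfl⟩
          rw [hN] at h1' h2' ⊢
          have hss : a * (N - M) + b * (N - M) = N - M := by rw [← add_mul, hab, one_mul]
          linarith [mul_le_mul_of_nonneg_left h1' ha, mul_le_mul_of_nonneg_left h2' hb]
        · rw [hf' u hu, hfx, EReal.top_sub_coe]; exact le_top
      have hBconv : Convex ℝ B := by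
        intro φ1 h1 φ2 h2 a b ha hb hab u hu
        have h1' := h1 u hu
        have h2' := h2 u hu
        have he : (a • φ1 + b • φ2 : WeakDual ℝ X) u = a * φ1 u + b * φ2 u := rfl
        have he' : (a • φ1 + b • φ2 : WeakDual ℝ X) x = a * φ1 x + b * φ2 x := rfl
        rw [Set.mem_setOf_eq] at *
        show (a • φ1 + b • φ2 : WeakDual ℝ X) u - (a • φ1 + b • φ2 : WeakDual ℝ X) x ≤ 0
        rw [he, he']
        nlinarith [mul_le_mul_of_nonneg_left h1' ha, mul_le_mul_of_nonneg_left h2' hb]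
      have hSconv : Convex ℝ (A + B) := hAconv.add hBconv
      set π : WeakDual ℝ X → (F → ℝ) := fun φ i => φ i.1 with hπ
      have hπconv : Convex ℝ (π '' (A + B)) := by
        rintro a ⟨φa, hφa, rfl⟩ b ⟨φb, hφb, rfl⟩ s t hs ht hst
        exact ⟨s • φa + t • φb, hSconv hφa hφb hs ht hst, rfl⟩
      have hopen : IsOpen {g : F → ℝ | ∀ i, |g i| < ε} := by
        have he : {g : F → ℝ | ∀ i, |g i| < ε}
            = ⋂ i, (fun g : F → ℝ => g i) ⁻¹' Set.Ioo (-ε) ε := by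
          ext g; simp [abs_lt]
        rw [he]
        exact isOpen_iInter_of_finite fun i => isOpen_Ioo.preimage (continuous_apply i)
      have h0notin : (0 : F → ℝ) ∉ closure (π '' (A + B)) := by
        intro h0'
        obtain ⟨g, hg1, hg2⟩ := mem_closure_iff.1 h0' _ hopen (fun i => by simpa using hε)
        obtain ⟨φ, hφ, rfl⟩ := hg2
        obtain ⟨u, huF, hu⟩ := hcon φ hφ
        exact absurd (hg1 ⟨u, huF⟩) (not_lt.2 hu)
      obtain ⟨c, u0, hlt, hu0⟩ := geometric_hahn_banach_closed_point
        hπconv.closure isClosed_closure h0notin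
      have hu0neg : u0 < 0 := by simpa using hu0
      set w : X := ∑ i : F, c (fun j => if i = j then (1:ℝ) else 0) • (i : X) with hw
      have hweval : ∀ φ : WeakDual ℝ X, φ w = c (π φ) := by
        intro φ
        have h1 : φ w = ∑ i : F, c (fun j => if i = j then (1:ℝ) else 0) * φ i := by
          rw [hw, map_sum]
          exact Finset.sum_congr rfl fun i _ => by rw [map_smul, smul_eq_mul]
        have h2 : c (π φ) = ∑ i : F, π φ i * c (fun j => if i = j then (1:ℝ) else 0) := by
          conv_lhs => rw [pi_eq_sum_univ (π φ)]
          rw [map_sum]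
          exact Finset.sum_congr rfl fun i _ => by rw [map_smul, smul_eq_mul]
        rw [h1, h2]
        exact Finset.sum_congr rfl fun i _ => mul_comm _ _
      have hsep : ∀ φ ∈ A + B, φ w < u0 := by
        intro φ hφ
        rw [hweval φ]
        exact hlt _ (subset_closure (Set.mem_image_of_mem π hφ))
      have hvkw : ∀ k : Fin (m+1), v k x + β k = M → v k w < u0 := by
        intro k hk
        have hmem := Set.add_mem_add (hvA0 k hk 0 (by intro d hd; show (0:ℝ) - 0 ≤ 0; norm_num)) h0B
        have h00 : @HAdd.hAdd (WeakDual ℝ X) (WeakDual ℝ X) (WeakDual ℝ X) _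
            (v k + 0 : X →L[ℝ] ℝ) 0
            = ((v k : X →L[ℝ] ℝ) : WeakDual ℝ X) := (add_zero _).trans (add_zero (v k))
        replace hmem := (congrArg (· ∈ A + B) h00).mp hmem
        exact hsep _ hmem
      have hvk0w : v k0 w < u0 := hvkw k0 hk0'
      have hBw : ∀ φ : X →L[ℝ] ℝ, (∀ d ∈ D, φ d - φ x ≤ 0) → φ w ≤ 0 := by
        intro φ hφ
        by_contra hpos
        push_neg at hpos
        set t : ℝ := max 0 ((u0 - v k0 w) / φ w) with ht
        have htnn : (0:ℝ) ≤ t := le_max_left _ _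
        have htφ : ((t • φ : X →L[ℝ] ℝ) : WeakDual ℝ X) ∈ B := by
          intro d hd
          have h4 := hφ d hd
          show t * φ d - t * φ x ≤ 0
          nlinarith
        have hmem := Set.add_mem_add hvk0A htφ
        have h3 := hsep _ hmem
        have he : ((v k0 + t • φ : X →L[ℝ] ℝ) : WeakDual ℝ X) w = v k0 w + t * φ w := rfl
        change v k0 w + t * φ w < u0 at h3
        have hub : (u0 - v k0 w) / φ w ≤ t := le_max_right _ _
        have h5 := (div_le_iff₀ hpos).1 hub
        linarith
      have hNw : ∀ ψ : X →L[ℝ] ℝ, (∀ d ∈ domf, ψ d - ψ x ≤ 0) → ψ w ≤ 0 := by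
        intro ψ hψ
        by_contra hpos
        push_neg at hpos
        set t : ℝ := max 0 ((u0 - v k0 w) / ψ w) with ht
        have htnn : (0:ℝ) ≤ t := le_max_left _ _
        have htψ : ∀ d ∈ domf, (t • ψ : X →L[ℝ] ℝ) d - (t • ψ : X →L[ℝ] ℝ) x ≤ 0 := by
          intro d hd
          have h4 := hψ d hd
          show t * ψ d - t * ψ x ≤ 0
          nlinarith
        have hmem := Set.add_mem_add (hvA0 k0 hk0' (t • ψ) htψ) h0B
        have h00 : @HAdd.hAdd (WeakDual ℝ X) (WeakDual ℝ X) (WeakDual ℝ X) _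
            (v k0 + t • ψ : X →L[ℝ] ℝ) 0
            = ((v k0 + t • ψ : X →L[ℝ] ℝ) : WeakDual ℝ X) := add_zero _
        replace hmem := (congrArg (· ∈ A + B) h00).mp hmem
        have h3 := hsep _ hmem
        have he : ((v k0 + t • ψ : X →L[ℝ] ℝ) : WeakDual ℝ X) w = v k0 w + t * ψ w := rfl
        change v k0 w + t * ψ w < u0 at h3
        have hub : (u0 - v k0 w) / ψ w ≤ t := le_max_right _ _
        have h5 := (div_le_iff₀ hpos).1 hub
        linarith
      obtain ⟨τD, hτD, hτDmem⟩ := aux_feasible hD hxD hBw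
      obtain ⟨τf, hτf, hτfmem⟩ := aux_feasible hdomf hxdom hNw
      have hgpos : ∀ k : Fin (m+1),
          0 < (if v k w < 0 then 1 else (M - (v k x + β k)) / (v k w + 1)) := by
        intro k
        split_ifs with hk
        · norm_num
        · push_neg at hk
          have hkact : v k x + β k ≠ M := fun hke => absurd (hvkw k hke) (by linarith)
          have hkle : v k x + β k ≤ M := by
            rw [hM]; exact Finset.le_sup' (fun j : Fin (m+1) => v j x + β j) (Finset.mem_univ k)
          exact div_pos (by have := lt_of_le_of_ne hkle hkact; linarith) (by linarith)
      obtain ⟨τ1, hτ1, hτ1le⟩ := aux_pos_min _ hgpos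
      set τ : ℝ := min (min τD τf) τ1 with hτ
      have hτpos : 0 < τ := lt_min (lt_min hτD hτf) hτ1
      have hmemD : x + τ • w ∈ D :=
        aux_seg (aux_gpcs_convex hD) hxD hτDmem hτpos.le
          (le_trans (min_le_left _ _) (min_le_left _ _)) hτD
      have hmemdf : x + τ • w ∈ domf :=
        aux_seg (aux_gpcs_convex hdomf) hxdom hτfmem hτpos.le
          (le_trans (min_le_left _ _) (min_le_right _ _)) hτf
      have hval : (Finset.univ.sup' Finset.univ_nonempty
          fun k : Fin (m+1) => v k (x + τ • w) + β k) < M := by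
        rw [Finset.sup'_lt_iff]
        intro k _
        rw [map_add, map_smul, smul_eq_mul]
        by_cases hk : v k w < 0
        · have hkle : v k x + β k ≤ M := by
            rw [hM]; exact Finset.le_sup' (fun j : Fin (m+1) => v j x + β j) (Finset.mem_univ k)
          have h6 := mul_neg_of_pos_of_neg hτpos hk
          linarith
        · push_neg at hk
          have hτgk : τ ≤ (M - (v k x + β k)) / (v k w + 1) := by
            have h7a : τ ≤ τ1 := min_le_right _ _
            have h7 := le_trans h7a (hτ1le k)
            rwa [if_neg (not_lt.2 hk)] at h7
          have hkact : v k x + β k ≠ M := fun hke => absurd (hvkw k hke) (by linarith)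
          have hkle : v k x + β k ≤ M := by
            rw [hM]; exact Finset.le_sup' (fun j : Fin (m+1) => v j x + β j) (Finset.mem_univ k)
          have hklt : v k x + β k < M := lt_of_le_of_ne hkle hkact
          have hq : (0:ℝ) < v k w + 1 := by linarith
          have h5 : τ * (v k w + 1) ≤ M - (v k x + β k) := (le_div_iff₀ hq).1 hτgk
          nlinarith
      have hcontr := hmin _ hmemD
      rw [hf _ hmemdf, hfx, EReal.coe_le_coe_iff] at hcontr
      exact absurd hcontr (not_le.2 hval)
    -- from the claim to closure membership
    have hinj : Function.Injective (topDualPairing ℝ X) := fun φ ψ hφψ =>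
      ContinuousLinearMap.ext fun u => LinearMap.congr_fun hφψ u
    have hemb : Topology.IsEmbedding (fun (φ : WeakDual ℝ X) y => topDualPairing ℝ X φ y) :=
      WeakBilin.isEmbedding (B := topDualPairing ℝ X) hinj
    rw [hemb.closure_eq_preimage_closure_image (A + B), Set.mem_preimage,
      mem_closure_iff_nhds]
    intro U hU
    have hT0 : (fun y => topDualPairing ℝ X (0 : WeakDual ℝ X) y) = (0 : X → ℝ) := by
      funext y; rfl
    rw [hT0, nhds_pi] at hU
    obtain ⟨I, hIfin, t, ht, hsub⟩ := Filter.mem_pi.1 hU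
    have ht' : ∀ i : X, t i ∈ nhds (0 : ℝ) := fun i => ht i
    choose ε hεpos hεsub using fun i => Metric.mem_nhds_iff.1 (ht' i)
    obtain ⟨δ, hδ, hδle⟩ := aux_pos_min (fun i : hIfin.toFinset => ε i.1) (fun i => hεpos i.1)
    obtain ⟨φ, hφ, hφsmall⟩ := claim hIfin.toFinset δ hδ
    refine ⟨fun y => topDualPairing ℝ X φ y, hsub ?_, Set.mem_image_of_mem _ hφ⟩
    rw [Set.mem_pi]
    intro i hi
    apply hεsub i
    have h8 : |φ i| < δ := hφsmall i (hIfin.mem_toFinset.2 hi)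
    have hδε : δ ≤ ε i := hδle ⟨i, hIfin.mem_toFinset.2 hi⟩
    rw [Metric.mem_ball]
    calc dist (topDualPairing ℝ X φ i) 0 = |φ i| := by
          rw [Real.dist_eq, sub_zero]
          rfl
      _ < δ := h8
      _ ≤ ε i := hδε
  · intro h0 u hu
    by_cases hud : u ∈ domf
    · set N : ℝ := Finset.univ.sup' Finset.univ_nonempty fun k => v k u + β k with hN
      have hfu : f u = (N : EReal) := hf u hud
      have hCsub : A + B ⊆ {φ : WeakDual ℝ X | φ u - φ x ≤ N - M} := by
        rintro φ ⟨φ1, hφ1, φ2, hφ2, rfl⟩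
        have h1 : ((φ1 u - φ1 x : ℝ) : EReal) ≤ f u - f x := hφ1 u
        rw [hfu, hfx, ← EReal.coe_sub, EReal.coe_le_coe_iff] at h1
        have h2 : φ2 u - φ2 x ≤ 0 := hφ2 u hu
        have he : (φ1 + φ2 : WeakDual ℝ X) u = φ1 u + φ2 u := rfl
        have he' : (φ1 + φ2 : WeakDual ℝ X) x = φ1 x + φ2 x := rfl
        simp only [Set.mem_setOf_eq, he, he']
        linarith
      have hclosed : IsClosed {φ : WeakDual ℝ X | φ u - φ x ≤ N - M} :=
        isClosed_le ((WeakDual.eval_continuous u).sub (WeakDual.eval_continuous x))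
          continuous_const
      have h0C := closure_minimal hCsub hclosed h0
      have h0C' : (0:ℝ) - 0 ≤ N - M := h0C
      rw [hfx, hfu, EReal.coe_le_coe_iff]
      linarith
    · rw [hf' u hud]; exact le_top
end

section
/- (Optimality condition II) Assume that either f is a proper polyhedral convex function, or D is a nonempty polyhedral convex set. Then x ∈ D ∩ dom f is a solution of problem (P) if and only if 0 ∈ ∂f(x) + N_D(x). -/
open scoped Pointwise

/-- Homogeneous Farkas lemma in an arbitrary real vector space. -/
theorem farkas_homog {W : Type*} [AddCommGroup W] [Module ℝ W] :
    ∀ {n : ℕ} (a : Fin n → W →ₗ[ℝ] ℝ) (c : W →ₗ[ℝ] ℝ),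
      (∀ z, (∀ i, a i z ≤ 0) → c z ≤ 0) →
      ∃ μ : Fin n → ℝ, (∀ i, 0 ≤ μ i) ∧ ∀ z, c z = ∑ i, μ i * a i z := by
  intro n
  induction n with
  | zero =>
    intro a c h
    refine ⟨fun i => 0, fun i => le_rfl, fun z => ?_⟩
    have h1 := h z (fun i => i.elim0)
    have h2 := h (-z) (fun i => i.elim0)
    simp only [map_neg, neg_nonpos] at h2
    simp only [Finset.univ_eq_empty, Finset.sum_empty]
    linarith
  | succ n IH =>
    intro a c h
    set A : Fin n → W →ₗ[ℝ] ℝ := fun i => a i.castSucc with hA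
    by_cases h0 : ∀ z, (∀ i, A i z ≤ 0) → c z ≤ 0
    · obtain ⟨μ, hμ, hc⟩ := IH A c h0
      refine ⟨Fin.snoc μ 0, fun i => ?_, fun z => ?_⟩
      · refine Fin.lastCases ?_ (fun i => ?_) i
        · simp
        · simpa using hμ i
      · rw [Fin.sum_univ_castSucc]
        simp only [Fin.snoc_castSucc, Fin.snoc_last, zero_mul, add_zero]
        exact hc z
    · push_neg at h0
      obtain ⟨z₀, hz₀, hcz₀⟩ := h0
      have hs : 0 < a (Fin.last n) z₀ := by
        by_contra hs
        push_neg at hs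
        exact absurd (h z₀ (fun i => Fin.lastCases hs hz₀ i)) (not_le.2 hcz₀)
      set s : ℝ := a (Fin.last n) z₀ with hsdef
      set P : W →ₗ[ℝ] W :=
        LinearMap.id - LinearMap.smulRight (s⁻¹ • a (Fin.last n)) z₀ with hPdef
      have hP : ∀ z, P z = z - (s⁻¹ * a (Fin.last n) z) • z₀ := by
        intro z
        simp [hPdef, LinearMap.smulRight_apply, smul_smul]
      have hPlast : ∀ z, a (Fin.last n) (P z) = 0 := by
        intro z
        rw [hP]
        simp only [map_sub, map_smul, smul_eq_mul, ← hsdef]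
        field_simp
        ring
      have hyp : ∀ z, (∀ i, ((A i).comp P) z ≤ 0) → (c.comp P) z ≤ 0 := by
        intro z hz
        have : ∀ i : Fin (n + 1), a i (P z) ≤ 0 := by
          intro i
          refine Fin.lastCases ?_ (fun i => ?_) i
          · exact (hPlast z).le
          · exact hz i
        exact h (P z) this
      obtain ⟨μ, hμ, hc'⟩ := IH (fun i => (A i).comp P) (c.comp P) hyp
      · set t : ℝ := s⁻¹ * (c z₀ - ∑ i, μ i * A i z₀) with htdef
        have ht : 0 ≤ t := by
          have hnum : 0 ≤ c z₀ - ∑ i, μ i * A i z₀ := by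
            have : ∑ i, μ i * A i z₀ ≤ 0 :=
              Finset.sum_nonpos fun i _ => mul_nonpos_of_nonneg_of_nonpos (hμ i) (hz₀ i)
            linarith
          exact mul_nonneg (inv_nonneg.2 hs.le) hnum
        have key : ∀ z, c z = (∑ i, μ i * A i z) + t * a (Fin.last n) z := by
          intro z
          have h1 := hc' z
          simp only [LinearMap.comp_apply] at h1
          rw [hP] at h1
          simp only [map_sub, map_smul, smul_eq_mul, mul_sub] at h1
          rw [Finset.sum_sub_distrib] at h1
          have h2 : ∑ i, μ i * (s⁻¹ * a (Fin.last n) z * A i z₀)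
              = s⁻¹ * a (Fin.last n) z * ∑ i, μ i * A i z₀ := by
            rw [Finset.mul_sum]; congr 1; ext i; ring
          rw [h2] at h1
          rw [htdef]
          linear_combination h1
        refine ⟨Fin.snoc μ t, fun i => ?_, fun z => ?_⟩
        · refine Fin.lastCases ?_ (fun i => ?_) i
          · simpa using ht
          · simpa using hμ i
        · rw [Fin.sum_univ_castSucc]
          simp only [Fin.snoc_castSucc, Fin.snoc_last]
          exact key z

/-- Affine Farkas lemma. -/
theorem farkas_affine {W : Type*} [AddCommGroup W] [Module ℝ W] {n : ℕ}
    (a : Fin n → W →ₗ[ℝ] ℝ) (γ : Fin n → ℝ) (c : W →ₗ[ℝ] ℝ) (γ₀ : ℝ)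
    (z₀ : W) (hz₀ : ∀ i, a i z₀ ≤ γ i)
    (h : ∀ z, (∀ i, a i z ≤ γ i) → c z ≤ γ₀) :
    ∃ μ : Fin n → ℝ, (∀ i, 0 ≤ μ i) ∧ (∀ z, c z = ∑ i, μ i * a i z) ∧
      ∑ i, μ i * γ i ≤ γ₀ := by
  set fst : W × ℝ →ₗ[ℝ] W := LinearMap.fst ℝ W ℝ with hfst
  set snd : W × ℝ →ₗ[ℝ] ℝ := LinearMap.snd ℝ W ℝ with hsnd
  set A : Fin (n + 1) → (W × ℝ) →ₗ[ℝ] ℝ :=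
    Fin.snoc (fun i => (a i).comp fst - γ i • snd) (-snd) with hAdef
  set C : (W × ℝ) →ₗ[ℝ] ℝ := c.comp fst - γ₀ • snd with hCdef
  have hyp : ∀ zz, (∀ i, A i zz ≤ 0) → C zz ≤ 0 := by
    rintro ⟨z, s⟩ hzs
    have hslast := hzs (Fin.last n)
    simp only [hAdef, Fin.snoc_last, LinearMap.neg_apply, hsnd, LinearMap.snd_apply,
      neg_nonpos] at hslast
    have hai : ∀ i : Fin n, a i z ≤ γ i * s := by
      intro i
      have := hzs i.castSucc
      simp only [hAdef, Fin.snoc_castSucc, LinearMap.sub_apply, LinearMap.comp_apply,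
        LinearMap.smul_apply, hfst, hsnd, LinearMap.fst_apply, LinearMap.snd_apply,
        smul_eq_mul, sub_nonpos] at this
      exact this
    have goal : c z ≤ γ₀ * s := by
      rcases eq_or_lt_of_le hslast with hs0 | hs0
      · -- s = 0
        have hai0 : ∀ i, a i z ≤ 0 := fun i => by
          have := hai i; rw [← hs0] at this; simpa using this
        by_contra hcz
        push_neg at hcz
        rw [← hs0, mul_zero] at hcz
        set r : ℝ := max 0 ((γ₀ - c z₀ + 1) / c z) with hrdef
        have hr0 : 0 ≤ r := le_max_left _ _
        have hfeas : ∀ i, a i (z₀ + r • z) ≤ γ i := by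
          intro i
          rw [map_add, map_smul, smul_eq_mul]
          have : r * a i z ≤ 0 := mul_nonpos_of_nonneg_of_nonpos hr0 (hai0 i)
          linarith [hz₀ i]
        have hcon := h _ hfeas
        rw [map_add, map_smul, smul_eq_mul] at hcon
        have hrc : γ₀ - c z₀ + 1 ≤ r * c z := by
          have h3 : (γ₀ - c z₀ + 1) / c z ≤ r := le_max_right _ _
          have := mul_le_mul_of_nonneg_right h3 hcz.le
          rwa [div_mul_cancel₀ _ (ne_of_gt hcz)] at this
        linarith
      · -- 0 < s
        have hfeas : ∀ i, a i (s⁻¹ • z) ≤ γ i := by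
          intro i
          rw [map_smul, smul_eq_mul]
          have := mul_le_mul_of_nonneg_left (hai i) (inv_nonneg.2 hs0.le)
          calc s⁻¹ * a i z ≤ s⁻¹ * (γ i * s) := this
            _ = γ i := by field_simp
        have hcon := h _ hfeas
        rw [map_smul, smul_eq_mul] at hcon
        have := mul_le_mul_of_nonneg_left hcon hs0.le
        calc c z = s * (s⁻¹ * c z) := by field_simp
          _ ≤ s * γ₀ := this
          _ = γ₀ * s := mul_comm _ _
    simp only [hCdef, LinearMap.sub_apply, LinearMap.comp_apply, LinearMap.smul_apply,
      hfst, hsnd, LinearMap.fst_apply, LinearMap.snd_apply, smul_eq_mul, sub_nonpos]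
    exact goal
  obtain ⟨μ, hμ, hC⟩ := farkas_homog A C hyp
  · refine ⟨fun i => μ i.castSucc, fun i => hμ _, fun z => ?_, ?_⟩
    · have h1 := hC (z, 0)
      rw [Fin.sum_univ_castSucc] at h1
      simp only [hAdef, hCdef, Fin.snoc_castSucc, Fin.snoc_last, LinearMap.sub_apply,
        LinearMap.comp_apply, LinearMap.smul_apply, LinearMap.neg_apply, hfst, hsnd,
        LinearMap.fst_apply, LinearMap.snd_apply, smul_eq_mul, mul_zero, sub_zero,
        neg_zero, add_zero] at h1
      exact h1
    · have h1 := hC (0, 1)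
      rw [Fin.sum_univ_castSucc] at h1
      simp only [hAdef, hCdef, Fin.snoc_castSucc, Fin.snoc_last, LinearMap.sub_apply,
        LinearMap.comp_apply, LinearMap.smul_apply, LinearMap.neg_apply, hfst, hsnd,
        LinearMap.fst_apply, LinearMap.snd_apply, smul_eq_mul, mul_one, map_zero,
        zero_sub, mul_neg] at h1
      have hlast : 0 ≤ μ (Fin.last n) := hμ _
      have h2 : ∑ i : Fin n, -(μ i.castSucc * γ i)
          = -∑ i : Fin n, μ i.castSucc * γ i := by
        rw [Finset.sum_neg_distrib]
      rw [h2] at h1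
      linarith

/-- Affine Farkas lemma, arbitrary finite index type. -/
theorem farkas_affine_fintype {W : Type*} [AddCommGroup W] [Module ℝ W]
    {ι : Type*} [Fintype ι]
    (a : ι → W →ₗ[ℝ] ℝ) (γ : ι → ℝ) (c : W →ₗ[ℝ] ℝ) (γ₀ : ℝ)
    (z₀ : W) (hz₀ : ∀ i, a i z₀ ≤ γ i)
    (h : ∀ z, (∀ i, a i z ≤ γ i) → c z ≤ γ₀) :
    ∃ μ : ι → ℝ, (∀ i, 0 ≤ μ i) ∧ (∀ z, c z = ∑ i, μ i * a i z) ∧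
      ∑ i, μ i * γ i ≤ γ₀ := by
  classical
  set e := Fintype.equivFin ι with he
  obtain ⟨μ, hμ, hc, hb⟩ := farkas_affine (fun j => a (e.symm j)) (fun j => γ (e.symm j))
    c γ₀ z₀ (fun j => hz₀ _) (fun z hz => h z (fun i => by simpa using hz (e i)))
  refine ⟨fun i => μ (e i), fun i => hμ _, fun z => ?_, ?_⟩
  · rw [hc z]
    rw [← Equiv.sum_comp e.symm (fun i => μ (e i) * a i z)]
    simp
  · have : ∑ i : ι, μ (e i) * γ i = ∑ j, μ j * γ (e.symm j) := by
      rw [← Equiv.sum_comp e.symm (fun i => μ (e i) * γ i)]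
      simp
    rw [this]
    exact hb



section Aux

variable {X : Type*} [AddCommGroup X] [Module ℝ X] [TopologicalSpace X]

/-- evaluation functional on `V × ℝ` -/
noncomputable def evL (V : Submodule ℝ X) (c : X →L[ℝ] ℝ) (r : ℝ) :
    (↥V × ℝ) →ₗ[ℝ] ℝ :=
  ((c : X →ₗ[ℝ] ℝ).comp V.subtype).comp (LinearMap.fst ℝ ↥V ℝ) +
    r • LinearMap.snd ℝ ↥V ℝ

@[simp] lemma evL_apply (V : Submodule ℝ X) (c : X →L[ℝ] ℝ) (r : ℝ) (d : ↥V) (t : ℝ) :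
    evL V c r (d, t) = c (d : X) + r * t := by
  simp [evL, smul_eq_mul]

theorem aux_forward
    (D : Set X) (domf : Set X)
    (m : ℕ) (v : Fin (m + 1) → X →L[ℝ] ℝ) (β : Fin (m + 1) → ℝ)
    (f : X → EReal)
    (hf : ∀ x ∈ domf,
      f x = ((Finset.univ.sup' Finset.univ_nonempty fun k => v k x + β k : ℝ) : EReal))
    (hf' : ∀ x ∉ domf, f x = ⊤)
    (x : X) (hxD : x ∈ D) (hxdom : x ∈ domf)
    (P Q : ℕ) (a : Fin P → X →L[ℝ] ℝ) (α : Fin P → ℝ)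
    (b : Fin Q → X →L[ℝ] ℝ) (βq : Fin Q → ℝ)
    (V : Submodule ℝ X)
    (hDsub : ∀ u ∈ D, ∀ i, a i u ≤ α i)
    (hfsub : ∀ u ∈ domf, ∀ j, b j u ≤ βq j)
    (hDmem : ∀ d ∈ V, (∀ i, a i (x + d) ≤ α i) → x + d ∈ D)
    (hfmem : ∀ d ∈ V, (∀ j, b j (x + d) ≤ βq j) → x + d ∈ domf)
    (hVcase : (∀ u ∈ D, u - x ∈ V) ∨ (∀ u ∈ domf, u - x ∈ V))
    (hmin : ∀ u ∈ D, f x ≤ f u) :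
    (0 : X →L[ℝ] ℝ) ∈
      ({φ : X →L[ℝ] ℝ | ∀ u : X, ((φ u - φ x : ℝ) : EReal) ≤ f u - f x} +
        {φ : X →L[ℝ] ℝ | ∀ u ∈ D, φ u - φ x ≤ 0}) := by
  classical
  set g : X → ℝ := fun u => Finset.univ.sup' Finset.univ_nonempty fun k => v k u + β k
    with hgdef
  have hfg : ∀ u ∈ domf, f u = ((g u : ℝ) : EReal) := hf
  have hgub : ∀ (u : X) (k : Fin (m + 1)), v k u + β k ≤ g u := fun u k => by
    exact
      Finset.le_sup' (fun k => v k u + β k) (Finset.mem_univ k)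
  have hgmax : ∀ (u : X) (t : ℝ), (∀ k, v k u + β k ≤ t) → g u ≤ t := fun u t h => by
    simp only [hgdef]
    exact Finset.sup'_le _ _ fun k _ => h k
  -- set up Farkas data
  set ι := (Fin (m + 1)) ⊕ ((Fin P) ⊕ (Fin Q)) with hι
  set AA : ι → (↥V × ℝ) →ₗ[ℝ] ℝ :=
    Sum.elim (fun k => evL V (v k) (-1))
      (Sum.elim (fun i => evL V (a i) 0) (fun j => evL V (b j) 0)) with hAA
  set Γ : ι → ℝ :=
    Sum.elim (fun k => -(v k x + β k))
      (Sum.elim (fun i => α i - a i x) (fun j => βq j - b j x)) with hΓ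
  have hz₀ : ∀ i, AA i ((0 : ↥V), g x) ≤ Γ i := by
    rintro (k | i | j) <;>
      simp only [hAA, hΓ, Sum.elim_inl, Sum.elim_inr, evL_apply, ZeroMemClass.coe_zero,
        map_zero, zero_add, zero_mul, mul_zero, add_zero, neg_mul, one_mul]
    · have := hgub x k; linarith
    · have := hDsub x hxD i; linarith
    · have := hfsub x hxdom j; linarith
  have himp : ∀ z : ↥V × ℝ, (∀ i, AA i z ≤ Γ i) → evL V 0 (-1) z ≤ -(g x) := by
    rintro ⟨d, t⟩ hc
    have huD : x + (d : X) ∈ D := by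
      refine hDmem _ d.2 fun i => ?_
      have := hc (Sum.inr (Sum.inl i))
      simp only [hAA, hΓ, Sum.elim_inl, Sum.elim_inr, evL_apply, zero_mul, add_zero] at this
      rw [map_add]; linarith
    have hudom : x + (d : X) ∈ domf := by
      refine hfmem _ d.2 fun j => ?_
      have := hc (Sum.inr (Sum.inr j))
      simp only [hAA, hΓ, Sum.elim_inl, Sum.elim_inr, evL_apply, zero_mul, add_zero] at this
      rw [map_add]; linarith
    have hgt : g (x + (d : X)) ≤ t := by
      refine hgmax _ _ fun k => ?_
      have := hc (Sum.inl k)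
      simp only [hAA, hΓ, Sum.elim_inl, evL_apply, neg_mul, one_mul] at this
      rw [map_add]; linarith
    have hmin' := hmin _ huD
    rw [hfg x hxdom, hfg _ hudom, EReal.coe_le_coe_iff] at hmin'
    simp only [evL_apply, ContinuousLinearMap.zero_apply, zero_add, neg_mul, one_mul]
    linarith
  obtain ⟨μh, hμh, hC, hb⟩ :=
    farkas_affine_fintype AA Γ (evL V 0 (-1)) (-(g x)) ((0 : ↥V), g x) hz₀ himp
  set lam : Fin (m + 1) → ℝ := fun k => μh (Sum.inl k) with hlamdef
  set mu : Fin P → ℝ := fun i => μh (Sum.inr (Sum.inl i)) with hmudef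
  set nu : Fin Q → ℝ := fun j => μh (Sum.inr (Sum.inr j)) with hnudef
  have hlam : ∀ k, 0 ≤ lam k := fun k => hμh _
  have hmu : ∀ i, 0 ≤ mu i := fun i => hμh _
  have hnu : ∀ j, 0 ≤ nu j := fun j => hμh _
  -- Σ lam = 1
  have S1 : ∑ k, lam k = 1 := by
    have h1 := hC ((0 : ↥V), 1)
    rw [Fintype.sum_sum_type, Fintype.sum_sum_type] at h1
    simp only [hAA, Sum.elim_inl, Sum.elim_inr, evL_apply, ZeroMemClass.coe_zero,
      map_zero, zero_add, zero_mul, mul_zero, add_zero, neg_mul, one_mul, mul_one,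
      mul_neg, ContinuousLinearMap.zero_apply] at h1
    rw [Finset.sum_neg_distrib] at h1
    have : (-1 : ℝ) = -∑ k, lam k := by simpa using h1
    linarith
  -- identity on V
  have Ident : ∀ w : X, w ∈ V →
      (∑ k, lam k * v k w) + ((∑ i, mu i * a i w) + ∑ j, nu j * b j w) = 0 := by
    intro w hw
    have h1 := hC ((⟨w, hw⟩ : ↥V), 0)
    rw [Fintype.sum_sum_type, Fintype.sum_sum_type] at h1
    simp only [hAA, Sum.elim_inl, Sum.elim_inr, evL_apply, zero_mul, mul_zero, add_zero,
      neg_mul, one_mul, neg_zero, ContinuousLinearMap.zero_apply, zero_add] at h1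
    linarith
  -- aggregate inequality
  have Agg : (∑ k, lam k * (-(v k x + β k))) +
      ((∑ i, mu i * (α i - a i x)) + ∑ j, nu j * (βq j - b j x)) ≤ -(g x) := by
    have h1 := hb
    rw [Fintype.sum_sum_type, Fintype.sum_sum_type] at h1
    simpa only [hΓ, Sum.elim_inl, Sum.elim_inr] using h1
  have negsum : ∑ k, lam k * (-(v k x + β k)) = -∑ k, lam k * (v k x + β k) := by
    simp only [mul_neg, Finset.sum_neg_distrib]
  have convA : ∀ u : X, ∑ k, lam k * (v k u + β k) ≤ g u := by
    intro u
    calc ∑ k, lam k * (v k u + β k) ≤ ∑ k, lam k * g u :=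
          Finset.sum_le_sum fun k _ => mul_le_mul_of_nonneg_left (hgub u k) (hlam k)
      _ = (∑ k, lam k) * g u := by rw [Finset.sum_mul]
      _ = g u := by rw [S1, one_mul]
  have t2 : 0 ≤ ∑ i, mu i * (α i - a i x) :=
    Finset.sum_nonneg fun i _ => mul_nonneg (hmu i) (by linarith [hDsub x hxD i])
  have t3 : 0 ≤ ∑ j, nu j * (βq j - b j x) :=
    Finset.sum_nonneg fun j _ => mul_nonneg (hnu j) (by linarith [hfsub x hxdom j])
  have G1 : ∑ i, mu i * (α i - a i x) ≤ 0 := by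
    rw [negsum] at Agg
    linarith [convA x]
  have G2 : g x ≤ (∑ k, lam k * (v k x + β k)) - ∑ j, nu j * (βq j - b j x) := by
    rw [negsum] at Agg
    linarith
  have CORE : ∀ u ∈ domf,
      ((∑ k, lam k * v k u) + ∑ j, nu j * b j u) -
        ((∑ k, lam k * v k x) + ∑ j, nu j * b j x) ≤ g u - g x := by
    intro u hu
    have e1 := convA u
    have e2 : ∑ j, nu j * b j u ≤ ∑ j, nu j * βq j :=
      Finset.sum_le_sum fun j _ => mul_le_mul_of_nonneg_left (hfsub u hu j) (hnu j)
    simp only [mul_add, Finset.sum_add_distrib] at e1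
    simp only [mul_add, mul_sub, Finset.sum_add_distrib, Finset.sum_sub_distrib] at G2
    linarith
  have ND : ∀ u ∈ D, ∑ i, mu i * (a i u - a i x) ≤ 0 := by
    intro u hu
    calc ∑ i, mu i * (a i u - a i x) ≤ ∑ i, mu i * (α i - a i x) :=
          Finset.sum_le_sum fun i _ =>
            mul_le_mul_of_nonneg_left (by linarith [hDsub u hu i]) (hmu i)
      _ ≤ 0 := G1
  rcases hVcase with hVD | hVf
  · -- D's directions are in V
    set φ : X →L[ℝ] ℝ := (∑ k, lam k • v k) + ∑ j, nu j • b j with hφdef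
    have φap : ∀ z : X, φ z = (∑ k, lam k * v k z) + ∑ j, nu j * b j z := by
      intro z
      simp [hφdef, ContinuousLinearMap.sum_apply, smul_eq_mul]
    refine Set.mem_add.mpr ⟨φ, ?_, -φ, ?_, by abel⟩
    · intro u
      by_cases hu : u ∈ domf
      · rw [hfg u hu, hfg x hxdom, ← EReal.coe_sub, EReal.coe_le_coe_iff, φap, φap]
        exact CORE u hu
      · rw [hf' u hu, hfg x hxdom, EReal.top_sub_coe]
        exact le_top
    · intro u hu
      simp only [ContinuousLinearMap.neg_apply]
      have hid := Ident (u - x) (hVD u hu)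
      simp only [map_sub, mul_sub, Finset.sum_sub_distrib] at hid
      have hnd := ND u hu
      simp only [mul_sub, Finset.sum_sub_distrib] at hnd
      rw [φap u, φap x]
      linarith
  · -- domf's directions are in V
    set φ : X →L[ℝ] ℝ := -(∑ i, mu i • a i) with hφdef
    have φap : ∀ z : X, φ z = -∑ i, mu i * a i z := by
      intro z
      simp [hφdef, ContinuousLinearMap.sum_apply, smul_eq_mul]
    refine Set.mem_add.mpr ⟨φ, ?_, -φ, ?_, by abel⟩
    · intro u
      by_cases hu : u ∈ domf
      · rw [hfg u hu, hfg x hxdom, ← EReal.coe_sub, EReal.coe_le_coe_iff, φap, φap]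
        have hid := Ident (u - x) (hVf u hu)
        simp only [map_sub, mul_sub, Finset.sum_sub_distrib] at hid
        have core := CORE u hu
        linarith
      · rw [hf' u hu, hfg x hxdom, EReal.top_sub_coe]
        exact le_top
    · intro u hu
      simp only [ContinuousLinearMap.neg_apply, φap, neg_neg]
      have hnd := ND u hu
      simp only [mul_sub, Finset.sum_sub_distrib] at hnd
      linarith

end Aux

/-- **Optimality condition II.**  Assume either `f` is a proper polyhedral convex function
(equivalently here: `dom f` is a polyhedral convex set) or `D` is a nonempty polyhedral
convex set.  Then `x ∈ D ∩ dom f` solves `(P) : min {f x | x ∈ D}` iff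
`0 ∈ ∂f(x) + N_D(x)`. -/
theorem optimality_condition_II
    {X : Type*}
    [AddCommGroup X] [Module ℝ X] [TopologicalSpace X] [IsTopologicalAddGroup X]
    [ContinuousSMul ℝ X] [LocallyConvexSpace ℝ X] [T2Space X]
    (D : Set X) (hD : IsGPCS D) (hDne : D.Nonempty)
    (domf : Set X) (hdomf : IsGPCS domf) (hdomne : domf.Nonempty)
    (m : ℕ) (v : Fin (m + 1) → X →L[ℝ] ℝ) (β : Fin (m + 1) → ℝ)
    (f : X → EReal)
    (hf : ∀ x ∈ domf,
      f x = ((Finset.univ.sup' Finset.univ_nonempty fun k => v k x + β k : ℝ) : EReal))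
    (hf' : ∀ x ∉ domf, f x = ⊤)
    (hpoly : IsPCS domf ∨ IsPCS D)
    (x : X) (hxD : x ∈ D) (hxdom : x ∈ domf) :
    (∀ u ∈ D, f x ≤ f u) ↔
      (0 : X →L[ℝ] ℝ) ∈
        ({φ : X →L[ℝ] ℝ | ∀ u : X, ((φ u - φ x : ℝ) : EReal) ≤ f u - f x} +
          {φ : X →L[ℝ] ℝ | ∀ u ∈ D, φ u - φ x ≤ 0}) := by
  constructor
  · -- forward: solution → subdifferential condition
    intro hmin
    rcases hpoly with hPf | hPD
    · -- domf is a PCS, D is a GPCS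
      obtain ⟨P, a, α, L, hLc, hDeq⟩ := hD
      obtain ⟨Q, b, βq, hfeq⟩ := hPf
      have hxL : x ∈ L := by rw [hDeq] at hxD; exact hxD.1
      refine aux_forward D domf m v β f hf hf' x hxD hxdom P Q a α b βq L.direction
        ?_ ?_ ?_ ?_ (Or.inl ?_) hmin
      · intro u hu i; rw [hDeq] at hu; exact hu.2 i
      · intro u hu j; rw [hfeq] at hu; exact hu j
      · intro d hd hi
        rw [hDeq]
        refine ⟨?_, hi⟩
        have := AffineSubspace.vadd_mem_of_mem_direction hd hxL
        simpa [add_comm] using this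
      · intro d _ hj
        rw [hfeq]; exact hj
      · intro u hu
        rw [hDeq] at hu
        have := AffineSubspace.vsub_mem_direction hu.1 hxL
        simpa using this
    · -- D is a PCS, domf is a GPCS
      obtain ⟨Q, b, βq, L, hLc, hfeq⟩ := hdomf
      obtain ⟨P, a, α, hDeq⟩ := hPD
      have hxL : x ∈ L := by rw [hfeq] at hxdom; exact hxdom.1
      refine aux_forward D domf m v β f hf hf' x hxD hxdom P Q a α b βq L.direction
        ?_ ?_ ?_ ?_ (Or.inr ?_) hmin
      · intro u hu i; rw [hDeq] at hu; exact hu i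
      · intro u hu j; rw [hfeq] at hu; exact hu.2 j
      · intro d _ hi
        rw [hDeq]; exact hi
      · intro d hd hj
        rw [hfeq]
        refine ⟨?_, hj⟩
        have := AffineSubspace.vadd_mem_of_mem_direction hd hxL
        simpa [add_comm] using this
      · intro u hu
        rw [hfeq] at hu
        have := AffineSubspace.vsub_mem_direction hu.1 hxL
        simpa using this
  · -- backward: subdifferential condition → solution
    intro hmem u hu
    obtain ⟨φ1, h1, φ2, h2, hsum⟩ := Set.mem_add.mp hmem
    have hneg : φ1 = -φ2 := eq_neg_of_add_eq_zero_left hsum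
    have h2u : φ2 u - φ2 x ≤ 0 := h2 u hu
    have hpos : (0 : ℝ) ≤ φ1 u - φ1 x := by
      rw [hneg]
      simp only [ContinuousLinearMap.neg_apply]
      linarith
    have key : (0 : EReal) ≤ f u - f x := by
      calc (0 : EReal) = ((0 : ℝ) : EReal) := by norm_cast
        _ ≤ ((φ1 u - φ1 x : ℝ) : EReal) := by exact_mod_cast hpos
        _ ≤ f u - f x := h1 u
    rw [hf x hxdom] at key ⊢
    have := EReal.add_le_of_le_sub key
    simpa using this
end

section
/- Let L₁, L₂ be closed affine subspaces of X and P₁, P₂ polyhedral convex sets in X such that D₁ := L₁ ∩ P₁ and D₂ := L₂ ∩ P₂ are nonempty. If the set D₁ − D₂ = {d₁ − d₂ : d₁ ∈ D₁, d₂ ∈ D₂} is a generalized polyhedral convex set in X, then L₁ − L₂ is a generalized polyhedral convex set in X. -/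
open scoped Pointwise

section Aux

variable {X : Type*} [AddCommGroup X] [Module ℝ X] [TopologicalSpace X]

/-- The sum of a closed subspace and a finite-dimensional subspace is closed. -/
lemma aux_isClosed_sup [IsTopologicalAddGroup X] [ContinuousSMul ℝ X] [T2Space X]
    (W F : Submodule ℝ X) (hW : IsClosed (W : Set X)) [FiniteDimensional ℝ F] :
    IsClosed ((W ⊔ F : Submodule ℝ X) : Set X) := by
  haveI : IsClosed (W : Set X) := hW
  have key : W ⊔ F = (F.map W.mkQ).comap W.mkQ := by
    rw [Submodule.comap_map_eq, Submodule.ker_mkQ, sup_comm]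
  rw [key]
  haveI : FiniteDimensional ℝ (F.map W.mkQ) := Module.Finite.map F W.mkQ
  have hcont : Continuous W.mkQ := continuous_quot_mk
  exact (Submodule.closed_of_finiteDimensional (F.map W.mkQ)).preimage hcont

/-- A subspace is contained in (its intersection with the kernel of a map into ℝⁿ)
plus a finite-dimensional subspace. -/
lemma aux_exists_findim {n : ℕ} (φ : X →ₗ[ℝ] (Fin n → ℝ)) (V : Submodule ℝ X) :
    ∃ F : Submodule ℝ X, FiniteDimensional ℝ F ∧ F ≤ V ∧
      V ≤ (V ⊓ LinearMap.ker φ) ⊔ F := by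
  haveI : IsNoetherian ℝ (Fin n → ℝ) := IsNoetherian.iff_fg.mpr inferInstance
  have hfg : (V.map φ).FG := IsNoetherian.noetherian (V.map φ)
  obtain ⟨S, hS⟩ := hfg
  have hmem : ∀ y : S, ∃ v, v ∈ V ∧ φ v = (y : Fin n → ℝ) := by
    intro y
    have : (y : Fin n → ℝ) ∈ V.map φ := by
      rw [← hS]; exact Submodule.subset_span y.2
    obtain ⟨v, hv, hφ⟩ := Submodule.mem_map.mp this
    exact ⟨v, hv, hφ⟩
  choose ch hchV hchφ using hmem
  refine ⟨Submodule.span ℝ (Set.range ch), ?_, ?_, ?_⟩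
  · exact FiniteDimensional.span_of_finite ℝ (Set.finite_range ch)
  · rw [Submodule.span_le]
    rintro _ ⟨y, rfl⟩; exact hchV y
  · have hmapF : (Submodule.span ℝ (Set.range ch)).map φ = V.map φ := by
      rw [Submodule.map_span, ← Set.range_comp, ← hS]
      congr 1
      ext z
      constructor
      · rintro ⟨y, rfl⟩
        simpa [Function.comp, hchφ y] using y.2
      · intro hz
        exact ⟨⟨z, hz⟩, by simpa [Function.comp] using hchφ ⟨z, hz⟩⟩
    intro v hv
    have : φ v ∈ (Submodule.span ℝ (Set.range ch)).map φ := by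
      rw [hmapF]; exact Submodule.mem_map_of_mem hv
    obtain ⟨f, hf, hφf⟩ := Submodule.mem_map.mp this
    have hfV : f ∈ V := by
      have : Submodule.span ℝ (Set.range ch) ≤ V := by
        rw [Submodule.span_le]; rintro _ ⟨y, rfl⟩; exact hchV y
      exact this hf
    refine Submodule.mem_sup.mpr
      ⟨v - f, Submodule.mem_inf.mpr ⟨Submodule.sub_mem V hv hfV, ?_⟩, f, hf, by abel⟩
    rw [LinearMap.mem_ker, map_sub, hφf, sub_self]

end Aux

/-- Let `L₁, L₂` be closed affine subspaces and `P₁, P₂` polyhedral convex sets in `X`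
such that `D₁ = L₁ ∩ P₁` and `D₂ = L₂ ∩ P₂` are nonempty.  If `D₁ − D₂` is a generalized
polyhedral convex set, then so is `L₁ − L₂`. -/
theorem diff_of_affine_subspaces_gpcs
    {X : Type*}
    [AddCommGroup X] [Module ℝ X] [TopologicalSpace X] [IsTopologicalAddGroup X]
    [ContinuousSMul ℝ X] [LocallyConvexSpace ℝ X] [T2Space X]
    (L₁ L₂ : AffineSubspace ℝ X)
    (hL₁ : IsClosed (L₁ : Set X)) (hL₂ : IsClosed (L₂ : Set X))
    (P₁ P₂ : Set X) (hP₁ : IsPCS P₁) (hP₂ : IsPCS P₂)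
    (hD₁ : ((L₁ : Set X) ∩ P₁).Nonempty) (hD₂ : ((L₂ : Set X) ∩ P₂).Nonempty)
    (h : IsGPCS ((L₁ : Set X) ∩ P₁ - (L₂ : Set X) ∩ P₂)) :
    IsGPCS ((L₁ : Set X) - (L₂ : Set X)) := by
  obtain ⟨p₁, f₁, a₁, hP₁⟩ := hP₁
  obtain ⟨p₂, f₂, a₂, hP₂⟩ := hP₂
  obtain ⟨d₁, hd₁L, hd₁P⟩ := hD₁
  obtain ⟨d₂, hd₂L, hd₂P⟩ := hD₂
  obtain ⟨q, g, b, M, hMcl, hMeq⟩ := h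
  set D : Set X := (L₁ : Set X) ∩ P₁ - (L₂ : Set X) ∩ P₂ with hD_def
  have hmemD : ∀ x : X, x ∈ D ↔ x ∈ M ∧ ∀ i, g i x ≤ b i := fun x => Set.ext_iff.mp hMeq x
  have hd₁₂D : d₁ - d₂ ∈ D := Set.sub_mem_sub ⟨hd₁L, hd₁P⟩ ⟨hd₂L, hd₂P⟩
  -- the set of everywhere-active constraints
  set I : Set (Fin q) := {i | ∀ x ∈ D, g i x = b i} with hI_def
  -- the affine subspace cut out by `M` and the active constraints
  set N : AffineSubspace ℝ X :=
    { carrier := {x | x ∈ M ∧ ∀ i ∈ I, g i x = b i}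
      smul_vsub_vadd_mem' := by
        intro c u v w hu hv hw
        refine ⟨M.smul_vsub_vadd_mem c hu.1 hv.1 hw.1, fun i hi => ?_⟩
        have hcomp : g i (c • (u -ᵥ v) +ᵥ w) = c * (g i u - g i v) + g i w := by
          simp [vsub_eq_sub, vadd_eq_add, map_add, map_smul, map_sub, smul_eq_mul]
        rw [hcomp, hu.2 i hi, hv.2 i hi, hw.2 i hi]; ring } with hN_def
  have hmemN : ∀ x : X, x ∈ N ↔ x ∈ M ∧ ∀ i ∈ I, g i x = b i := fun x => Iff.rfl
  have hDN : D ⊆ (N : Set X) := fun x hx =>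
    ⟨((hmemD x).mp hx).1, fun i hi => hi x hx⟩
  have hNcl : IsClosed (N : Set X) := by
    have hNset : (N : Set X) = (M : Set X) ∩ ⋂ i ∈ I, {x : X | g i x = b i} := by
      ext x
      simp only [Set.mem_inter_iff, Set.mem_iInter, SetLike.mem_coe, hmemN, Set.mem_setOf_eq]
    rw [hNset]
    exact hMcl.inter (isClosed_biInter fun i _ => isClosed_eq (g i).continuous continuous_const)
  -- a relative interior point
  have hrel : ∀ s : Finset (Fin q), ∃ z ∈ D, ∀ i ∈ s, i ∉ I → g i z < b i := by
    intro s
    induction s using Finset.induction_on with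
    | empty => exact ⟨d₁ - d₂, hd₁₂D, by simp⟩
    | @insert j s hj ih =>
      obtain ⟨z, hzD, hzs⟩ := ih
      by_cases hjI : j ∈ I
      · refine ⟨z, hzD, fun i hi hiI => ?_⟩
        rcases Finset.mem_insert.mp hi with rfl | his
        · exact absurd hjI hiI
        · exact hzs i his hiI
      · have : ∃ y ∈ D, g j y ≠ b j := by
          by_contra hcon
          push_neg at hcon
          exact hjI hcon
        obtain ⟨y, hyD, hy⟩ := this
        have hylt : g j y < b j := lt_of_le_of_ne (((hmemD y).mp hyD).2 j) hy
        set w : X := (1/2 : ℝ) • (y - z) + z with hw_def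
        have hgw : ∀ i, g i w = (1/2 : ℝ) * (g i y - g i z) + g i z := by
          intro i
          simp [hw_def, map_add, map_smul, map_sub, smul_eq_mul]
        have hwD : w ∈ D := by
          refine (hmemD w).mpr ⟨?_, fun i => ?_⟩
          · have := M.smul_vsub_vadd_mem (1/2 : ℝ) ((hmemD y).mp hyD).1
              ((hmemD z).mp hzD).1 ((hmemD z).mp hzD).1
            rw [vsub_eq_sub, vadd_eq_add] at this
            exact this
          · have h1 := ((hmemD y).mp hyD).2 i
            have h2 := ((hmemD z).mp hzD).2 i
            rw [hgw]; linarith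
        refine ⟨w, hwD, fun i hi hiI => ?_⟩
        rcases Finset.mem_insert.mp hi with rfl | his
        · have h2 := ((hmemD z).mp hzD).2 i
          rw [hgw]; linarith
        · have h1 := ((hmemD y).mp hyD).2 i
          have h2 := hzs i his hiI
          rw [hgw]; linarith
  obtain ⟨xb, hxbD, hxb⟩ := hrel Finset.univ
  have hxbM : xb ∈ M := ((hmemD xb).mp hxbD).1
  -- N is contained in the affine span of D
  have hNspan : ∀ x ∈ N, x ∈ affineSpan ℝ D := by
    intro x hx
    obtain ⟨hxM, hxI⟩ := (hmemN x).mp hx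
    have heps : ∀ i : Fin q, ∃ ε : ℝ, 0 < ε ∧
        ∀ t : ℝ, 0 < t → t ≤ ε → g i (t • (x - xb) + xb) ≤ b i := by
      intro i
      have hgt : ∀ t : ℝ, g i (t • (x - xb) + xb) = t * (g i x - g i xb) + g i xb := by
        intro t
        simp [map_add, map_smul, map_sub, smul_eq_mul]
      by_cases hiI : i ∈ I
      · refine ⟨1, one_pos, fun t _ _ => le_of_eq ?_⟩
        have h1 : g i x = b i := hxI i hiI
        have h2 : g i xb = b i := hiI xb hxbD
        rw [hgt, h1, h2]; ring
      · have hlt : g i xb < b i := hxb i (Finset.mem_univ i) hiI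
        by_cases hc : g i x - g i xb ≤ 0
        · refine ⟨1, one_pos, fun t ht _ => ?_⟩
          rw [hgt]; nlinarith
        · push_neg at hc
          refine ⟨(b i - g i xb) / (g i x - g i xb), div_pos (by linarith) hc, fun t ht hte => ?_⟩
          rw [hgt]
          have := (le_div_iff₀ hc).mp hte
          linarith
    choose ε hε using heps
    set T : Fin (q + 1) → ℝ := Fin.cases 1 ε with hT_def
    set t : ℝ := Finset.univ.inf' Finset.univ_nonempty T with ht_def
    have ht0 : 0 < t := by
      rw [ht_def, Finset.lt_inf'_iff]
      intro i _
      induction i using Fin.cases with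
      | zero => simpa [hT_def] using one_pos
      | succ j => simpa [hT_def] using (hε j).1
    have htle : ∀ i, t ≤ ε i := by
      intro i
      have := Finset.inf'_le T (Finset.mem_univ (Fin.succ i))
      exact this
    set z : X := t • (x - xb) + xb with hz_def
    have hzD : z ∈ D := by
      refine (hmemD z).mpr ⟨?_, fun i => (hε i).2 t ht0 (htle i)⟩
      have := M.smul_vsub_vadd_mem t hxM hxbM hxbM
      rw [vsub_eq_sub, vadd_eq_add] at this
      exact this
    have key := (affineSpan ℝ D).smul_vsub_vadd_mem t⁻¹
      (mem_affineSpan ℝ hzD) (mem_affineSpan ℝ hxbD) (mem_affineSpan ℝ hxbD)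
    have hxeq : t⁻¹ • (z -ᵥ xb) +ᵥ xb = x := by
      rw [vsub_eq_sub, vadd_eq_add, hz_def, add_sub_cancel_right, smul_smul,
        inv_mul_cancel₀ ht0.ne', one_smul, sub_add_cancel]
    rwa [hxeq] at key
  have hspan_eq : affineSpan ℝ D = N :=
    le_antisymm (affineSpan_le.mpr hDN) hNspan
  -- the direction of the affine span of D
  set W : Submodule ℝ X := (affineSpan ℝ D).direction with hW_def
  have hWcl : IsClosed (W : Set X) := by
    have h1 : d₁ - d₂ ∈ affineSpan ℝ D := mem_affineSpan ℝ hd₁₂D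
    rw [hW_def, AffineSubspace.coe_direction_eq_vsub_set_right h1]
    have hsets : ((affineSpan ℝ D : Set X)) = (N : Set X) := by rw [hspan_eq]
    rw [hsets]
    have himg : (fun x : X => x -ᵥ (d₁ - d₂)) '' (N : Set X)
        = (Homeomorph.subRight (d₁ - d₂)) '' (N : Set X) := rfl
    rw [himg]
    exact (Homeomorph.subRight (d₁ - d₂)).isClosedMap _ hNcl
  -- finite dimensional corrections
  set φ₁ : X →ₗ[ℝ] (Fin p₁ → ℝ) := LinearMap.pi (fun i => (f₁ i : X →ₗ[ℝ] ℝ)) with hφ₁_def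
  set φ₂ : X →ₗ[ℝ] (Fin p₂ → ℝ) := LinearMap.pi (fun i => (f₂ i : X →ₗ[ℝ] ℝ)) with hφ₂_def
  obtain ⟨F₁, hF₁fin, hF₁le, hV₁⟩ := aux_exists_findim φ₁ L₁.direction
  obtain ⟨F₂, hF₂fin, hF₂le, hV₂⟩ := aux_exists_findim φ₂ L₂.direction
  have hK₁ : L₁.direction ⊓ LinearMap.ker φ₁ ≤ W := by
    rintro v ⟨hv1, hv2⟩
    have hker : ∀ i, f₁ i v = 0 := fun i => congrFun (LinearMap.mem_ker.mp hv2) i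
    have hvd₁ : v + d₁ ∈ L₁ := by
      have := AffineSubspace.vadd_mem_of_mem_direction hv1 hd₁L
      simpa [vadd_eq_add] using this
    have hvP₁ : v + d₁ ∈ P₁ := by
      rw [hP₁]
      intro i
      have hd : f₁ i d₁ ≤ a₁ i := by
        have := hd₁P; rw [hP₁] at this; exact this i
      rw [map_add, hker i, zero_add]
      exact hd
    have h1 : (v + d₁) - d₂ ∈ D := Set.sub_mem_sub ⟨hvd₁, hvP₁⟩ ⟨hd₂L, hd₂P⟩
    have := AffineSubspace.vsub_mem_direction (mem_affineSpan ℝ h1) (mem_affineSpan ℝ hd₁₂D)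
    have heq : ((v + d₁) - d₂) -ᵥ (d₁ - d₂) = v := by rw [vsub_eq_sub]; abel
    rwa [heq] at this
  have hK₂ : L₂.direction ⊓ LinearMap.ker φ₂ ≤ W := by
    rintro v ⟨hv1, hv2⟩
    have hker : ∀ i, f₂ i v = 0 := fun i => congrFun (LinearMap.mem_ker.mp hv2) i
    have hvd₂ : v + d₂ ∈ L₂ := by
      have := AffineSubspace.vadd_mem_of_mem_direction hv1 hd₂L
      simpa [vadd_eq_add] using this
    have hvP₂ : v + d₂ ∈ P₂ := by
      rw [hP₂]
      intro i
      have hd : f₂ i d₂ ≤ a₂ i := by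
        have := hd₂P; rw [hP₂] at this; exact this i
      rw [map_add, hker i, zero_add]
      exact hd
    have h1 : d₁ - (v + d₂) ∈ D := Set.sub_mem_sub ⟨hd₁L, hd₁P⟩ ⟨hvd₂, hvP₂⟩
    have hmem := AffineSubspace.vsub_mem_direction (mem_affineSpan ℝ h1) (mem_affineSpan ℝ hd₁₂D)
    have heq : (d₁ - (v + d₂)) -ᵥ (d₁ - d₂) = -v := by rw [vsub_eq_sub]; abel
    rw [heq] at hmem
    simpa using W.neg_mem hmem
  set V : Submodule ℝ X := L₁.direction ⊔ L₂.direction with hV_def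
  have hL₁₂sub : ((L₁ : Set X) - (L₂ : Set X)) ⊆ (AffineSubspace.mk' (d₁ - d₂) V : Set X) := by
    rintro x hx
    obtain ⟨a, haL, c, hcL, rfl⟩ := Set.mem_sub.mp hx
    rw [SetLike.mem_coe, AffineSubspace.mem_mk']
    have heq : (a - c) -ᵥ (d₁ - d₂) = (a -ᵥ d₁) + -(c -ᵥ d₂) := by
      rw [vsub_eq_sub, vsub_eq_sub, vsub_eq_sub]; abel
    rw [heq]
    exact V.add_mem (Submodule.mem_sup_left (AffineSubspace.vsub_mem_direction haL hd₁L))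
      (Submodule.mem_sup_right (L₂.direction.neg_mem
        (AffineSubspace.vsub_mem_direction hcL hd₂L)))
  have hWV : W ≤ V := by
    have hsub : D ⊆ (AffineSubspace.mk' (d₁ - d₂) V : Set X) := by
      intro x hx
      apply hL₁₂sub
      have : D ⊆ (L₁ : Set X) - (L₂ : Set X) :=
        Set.sub_subset_sub Set.inter_subset_left Set.inter_subset_left
      exact this hx
    have := AffineSubspace.direction_le (affineSpan_le.mpr hsub)
    rwa [AffineSubspace.direction_mk'] at this
  have hVle : V ≤ W ⊔ (F₁ ⊔ F₂) := by
    apply sup_le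
    · exact hV₁.trans (sup_le (hK₁.trans le_sup_left) (le_sup_right.trans
        (sup_le_sup_left le_sup_left _)))
    · exact hV₂.trans (sup_le (hK₂.trans le_sup_left) (le_sup_right.trans
        (sup_le_sup_left le_sup_right _)))
  have hVeq : V = W ⊔ ((F₁ ⊔ F₂) ⊓ V) := by
    calc V = (W ⊔ (F₁ ⊔ F₂)) ⊓ V := (inf_eq_right.mpr hVle).symm
      _ = W ⊔ ((F₁ ⊔ F₂) ⊓ V) := sup_inf_assoc_of_le _ hWV
  haveI := hF₁fin
  haveI := hF₂fin
  haveI : FiniteDimensional ℝ ((F₁ ⊔ F₂) ⊓ V : Submodule ℝ X) :=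
    Submodule.finiteDimensional_of_le inf_le_left
  have hVcl : IsClosed (V : Set X) := by
    rw [hVeq]
    exact aux_isClosed_sup W ((F₁ ⊔ F₂) ⊓ V) hWcl
  -- conclusion
  refine ⟨0, Fin.elim0, Fin.elim0, AffineSubspace.mk' (d₁ - d₂) V, ?_, ?_⟩
  · have hset : (AffineSubspace.mk' (d₁ - d₂) V : Set X)
        = (Homeomorph.addLeft (d₁ - d₂)) '' (V : Set X) := by
      ext x
      simp only [SetLike.mem_coe, AffineSubspace.mem_mk', vsub_eq_sub,
        Set.mem_image, Homeomorph.coe_addLeft]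
      constructor
      · intro hx
        exact ⟨x - (d₁ - d₂), hx, by abel⟩
      · rintro ⟨v, hv, rfl⟩
        simpa using hv
    rw [hset]
    exact (Homeomorph.addLeft (d₁ - d₂)).isClosedMap _ hVcl
  · ext x
    simp only [Set.mem_setOf_eq]
    constructor
    · intro hx
      exact ⟨hL₁₂sub hx, fun i => i.elim0⟩
    · rintro ⟨hxm, -⟩
      rw [AffineSubspace.mem_mk', vsub_eq_sub] at hxm
      obtain ⟨v₁, hv₁, v₂, hv₂, hsum⟩ := Submodule.mem_sup.mp hxm
      have h1 : v₁ + d₁ ∈ L₁ := by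
        have := AffineSubspace.vadd_mem_of_mem_direction hv₁ hd₁L
        simpa [vadd_eq_add] using this
      have h2 : d₂ - v₂ ∈ L₂ := by
        have := AffineSubspace.vadd_mem_of_mem_direction (L₂.direction.neg_mem hv₂) hd₂L
        simpa [vadd_eq_add, neg_add_eq_sub] using this
      have heq : (v₁ + d₁) - (d₂ - v₂) = x := by
        have : v₁ + v₂ = x - (d₁ - d₂) := hsum
        have hx' : x = d₁ - d₂ + (v₁ + v₂) := by rw [this]; abel
        rw [hx']; abel
      rw [← heq]
      exact Set.sub_mem_sub h1 h2
end
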